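/- arXiv:1708.08424 — 5 statements merged into one kernel-verified Lean document; each statement's English description precedes it below -/
import Mathlib

section
/- Let N, k, T be positive integers with k ≤ √N and 2k ≤ T ≤ N/k. There exists an algorithm A making at most T oracle queries to a random function h : [N] → [N] such that the probability (over uniform h and uniform x ∈ [N]) that A, on input h^(k)(x), outputs a point z with h(z) = h^(k)(x) is at least Ω(Tk/N). -/
/-- An oracle algorithm (decision tree) with oracle access to a single
function `[N] → [N]`: it either outputs an answer, or queries the oracle at a
point and continues depending on the reply. -/
inductive OracleAlg (N : ℕ) : Type
  | output : Fin N → OracleAlg N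
  | query : Fin N → (Fin N → OracleAlg N) → OracleAlg N

namespace OracleAlg

/-- Run the algorithm with oracle `h`. -/
def run {N : ℕ} : OracleAlg N → (Fin N → Fin N) → Fin N
  | output z, _ => z
  | query x cont, h => run (cont (h x)) h

/-- The maximal number of oracle queries made on any execution path. -/
def numQueries {N : ℕ} : OracleAlg N → ℕ
  | output _ => 0
  | query _ cont => 1 + Finset.univ.sup fun y => numQueries (cont y)

end OracleAlg

open Finset


def Cyl (N : ℕ) (L : List (Fin N × Fin N)) : Finset (Fin N → Fin N) :=
  Finset.univ.filter (fun h => ∀ pr ∈ L, h pr.1 = pr.2)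

lemma mem_Cyl {N : ℕ} {L : List (Fin N × Fin N)} {h : Fin N → Fin N} :
    h ∈ Cyl N L ↔ ∀ pr ∈ L, h pr.1 = pr.2 := by simp [Cyl]

lemma card_Cyl {N : ℕ} : ∀ (L : List (Fin N × Fin N)), (L.map Prod.fst).Nodup →
    (Cyl N L).card = N ^ (N - L.length)
  | [], _ => by
      simp only [Cyl, List.not_mem_nil, false_implies, implies_true, Finset.filter_true_of_mem,
        List.length_nil, Nat.sub_zero]
      rw [Finset.card_univ]
      simp [Fintype.card_fun]
  | (a, b) :: L, hnd => by
      rw [List.map_cons, List.nodup_cons] at hnd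
      obtain ⟨ha, h2⟩ := hnd
      have hlen : L.length + 1 ≤ N := by
        have hnd' : ((a, b) :: L |>.map Prod.fst).Nodup := by
          rw [List.map_cons, List.nodup_cons]; exact ⟨ha, h2⟩
        have := hnd'.length_le_card
        simpa using this
      have hNpos : 0 < N := lt_of_lt_of_le (Nat.succ_pos _) hlen
      have key : (Cyl N L).card = N * (Cyl N ((a, b) :: L)).card := by
        have hcard : ((Finset.univ : Finset (Fin N)) ×ˢ Cyl N ((a, b) :: L)).card
            = N * (Cyl N ((a, b) :: L)).card := by
          rw [Finset.card_product, Finset.card_univ, Fintype.card_fin]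
        rw [← hcard]
        apply Finset.card_bij'
          (fun g _ => ((g a, Function.update g a b) : Fin N × (Fin N → Fin N)))
          (fun p _ => Function.update p.2 a p.1)
        · intro g hg
          have hg2 := mem_Cyl.mp hg
          rw [Finset.mem_product]
          refine ⟨Finset.mem_univ _, mem_Cyl.mpr (fun pr hpr => ?_)⟩
          rcases List.mem_cons.mp hpr with hEq | hmem
          · subst hEq; simp
          · have hne : pr.1 ≠ a := by
              intro hEq; exact ha (by simpa [hEq] using List.mem_map_of_mem (f := Prod.fst) hmem)
            show Function.update g a b pr.1 = pr.2
            rw [Function.update_of_ne hne]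
            exact hg2 pr hmem
        · intro p hp
          rw [Finset.mem_product] at hp
          have hp2 := mem_Cyl.mp hp.2
          refine mem_Cyl.mpr (fun pr hpr => ?_)
          have hne : pr.1 ≠ a := by
            intro hEq; exact ha (by simpa [hEq] using List.mem_map_of_mem (f := Prod.fst) hpr)
          rw [Function.update_of_ne hne]
          exact hp2 pr (List.mem_cons_of_mem _ hpr)
        · intro g hg
          simp
        · intro p hp
          rw [Finset.mem_product] at hp
          have hp2 := mem_Cyl.mp hp.2
          have hab : p.2 a = b := hp2 (a, b) List.mem_cons_self
          have h3 : Function.update (Function.update p.2 a p.1) a b = p.2 := by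
            rw [Function.update_idem, ← hab, Function.update_eq_self]
          refine Prod.ext ?_ ?_
          · simp
          · simpa using h3
      have IH := card_Cyl L h2
      rw [IH] at key
      have hexp : N - L.length = (N - (L.length + 1)) + 1 := by omega
      rw [hexp, pow_succ] at key
      have hc : (Cyl N ((a, b) :: L)).card = N ^ (N - (L.length + 1)) :=
        Nat.eq_of_mul_eq_mul_left hNpos (by rw [mul_comm] at key; exact key.symm)
      simpa using hc

lemma iter_repeat {α : Type*} (h : α → α) (s : α) {p q : ℕ} (hpq : p < q)
    (heq : h^[p] s = h^[q] s) : ∀ r, ∃ i, i < q ∧ h^[r] s = h^[i] s := by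
  intro r
  induction r with
  | zero => exact ⟨0, by omega, rfl⟩
  | succ r ih =>
    obtain ⟨i, hi, he⟩ := ih
    have hstep : h^[r+1] s = h^[i+1] s := by
      rw [Function.iterate_succ_apply', Function.iterate_succ_apply', he]
    by_cases hq : i + 1 < q
    · exact ⟨i+1, hq, hstep⟩
    · have hiq : i + 1 = q := by omega
      exact ⟨p, hpq, by rw [hstep, hiq, ← heq]⟩

lemma prefix_ne {α : Type*} (h : α → α) (s : α) {C : α → Prop} {t p q : ℕ}
    (hend : C (h^[t] s)) (hmin : ∀ i, i < t → ¬ C (h^[i] s))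
    (hpq : p < q) (hq : q < t) : h^[p] s ≠ h^[q] s := by
  intro heq
  obtain ⟨i, hi, he⟩ := iter_repeat h s hpq heq t
  exact hmin i (by omega) (he ▸ hend)

section Enter
variable {N : ℕ}

/-- path points: `pt 0 = s`, `pt i = u (i-1)` for `1 ≤ i ≤ t-1`, `pt i = d` for `i ≥ t`. -/
def pt {t : ℕ} (s d : Fin N) (u : Fin (t-1) → Fin N) (i : ℕ) : Fin N :=
  if i = 0 then s else if hx : i - 1 < t - 1 then u ⟨i-1, hx⟩ else d

def pathL (t : ℕ) (s d : Fin N) (u : Fin (t-1) → Fin N) : List (Fin N × Fin N) :=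
  (List.range t).map (fun i => (pt s d u i, pt s d u (i+1)))

lemma pt_zero {t : ℕ} (s d : Fin N) (u : Fin (t-1) → Fin N) : pt s d u 0 = s := by simp [pt]

lemma pt_mid {t : ℕ} (s d : Fin N) (u : Fin (t-1) → Fin N) {i : ℕ} (h1 : 1 ≤ i) (h2 : i < t) :
    pt s d u i = u ⟨i-1, by omega⟩ := by
  simp only [pt]; rw [if_neg (by omega), dif_pos]

lemma pt_last {t : ℕ} (s d : Fin N) (u : Fin (t-1) → Fin N) (h1 : 1 ≤ t) :
    pt s d u t = d := by
  simp only [pt]; rw [if_neg (by omega), dif_neg (by omega)]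

lemma enter_card_le (k : ℕ) (L : List (Fin N × Fin N))
    (hnd : (L.map Prod.fst).Nodup) (s : Fin N) (hs : s ∉ L.map Prod.fst)
    (hlen : L.length + k ≤ N)
    (EV : Finset (Fin N → Fin N))
    (hEV : ∀ h ∈ EV, h ∈ Cyl N L ∧ ∃ t, 1 ≤ t ∧ t ≤ k ∧ h^[t] s ∈ L.map Prod.fst) :
    EV.card ≤ k * L.length * N ^ (N - L.length - 1) := by
  classical
  set cover := (Finset.Icc 1 k).biUnion (fun t =>
    ((Finset.univ : Finset (Fin (t-1) → Fin N)).filter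
        (fun u => Function.Injective u ∧ (∀ i, u i ∉ L.map Prod.fst) ∧ (∀ i, u i ≠ s))).biUnion
      (fun u => (L.map Prod.fst).toFinset.biUnion (fun d => Cyl N (L ++ pathL t s d u))))
    with hcover
  have hsub : EV ⊆ cover := by
    intro h hh
    obtain ⟨hC, t0, ht01, ht0k, hmem⟩ := hEV h hh
    have HE : ∃ t, 1 ≤ t ∧ h^[t] s ∈ L.map Prod.fst := ⟨t0, ht01, hmem⟩
    set t := Nat.find HE with htdef
    obtain ⟨ht1, htk⟩ := Nat.find_spec HE
    have htle : t ≤ t0 := Nat.find_min' HE ⟨ht01, hmem⟩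
    have hmin : ∀ i, i < t → h^[i] s ∉ L.map Prod.fst := by
      intro i hi hik
      rcases Nat.eq_zero_or_pos i with h0 | h1
      · subst h0; exact hs (by simpa using hik)
      · exact (Nat.find_min HE hi) ⟨h1, hik⟩
    set u : Fin (t-1) → Fin N := fun i => h^[(i:ℕ)+1] s with hu
    set d : Fin N := h^[t] s with hd
    have hptit : ∀ i, i ≤ t → pt s d u i = h^[i] s := by
      intro i hi
      rcases Nat.eq_zero_or_pos i with h0 | h1
      · subst h0; simp [pt]
      · by_cases hx : i < t
        · rw [pt_mid s d u h1 hx, hu]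
          simp only []
          congr 1
          omega
        · have hit : i = t := by omega
          subst hit
          rw [pt_last s d u ht1]
    rw [hcover, Finset.mem_biUnion]
    refine ⟨t, Finset.mem_Icc.mpr ⟨ht1, le_trans htle ht0k⟩, ?_⟩
    rw [Finset.mem_biUnion]
    have hgu : Function.Injective u ∧ (∀ i, u i ∉ L.map Prod.fst) ∧ (∀ i, u i ≠ s) := by
      refine ⟨?_, ?_, ?_⟩
      · intro i i' he
        by_contra hne
        have hne' : (i:ℕ) ≠ (i':ℕ) := fun hc => hne (Fin.ext hc)
        have hi : (i:ℕ) < t - 1 := i.isLt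
        have hi' : (i':ℕ) < t - 1 := i'.isLt
        rcases Nat.lt_or_ge (i:ℕ) (i':ℕ) with hlt | hge
        · exact prefix_ne h s (C := (· ∈ L.map Prod.fst)) htk hmin
            (by omega : (i:ℕ)+1 < (i':ℕ)+1) (by omega : (i':ℕ)+1 < t) he
        · exact prefix_ne h s (C := (· ∈ L.map Prod.fst)) htk hmin
            (by omega : (i':ℕ)+1 < (i:ℕ)+1) (by omega : (i:ℕ)+1 < t) he.symm
      · intro i
        have hi : (i:ℕ) < t - 1 := i.isLt
        exact hmin _ (by omega)
      · intro i
        have hi : (i:ℕ) < t - 1 := i.isLt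
        exact fun hc => prefix_ne h s (C := (· ∈ L.map Prod.fst)) htk hmin
          (by omega : 0 < (i:ℕ)+1) (by omega : (i:ℕ)+1 < t) (by exact hc.symm)
    refine ⟨u, Finset.mem_filter.mpr ⟨Finset.mem_univ _, hgu⟩, ?_⟩
    rw [Finset.mem_biUnion]
    refine ⟨d, List.mem_toFinset.mpr htk, ?_⟩
    rw [mem_Cyl]
    intro pr hpr
    rcases List.mem_append.mp hpr with hL | hP
    · exact mem_Cyl.mp hC pr hL
    · rw [pathL, List.mem_map] at hP
      obtain ⟨i, hir, hieq⟩ := hP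
      rw [List.mem_range] at hir
      rw [← hieq]
      show h (pt s d u i) = pt s d u (i+1)
      rw [hptit i (by omega), hptit (i+1) (by omega)]
      exact (Function.iterate_succ_apply' h i s).symm
  calc EV.card ≤ cover.card := Finset.card_le_card hsub
    _ ≤ ∑ t ∈ Finset.Icc 1 k, (((Finset.univ : Finset (Fin (t-1) → Fin N)).filter
          (fun u => Function.Injective u ∧ (∀ i, u i ∉ L.map Prod.fst) ∧ (∀ i, u i ≠ s))).biUnion
          (fun u => (L.map Prod.fst).toFinset.biUnion (fun d => Cyl N (L ++ pathL t s d u)))).card :=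
        Finset.card_biUnion_le
    _ ≤ ∑ _t ∈ Finset.Icc 1 k, L.length * N ^ (N - L.length - 1) := by
        apply Finset.sum_le_sum
        intro t ht
        rw [Finset.mem_Icc] at ht
        calc _ ≤ ∑ u ∈ (Finset.univ : Finset (Fin (t-1) → Fin N)).filter
                  (fun u => Function.Injective u ∧ (∀ i, u i ∉ L.map Prod.fst) ∧ (∀ i, u i ≠ s)),
                ((L.map Prod.fst).toFinset.biUnion (fun d => Cyl N (L ++ pathL t s d u))).card :=
              Finset.card_biUnion_le
          _ ≤ ∑ u ∈ (Finset.univ : Finset (Fin (t-1) → Fin N)).filter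
                  (fun u => Function.Injective u ∧ (∀ i, u i ∉ L.map Prod.fst) ∧ (∀ i, u i ≠ s)),
                ∑ d ∈ (L.map Prod.fst).toFinset, (Cyl N (L ++ pathL t s d u)).card :=
              Finset.sum_le_sum (fun u _ => Finset.card_biUnion_le)
          _ ≤ ∑ u ∈ (Finset.univ : Finset (Fin (t-1) → Fin N)).filter
                  (fun u => Function.Injective u ∧ (∀ i, u i ∉ L.map Prod.fst) ∧ (∀ i, u i ≠ s)),
                ∑ _d ∈ (L.map Prod.fst).toFinset, N ^ (N - L.length - t) := by
              apply Finset.sum_le_sum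
              intro u hu
              apply Finset.sum_le_sum
              intro d hd
              rw [Finset.mem_filter] at hu
              obtain ⟨-, hinj, hnk, hns⟩ := hu
              have hptnotk : ∀ i, i < t → pt s d u i ∉ L.map Prod.fst := by
                intro i hi
                rcases Nat.eq_zero_or_pos i with h0 | h1
                · subst h0; rw [pt_zero]; exact hs
                · rw [pt_mid s d u h1 hi]; exact hnk _
              have hptinj : ∀ x y, x < t → y < t → pt s d u x = pt s d u y → x = y := by
                intro x y hx hy hxy
                by_contra hne
                rcases Nat.eq_zero_or_pos x with hx0 | hx1 <;> rcases Nat.eq_zero_or_pos y with hy0 | hy1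
                · omega
                · subst hx0
                  rw [pt_zero, pt_mid s d u hy1 hy] at hxy
                  exact hns _ hxy.symm
                · subst hy0
                  rw [pt_zero, pt_mid s d u hx1 hx] at hxy
                  exact hns _ hxy
                · rw [pt_mid s d u hx1 hx, pt_mid s d u hy1 hy] at hxy
                  have := hinj hxy
                  rw [Fin.mk.injEq] at this
                  omega
              have hndp : ((L ++ pathL t s d u).map Prod.fst).Nodup := by
                rw [List.map_append, List.nodup_append]
                refine ⟨hnd, ?_, ?_⟩
                · rw [pathL, List.map_map]
                  have hcomp : (Prod.fst ∘ fun i => (pt s d u i, pt s d u (i+1)))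
                      = fun i => pt s d u i := rfl
                  rw [hcomp]
                  refine List.Nodup.map_on ?_ List.nodup_range
                  intro x hx y hy hxy
                  rw [List.mem_range] at hx hy
                  exact hptinj x y hx hy hxy
                · intro a haL b haP hab; subst hab
                  rw [pathL, List.map_map] at haP
                  have hcomp : (Prod.fst ∘ fun i => (pt s d u i, pt s d u (i+1)))
                      = fun i => pt s d u i := rfl
                  rw [hcomp, List.mem_map] at haP
                  obtain ⟨i, hir, hieq⟩ := haP
                  rw [List.mem_range] at hir
                  exact hptnotk i hir (hieq ▸ haL)
              have hlform : (L ++ pathL t s d u).length = L.length + t := by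
                rw [List.length_append, pathL, List.length_map, List.length_range]
              rw [card_Cyl _ hndp, hlform]
              have hee : N - (L.length + t) = N - L.length - t := by omega
              rw [hee]
          _ ≤ N ^ (t-1) * ((L.map Prod.fst).toFinset.card * N ^ (N - L.length - t)) := by
              rw [Finset.sum_const, Finset.sum_const]
              simp only [smul_eq_mul]
              apply Nat.mul_le_mul_right
              calc _ ≤ (Finset.univ : Finset (Fin (t-1) → Fin N)).card := Finset.card_filter_le _ _
                _ = N ^ (t-1) := by rw [Finset.card_univ]; simp [Fintype.card_fun]
          _ ≤ L.length * N ^ (N - L.length - 1) := by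
              have h2 : (L.map Prod.fst).toFinset.card ≤ L.length :=
                le_trans (L.map Prod.fst).toFinset_card_le (by simp)
              calc N ^ (t-1) * ((L.map Prod.fst).toFinset.card * N ^ (N - L.length - t))
                  ≤ N ^ (t-1) * (L.length * N ^ (N - L.length - t)) :=
                    Nat.mul_le_mul_left _ (Nat.mul_le_mul_right _ h2)
                _ = L.length * (N ^ (t-1) * N ^ (N - L.length - t)) := by ring
                _ = L.length * N ^ (N - L.length - 1) := by
                    rw [← pow_add]
                    congr 2
                    omega
    _ = k * L.length * N ^ (N - L.length - 1) := by
        rw [Finset.sum_const, Nat.card_Icc]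
        simp [mul_assoc]
end Enter

section Alg
variable {N : ℕ}

/-- walk a chain of length `L` from `pos`; if some value equals `y`, output the point queried. -/
def goChain (y : Fin N) : ℕ → Fin N → OracleAlg N → OracleAlg N
  | 0, _, rest => rest
  | L+1, pos, rest => .query pos (fun v => if v = y then .output pos else goChain y L v rest)

def chainAlg (M L : ℕ) (st : ℕ → Fin N) (y : Fin N) : OracleAlg N :=
  (List.range M).foldr (fun a rest => goChain y L (st a) rest) (.output y)

lemma numQueries_goChain (y : Fin N) : ∀ (L : ℕ) (pos : Fin N) (rest : OracleAlg N),
    (goChain y L pos rest).numQueries ≤ L + rest.numQueries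
  | 0, pos, rest => by simp [goChain]
  | L+1, pos, rest => by
    show 1 + Finset.univ.sup (fun v => (if v = y then OracleAlg.output pos
        else goChain y L v rest).numQueries) ≤ (L+1) + rest.numQueries
    have hsup : Finset.univ.sup (fun v : Fin N => (if v = y then OracleAlg.output pos
        else goChain y L v rest).numQueries) ≤ L + rest.numQueries := by
      apply Finset.sup_le
      intro v _
      by_cases hv : v = y
      · simp [hv, OracleAlg.numQueries]
      · simp only [if_neg hv]
        exact numQueries_goChain y L v rest
    omega

lemma numQueries_fold (L : ℕ) (st : ℕ → Fin N) (y : Fin N) (b : OracleAlg N) :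
    ∀ l : List ℕ,
    ((l.foldr (fun a rest => goChain y L (st a) rest) b).numQueries) ≤ l.length * L + b.numQueries
  | [] => by simp
  | a :: l => by
    simp only [List.foldr_cons, List.length_cons]
    calc (goChain y L (st a) (l.foldr (fun a rest => goChain y L (st a) rest) b)).numQueries
        ≤ L + (l.foldr (fun a rest => goChain y L (st a) rest) b).numQueries :=
          numQueries_goChain y L (st a) _
      _ ≤ L + (l.length * L + b.numQueries) := by
          have := numQueries_fold L st y b l
          omega
      _ ≤ (l.length + 1) * L + b.numQueries := by ring_nf; omega

lemma numQueries_chainAlg (M L : ℕ) (st : ℕ → Fin N) (y : Fin N) :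
    (chainAlg M L st y).numQueries ≤ M * L := by
  unfold chainAlg
  have := numQueries_fold L st y (.output y) (List.range M)
  simpa [OracleAlg.numQueries] using this

lemma run_goChain_pres (y : Fin N) (h : Fin N → Fin N) :
    ∀ (L : ℕ) (pos : Fin N) (rest : OracleAlg N),
    h (rest.run h) = y → h ((goChain y L pos rest).run h) = y
  | 0, pos, rest, hres => hres
  | L+1, pos, rest, hres => by
    show h ((if h pos = y then OracleAlg.output pos else goChain y L (h pos) rest).run h) = y
    by_cases hv : h pos = y
    · simp [hv, OracleAlg.run]
    · rw [if_neg hv]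
      exact run_goChain_pres y h L (h pos) rest hres

lemma run_goChain_hit (y : Fin N) (h : Fin N → Fin N) :
    ∀ (L : ℕ) (pos : Fin N) (rest : OracleAlg N),
    (∃ r, 1 ≤ r ∧ r ≤ L ∧ h^[r] pos = y) → h ((goChain y L pos rest).run h) = y
  | 0, pos, rest, ⟨r, h1, h2, _⟩ => by omega
  | L+1, pos, rest, ⟨r, h1, h2, heq⟩ => by
    show h ((if h pos = y then OracleAlg.output pos else goChain y L (h pos) rest).run h) = y
    by_cases hv : h pos = y
    · simp [hv, OracleAlg.run]
    · rw [if_neg hv]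
      apply run_goChain_hit y h L (h pos) rest
      refine ⟨r - 1, ?_, by omega, ?_⟩
      · rcases Nat.eq_or_lt_of_le h1 with h1' | h1'
        · exfalso; apply hv; rw [← heq, ← h1']; simp
        · omega
      · have : h^[(r-1)+1] pos = y := by rw [(by omega : r - 1 + 1 = r)]; exact heq
        rw [Function.iterate_succ_apply] at this
        exact this

lemma run_fold (L : ℕ) (st : ℕ → Fin N) (y : Fin N) (h : Fin N → Fin N) (b : OracleAlg N) :
    ∀ l : List ℕ, (∃ a ∈ l, ∃ r, 1 ≤ r ∧ r ≤ L ∧ h^[r] (st a) = y) →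
    h ((l.foldr (fun a rest => goChain y L (st a) rest) b).run h) = y
  | [], ⟨a, ha, _⟩ => by simp at ha
  | a' :: l, ⟨a, ha, hr⟩ => by
    simp only [List.foldr_cons]
    rcases List.mem_cons.mp ha with h1 | h2
    · subst h1
      exact run_goChain_hit y h L (st a) _ hr
    · exact run_goChain_pres y h L (st a') _ (run_fold L st y h b l ⟨a, h2, hr⟩)

lemma run_chainAlg (M L : ℕ) (st : ℕ → Fin N) (y : Fin N) (h : Fin N → Fin N)
    (hex : ∃ a, a < M ∧ ∃ r, 1 ≤ r ∧ r ≤ L ∧ h^[r] (st a) = y) :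
    h ((chainAlg M L st y).run h) = y := by
  unfold chainAlg
  obtain ⟨a, haM, hr⟩ := hex
  exact run_fold L st y h _ (List.range M) ⟨a, List.mem_range.mpr haM, hr⟩
end Alg

namespace Stmt0
section
variable (N k M : ℕ) [NeZero N]

def st (a : ℕ) : Fin N := ⟨a % N, Nat.mod_lt _ (Nat.pos_of_ne_zero (NeZero.ne N))⟩

abbrev Par : Type := Σ _p : Fin k × Fin k, (Fin (2*k + ((_p.1 : ℕ)+1)) ↪ {z : Fin N // M ≤ (z : ℕ)})

variable {N k M}

def pj (σ : Par N k M) : ℕ := (σ.1.1 : ℕ) + 1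
def pj' (σ : Par N k M) : ℕ := (σ.1.2 : ℕ) + 1
def pm (σ : Par N k M) : ℕ := 2*k + pj σ

lemma pj_ge (σ : Par N k M) : 1 ≤ pj σ := Nat.le_add_left _ _
lemma pj_le (σ : Par N k M) : pj σ ≤ k := σ.1.1.isLt
lemma pj'_ge (σ : Par N k M) : 1 ≤ pj' σ := Nat.le_add_left _ _
lemma pj'_le (σ : Par N k M) : pj' σ ≤ k := σ.1.2.isLt
lemma pm_le (σ : Par N k M) : pm σ ≤ 3*k := by
  have := pj_le σ; unfold pm; omega

def cE (σ : Par N k M) (a : ℕ) (i : ℕ) : Fin N :=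
  if h : i < pm σ then (σ.2 ⟨i, h⟩ : {z : Fin N // M ≤ (z : ℕ)}).1 else st N a

def cP (σ : Par N k M) (a i : ℕ) : Fin N :=
  if i < pj σ then cE σ a (2*k + i) else cE σ a (pj' σ - 1)

def cX (σ : Par N k M) (a : ℕ) : Fin N := cE σ a (2*k)

def cellL (σ : Par N k M) (a : ℕ) : List (Fin N × Fin N) :=
  (st N a, cE σ a 0) :: (((List.range (2*k-1)).map fun i => (cE σ a i, cE σ a (i+1)))
    ++ ((List.range (pj σ)).map fun i => (cP σ a i, cP σ a (i+1))))

lemma st_val {a : ℕ} (ha : a < N) : ((st N a : Fin N) : ℕ) = a := by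
  simp [st, Nat.mod_eq_of_lt ha]

lemma cE_eq (σ : Par N k M) (a : ℕ) {i : ℕ} (hi : i < pm σ) :
    cE σ a i = (σ.2 ⟨i, hi⟩ : {z : Fin N // M ≤ (z : ℕ)}).1 := dif_pos hi

lemma cE_val (σ : Par N k M) (a : ℕ) {i : ℕ} (hi : i < pm σ) : M ≤ (cE σ a i : ℕ) := by
  rw [cE_eq σ a hi]; exact (σ.2 ⟨i, hi⟩).2

lemma cE_inj (σ : Par N k M) (a : ℕ) {i i' : ℕ} (hi : i < pm σ) (hi' : i' < pm σ)
    (he : cE σ a i = cE σ a i') : i = i' := by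
  rw [cE_eq σ a hi, cE_eq σ a hi'] at he
  have := σ.2.injective (Subtype.ext he)
  simpa using (Fin.mk.injEq _ _ _ _ ▸ this)

lemma cE_ne_st (σ : Par N k M) {a : ℕ} (haM : a < M) (hMN : M ≤ N) {i : ℕ} (hi : i < pm σ) :
    cE σ a i ≠ st N a := by
  intro he
  have h1 := cE_val σ a hi
  rw [he, st_val (by omega)] at h1
  omega

lemma cellL_length (σ : Par N k M) (a : ℕ) (hk : 1 ≤ k) : (cellL σ a).length = pm σ := by
  simp [cellL, pm]
  omega

lemma cellL_keys (σ : Par N k M) (a : ℕ) :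
    (cellL σ a).map Prod.fst = st N a ::
      (((List.range (2*k-1)) ++ (List.range (pj σ)).map (fun i => 2*k + i)).map (cE σ a)) := by
  simp only [cellL, List.map_cons, List.map_append, List.map_map]
  congr 1
  congr 1
  all_goals apply List.map_congr_left
  all_goals intro i hi
  all_goals first
    | rfl
    | (rw [List.mem_range] at hi
       show cP σ a i = cE σ a (2*k + i)
       rw [cP, if_pos hi])

lemma cellL_keys_nodup (σ : Par N k M) {a : ℕ} (haM : a < M) (hMN : M ≤ N) (hk : 1 ≤ k) :
    ((cellL σ a).map Prod.fst).Nodup := by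
  rw [cellL_keys]
  rw [List.nodup_cons]
  have hidx : ∀ i ∈ (List.range (2*k-1)) ++ (List.range (pj σ)).map (fun i => 2*k + i),
      i < pm σ := by
    intro i hi
    rcases List.mem_append.mp hi with h1 | h1
    · rw [List.mem_range] at h1; unfold pm; omega
    · rw [List.mem_map] at h1
      obtain ⟨i0, hi0, rfl⟩ := h1
      rw [List.mem_range] at hi0
      unfold pm; omega
  constructor
  · intro hmem
    rw [List.mem_map] at hmem
    obtain ⟨i, hi, he⟩ := hmem
    exact cE_ne_st σ haM hMN (hidx i hi) he
  · apply List.Nodup.map_on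
    · intro x hx y hy hxy
      exact cE_inj σ a (hidx x hx) (hidx y hy) hxy
    · apply List.Nodup.append List.nodup_range
      · apply List.Nodup.map ?_ List.nodup_range
        intro x y hxy
        have hxy' : 2*k + x = 2*k + y := hxy
        omega
      · intro x hx hx'
        rw [List.mem_range] at hx
        rw [List.mem_map] at hx'
        obtain ⟨i0, hi0, rfl⟩ := hx'
        omega

section iterfacts
variable {σ : Par N k M} {a : ℕ} {h : Fin N → Fin N}

lemma iterSt (hC : h ∈ Cyl N (cellL σ a)) (hk : 1 ≤ k) :
    ∀ i, i < 2*k → h^[i+1] (st N a) = cE σ a i := by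
  intro i
  induction i with
  | zero =>
    intro _
    have := mem_Cyl.mp hC (st N a, cE σ a 0) List.mem_cons_self
    simpa using this
  | succ i ih =>
    intro hi
    have h1 : h^[i+1] (st N a) = cE σ a i := ih (by omega)
    have h2 : h (cE σ a i) = cE σ a (i+1) := by
      apply mem_Cyl.mp hC (cE σ a i, cE σ a (i+1))
      apply List.mem_cons_of_mem
      apply List.mem_append_left
      rw [List.mem_map]
      exact ⟨i, List.mem_range.mpr (by omega), rfl⟩
    rw [Function.iterate_succ_apply', h1, h2]

lemma iterX (hC : h ∈ Cyl N (cellL σ a)) :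
    ∀ i, i ≤ pj σ → h^[i] (cX σ a) = cP σ a i := by
  intro i
  induction i with
  | zero =>
    intro _
    show cX σ a = cP σ a 0
    rw [cP, if_pos (show 0 < pj σ from pj_ge σ)]
    simp [cX]
  | succ i ih =>
    intro hi
    have h1 : h^[i] (cX σ a) = cP σ a i := ih (by omega)
    have h2 : h (cP σ a i) = cP σ a (i+1) := by
      apply mem_Cyl.mp hC (cP σ a i, cP σ a (i+1))
      apply List.mem_cons_of_mem
      apply List.mem_append_right
      rw [List.mem_map]
      exact ⟨i, List.mem_range.mpr (by omega), rfl⟩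
    rw [Function.iterate_succ_apply', h1, h2]

lemma iterMerge (hC : h ∈ Cyl N (cellL σ a)) (hk : 1 ≤ k) :
    ∀ r, h^[pj σ + r] (cX σ a) = h^[pj' σ + r] (st N a) := by
  have hx : h^[pj σ] (cX σ a) = cE σ a (pj' σ - 1) := by
    rw [iterX hC (pj σ) (le_refl _), cP, if_neg (by omega)]
  have hst : h^[pj' σ] (st N a) = cE σ a (pj' σ - 1) := by
    have := iterSt hC hk (pj' σ - 1) (by have := pj'_le σ; omega)
    rw [(by have := pj'_ge σ; omega : pj' σ - 1 + 1 = pj' σ)] at this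
    exact this
  intro r
  rw [(by omega : pj σ + r = r + pj σ), (by omega : pj' σ + r = r + pj' σ),
    Function.iterate_add_apply, Function.iterate_add_apply, hx, hst]

lemma iterK (hC : h ∈ Cyl N (cellL σ a)) (hk : 1 ≤ k) :
    h^[k] (cX σ a) = h^[k - pj σ + pj' σ] (st N a) := by
  have h1 := iterMerge hC hk (k - pj σ)
  rw [(by have := pj_le σ; omega : pj σ + (k - pj σ) = k)] at h1
  rw [h1]
  congr 1
  omega

lemma iter_inKeys (hC : h ∈ Cyl N (cellL σ a)) (hk : 1 ≤ k) :
    ∀ t, 1 ≤ t → t ≤ k → h^[t] (cX σ a) ∈ (cellL σ a).map Prod.fst := by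
  intro t ht1 htk
  rw [cellL_keys]
  by_cases hcase : t < pj σ
  · have := iterX hC t (by omega)
    rw [this, cP, if_pos hcase]
    apply List.mem_cons_of_mem
    rw [List.mem_map]
    refine ⟨2*k + t, List.mem_append_right _ ?_, rfl⟩
    rw [List.mem_map]
    exact ⟨t, List.mem_range.mpr hcase, rfl⟩
  · have hj := pj_le σ
    have hj1 := pj_ge σ
    have hj' := pj'_le σ
    have hj'1 := pj'_ge σ
    have h1 : h^[t] (cX σ a) = h^[pj' σ + (t - pj σ)] (st N a) := by
      have := iterMerge hC hk (t - pj σ)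
      rw [(by omega : pj σ + (t - pj σ) = t)] at this
      exact this
    have h2 : h^[pj' σ + (t - pj σ)] (st N a) = cE σ a (pj' σ + (t - pj σ) - 1) := by
      have := iterSt hC hk (pj' σ + (t - pj σ) - 1) (by omega)
      rw [(by omega : pj' σ + (t - pj σ) - 1 + 1 = pj' σ + (t - pj σ))] at this
      exact this
    rw [h1, h2]
    apply List.mem_cons_of_mem
    rw [List.mem_map]
    refine ⟨pj' σ + (t - pj σ) - 1, List.mem_append_left _ ?_, rfl⟩
    rw [List.mem_range]
    omega

end iterfacts

def cellF (σ : Par N k M) (a : ℕ) : Finset ((Fin N → Fin N) × Fin N) :=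
  (Cyl N (cellL σ a)).image (fun h => (h, cX σ a))

lemma mem_cellF {σ : Par N k M} {a : ℕ} {p : (Fin N → Fin N) × Fin N} :
    p ∈ cellF σ a ↔ p.1 ∈ Cyl N (cellL σ a) ∧ p.2 = cX σ a := by
  constructor
  · intro hp
    rw [cellF, Finset.mem_image] at hp
    obtain ⟨h, hh, rfl⟩ := hp
    exact ⟨hh, rfl⟩
  · intro ⟨h1, h2⟩
    rw [cellF, Finset.mem_image]
    exact ⟨p.1, h1, by rw [← h2]⟩

lemma card_cellF (σ : Par N k M) {a : ℕ} (haM : a < M) (hMN : M ≤ N) (hk : 1 ≤ k) :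
    (cellF σ a).card = N ^ (N - pm σ) := by
  rw [cellF, Finset.card_image_of_injective _ (fun h h' he => by simpa using (Prod.mk.injEq _ _ _ _ ▸ he).1),
    card_Cyl _ (cellL_keys_nodup σ haM hMN hk), cellL_length σ a hk]

lemma cell_param_eq (hk : 1 ≤ k) (hMN : M ≤ N) {a : ℕ} (haM : a < M)
    {σ σ' : Par N k M} {p : (Fin N → Fin N) × Fin N}
    (h1 : p ∈ cellF σ a) (h2 : p ∈ cellF σ' a) : σ = σ' := by
  obtain ⟨hC1, hx1⟩ := mem_cellF.mp h1
  obtain ⟨hC2, hx2⟩ := mem_cellF.mp h2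
  set h := p.1 with hh
  -- E's agree on [0, 2k)
  have hEeq : ∀ i, i < 2*k → cE σ a i = cE σ' a i := by
    intro i hi
    rw [← iterSt hC1 hk i hi, ← iterSt hC2 hk i hi]
  have hXeq : cX σ a = cX σ' a := by rw [← hx1, ← hx2]
  -- j's are equal
  have hjeq : pj σ = pj σ' := by
    by_contra hne
    -- wlog pj σ < pj σ'
    rcases Nat.lt_or_ge (pj σ) (pj σ') with hlt | hge
    · -- h^[pj σ] x : from σ : cE σ (pj' σ - 1) ; from σ' : cE σ' (2k + pj σ)
      have e1 : h^[pj σ] (cX σ a) = cE σ a (pj' σ - 1) := by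
        rw [iterX hC1 (pj σ) (le_refl _), cP, if_neg (by omega)]
      have e2 : h^[pj σ] (cX σ' a) = cE σ' a (2*k + pj σ) := by
        rw [iterX hC2 (pj σ) (by omega), cP, if_pos hlt]
      rw [hXeq] at e1
      have e3 : cE σ a (pj' σ - 1) = cE σ' a (pj' σ - 1) := by
        apply hEeq
        have := pj'_le σ; omega
      have e4 : cE σ' a (pj' σ - 1) = cE σ' a (2*k + pj σ) := by rw [← e3, ← e1, e2]
      have := cE_inj σ' a (i := pj' σ - 1) (i' := 2*k + pj σ)
        (by unfold pm; have := pj'_le σ; have := pj_ge σ'; omega)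
        (by unfold pm; omega) e4
      have := pj'_le σ; omega
    · rcases Nat.eq_or_lt_of_le hge with heq | hlt
      · omega
      · have e1 : h^[pj σ'] (cX σ' a) = cE σ' a (pj' σ' - 1) := by
          rw [iterX hC2 (pj σ') (le_refl _), cP, if_neg (by omega)]
        have e2 : h^[pj σ'] (cX σ a) = cE σ a (2*k + pj σ') := by
          rw [iterX hC1 (pj σ') (by omega), cP, if_pos hlt]
        rw [hXeq] at e2
        have e3 : cE σ a (pj' σ' - 1) = cE σ' a (pj' σ' - 1) := by
          apply hEeq
          have := pj'_le σ'; omega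
        have e4 : cE σ a (pj' σ' - 1) = cE σ a (2*k + pj σ') := by rw [e3, ← e1, e2]
        have := cE_inj σ a (i := pj' σ' - 1) (i' := 2*k + pj σ')
          (by unfold pm; have := pj'_le σ'; have := pj_ge σ; omega)
          (by unfold pm; omega) e4
        have := pj'_le σ'; omega
  -- j''s are equal
  have hj'eq : pj' σ = pj' σ' := by
    have e1 : h^[pj σ] (cX σ a) = cE σ a (pj' σ - 1) := by
      rw [iterX hC1 (pj σ) (le_refl _), cP, if_neg (by omega)]
    have e2 : h^[pj σ] (cX σ' a) = cE σ' a (pj' σ' - 1) := by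
      rw [hjeq, iterX hC2 (pj σ') (le_refl _), cP, if_neg (by omega)]
    rw [hXeq] at e1
    have e3 : cE σ' a (pj' σ' - 1) = cE σ' a (pj' σ - 1) := by
      rw [← e2, e1, hEeq _ (by have := pj'_le σ; omega)]
    have := cE_inj σ' a (i := pj' σ' - 1) (i' := pj' σ - 1)
      (by unfold pm; have := pj'_le σ'; have := pj_ge σ'; omega)
      (by unfold pm; have := pj'_le σ; have := pj_ge σ'; omega) e3
    have := pj'_ge σ; have := pj'_ge σ'; omega
  -- all E values agree
  have hEall : ∀ i, i < pm σ → cE σ a i = cE σ' a i := by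
    intro i hi
    rcases Nat.lt_or_ge i (2*k) with h2k | h2k
    · exact hEeq i h2k
    · rcases Nat.eq_or_lt_of_le h2k with heq | hgt
      · rw [← heq] at *
        exact hXeq
      · -- i = 2k + t with 1 ≤ t < pj σ
        have ht : i - 2*k < pj σ := by unfold pm at hi; omega
        have ht1 : 1 ≤ i - 2*k := by omega
        have e1 : h^[i - 2*k] (cX σ a) = cE σ a i := by
          rw [iterX hC1 _ (by omega), cP, if_pos ht]
          congr 1; omega
        have e2 : h^[i - 2*k] (cX σ' a) = cE σ' a i := by
          rw [iterX hC2 _ (by rw [← hjeq]; omega), cP, if_pos (by rw [← hjeq]; exact ht)]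
          congr 1; omega
        rw [← e1, ← e2, hXeq]
  -- now conclude σ = σ'
  obtain ⟨⟨jf, jf'⟩, e⟩ := σ
  obtain ⟨⟨gf, gf'⟩, f⟩ := σ'
  have hj : jf = gf := by
    apply Fin.ext
    have : (jf : ℕ) + 1 = (gf : ℕ) + 1 := hjeq
    omega
  have hj' : jf' = gf' := by
    apply Fin.ext
    have : (jf' : ℕ) + 1 = (gf' : ℕ) + 1 := hj'eq
    omega
  subst hj; subst hj'
  congr 1
  apply Function.Embedding.ext
  intro i
  apply Subtype.ext
  have hi : (i : ℕ) < pm ⟨(jf, jf'), e⟩ := by unfold pm pj; exact i.isLt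
  have := hEall (i : ℕ) hi
  rw [cE_eq _ a hi, cE_eq _ a (by exact hi)] at this
  simpa using this


open scoped Classical in
noncomputable def Dbad (N k : ℕ) [NeZero N] (b : ℕ) : Finset ((Fin N → Fin N) × Fin N) :=
  Finset.univ.filter (fun p => ∃ t ∈ Finset.Icc 1 k, ∃ r ∈ Finset.Icc 1 k,
    p.1^[t] p.2 = p.1^[r] (st N b))

lemma mem_Dbad {N k : ℕ} [NeZero N] {b : ℕ} {p : (Fin N → Fin N) × Fin N} :
    p ∈ Dbad N k b ↔ ∃ t ∈ Finset.Icc 1 k, ∃ r ∈ Finset.Icc 1 k,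
      p.1^[t] p.2 = p.1^[r] (st N b) := by
  simp [Dbad]

noncomputable def Gset (N k M : ℕ) [NeZero N] (a : ℕ) : Finset ((Fin N → Fin N) × Fin N) :=
  (Finset.univ : Finset (Par N k M)).biUnion (fun σ => cellF σ a)

lemma card_Gset (hk : 1 ≤ k) (hMN : M ≤ N) {a : ℕ} (haM : a < M) :
    (Gset N k M a).card = ∑ σ : Par N k M, N ^ (N - pm σ) := by
  rw [Gset, Finset.card_biUnion]
  · apply Finset.sum_congr rfl
    intro σ _
    exact card_cellF σ haM hMN hk
  · intro σ _ σ' _ hne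
    rw [Function.onFun, Finset.disjoint_left]
    intro p hp hp'
    exact hne (cell_param_eq hk hMN haM hp hp')

lemma cell_in_Dbad (hk : 1 ≤ k) {σ : Par N k M} {a : ℕ}
    {p : (Fin N → Fin N) × Fin N} (hp : p ∈ cellF σ a) : p ∈ Dbad N k a := by
  obtain ⟨hC, hx⟩ := mem_cellF.mp hp
  rw [mem_Dbad]
  refine ⟨pj σ, Finset.mem_Icc.mpr ⟨pj_ge σ, pj_le σ⟩,
    pj' σ, Finset.mem_Icc.mpr ⟨pj'_ge σ, pj'_le σ⟩, ?_⟩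
  have := iterMerge hC hk 0
  simpa [hx] using this

lemma st_ne_st {a b : ℕ} (ha : a < N) (hb : b < N) (hne : b ≠ a) : st N b ≠ st N a := by
  intro he
  apply hne
  have : ((st N b : Fin N) : ℕ) = ((st N a : Fin N) : ℕ) := by rw [he]
  rwa [st_val ha, st_val hb] at this

lemma st_not_in_keys {σ : Par N k M} {a b : ℕ} (haM : a < M) (hbM : b < M) (hMN : M ≤ N)
    (hne : b ≠ a) : st N b ∉ (cellL σ a).map Prod.fst := by
  rw [cellL_keys]
  intro hmem
  rcases List.mem_cons.mp hmem with h1 | h1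
  · exact st_ne_st (by omega) (by omega) hne h1
  · rw [List.mem_map] at h1
    obtain ⟨i, hi, he⟩ := h1
    have hilt : i < pm σ := by
      rcases List.mem_append.mp hi with h2 | h2
      · rw [List.mem_range] at h2; unfold pm; omega
      · rw [List.mem_map] at h2
        obtain ⟨i0, hi0, rfl⟩ := h2
        rw [List.mem_range] at hi0
        unfold pm; omega
    have h3 := cE_val σ a hilt
    rw [he, st_val (by omega)] at h3
    omega

lemma inter_card_le (hk : 1 ≤ k) (hMN : M ≤ N) (h4k : 3*k + k ≤ N)
    {a b : ℕ} (haM : a < M) (hbM : b < M) (hne : b ≠ a) (σ : Par N k M) :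
    ((cellF σ a) ∩ Dbad N k b).card ≤ k * pm σ * N ^ (N - pm σ - 1) := by
  have hpm3k := pm_le σ
  set EV := ((cellF σ a) ∩ Dbad N k b).image Prod.fst with hEVdef
  have hcard : ((cellF σ a) ∩ Dbad N k b).card = EV.card := by
    rw [hEVdef]
    rw [Finset.card_image_of_injOn]
    intro p hp p' hp' he
    have h1 : p.2 = cX σ a := (mem_cellF.mp (Finset.mem_inter.mp hp).1).2
    have h2 : p'.2 = cX σ a := (mem_cellF.mp (Finset.mem_inter.mp hp').1).2
    exact Prod.ext he (by rw [h1, h2])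
  rw [hcard]
  have hbound := enter_card_le k (cellL σ a) (cellL_keys_nodup σ haM hMN hk) (st N b)
    (st_not_in_keys haM hbM hMN hne)
    (by rw [cellL_length σ a hk]; omega) EV ?_
  · rwa [cellL_length σ a hk] at hbound
  · intro h hh
    rw [hEVdef, Finset.mem_image] at hh
    obtain ⟨p, hp, rfl⟩ := hh
    rw [Finset.mem_inter] at hp
    obtain ⟨hcell, hdbad⟩ := hp
    obtain ⟨hC, hx⟩ := mem_cellF.mp hcell
    refine ⟨hC, ?_⟩
    rw [mem_Dbad] at hdbad
    obtain ⟨t, ht, r, hr, heq⟩ := hdbad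
    rw [Finset.mem_Icc] at ht hr
    refine ⟨r, hr.1, hr.2, ?_⟩
    rw [← heq, hx]
    exact iter_inKeys hC hk t ht.1 ht.2

lemma descF_ge (n : ℕ) : ∀ m : ℕ, (n - m)^m ≤ n.descFactorial m
  | 0 => le_refl 1
  | m+1 => by
    rw [Nat.descFactorial_succ, pow_succ]
    have h1 : (n - (m+1))^m ≤ (n-m)^m := Nat.pow_le_pow_left (by omega) m
    calc (n - (m+1))^(m+1) = (n - (m+1))^m * (n - (m+1)) := pow_succ _ _
      _ ≤ (n - m)^m * (n - m) := Nat.mul_le_mul h1 (by omega)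
      _ ≤ (n - m) * n.descFactorial m := by
          rw [mul_comm]
          exact Nat.mul_le_mul_left _ (descF_ge n m)

lemma descF_le (n : ℕ) (m : ℕ) : ∀ d : ℕ, n.descFactorial (m + d) ≤ n.descFactorial m * n^d
  | 0 => by simp
  | d+1 => by
    rw [(by omega : m + (d+1) = (m + d) + 1), Nat.descFactorial_succ]
    calc (n - (m + d)) * n.descFactorial (m+d)
        ≤ n * (n.descFactorial m * n^d) := Nat.mul_le_mul (by omega) (descF_le n m d)
      _ = n.descFactorial m * n^(d+1) := by ring

lemma card_out (hMN : M ≤ N) : Fintype.card {z : Fin N // M ≤ (z : ℕ)} = N - M := by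
  have e : {z : Fin N // M ≤ (z : ℕ)} ≃ Fin (N - M) := by
    refine ⟨fun z => ⟨(z : Fin N).val - M, by have := (z : Fin N).isLt; have := z.2; omega⟩,
      fun i => ⟨⟨M + i.val, by have := i.isLt; omega⟩, by simp⟩, ?_, ?_⟩
    · intro z
      apply Subtype.ext
      apply Fin.ext
      have := z.2
      simp
      omega
    · intro i
      apply Fin.ext
      simp
  rw [Fintype.card_congr e, Fintype.card_fin]

lemma SG_ge (hk : 1 ≤ k) (hMN : M ≤ N) (h3k : 3*k ≤ N) :
    k^2 * ((N-M).descFactorial (3*k) * N^(N - 3*k))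
      ≤ ∑ σ : Par N k M, N ^ (N - pm σ) := by
  classical
  rw [← Finset.univ_sigma_univ, Finset.sum_sigma]
  have hinner : ∀ p : Fin k × Fin k,
      (N-M).descFactorial (3*k) * N^(N - 3*k)
        ≤ ∑ _e : (Fin (2*k + ((p.1 : ℕ)+1)) ↪ {z : Fin N // M ≤ (z : ℕ)}), N ^ (N - (2*k + ((p.1:ℕ)+1))) := by
    intro p
    rw [Finset.sum_const, Finset.card_univ, Fintype.card_embedding_eq, card_out hMN,
      Fintype.card_fin, smul_eq_mul]
    set m := 2*k + ((p.1:ℕ)+1) with hm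
    have hmle : m ≤ 3*k := by have := p.1.isLt; omega
    have h1 : (N-M).descFactorial (3*k) ≤ (N-M).descFactorial m * N^(3*k - m) := by
      calc (N-M).descFactorial (3*k) = (N-M).descFactorial (m + (3*k - m)) := by congr 1; omega
        _ ≤ (N-M).descFactorial m * (N-M)^(3*k-m) := descF_le _ _ _
        _ ≤ (N-M).descFactorial m * N^(3*k-m) :=
            Nat.mul_le_mul_left _ (Nat.pow_le_pow_left (by omega) _)
    calc (N-M).descFactorial (3*k) * N^(N - 3*k)
        ≤ ((N-M).descFactorial m * N^(3*k - m)) * N^(N - 3*k) := Nat.mul_le_mul_right _ h1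
      _ = (N-M).descFactorial m * N^(N - m) := by
          rw [mul_assoc, ← pow_add]
          congr 2
          omega
  calc k^2 * ((N-M).descFactorial (3*k) * N^(N - 3*k))
      = ∑ _p : Fin k × Fin k, (N-M).descFactorial (3*k) * N^(N - 3*k) := by
        rw [Finset.sum_const, Finset.card_univ, Fintype.card_prod, Fintype.card_fin,
          smul_eq_mul, ← pow_two]
    _ ≤ _ := Finset.sum_le_sum (fun p _ => by
        have := hinner p
        convert this using 2 <;> rfl)

end
end Stmt0


namespace Stmt0
section
variable {N k M : ℕ} [NeZero N]

lemma master (hk : 1 ≤ k) (hMN : M ≤ N) (hM1 : 1 ≤ M)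
    (h4k : 3*k + k ≤ N) (hc3 : 6*k^2*(M-1) ≤ N)
    (SUCC : Finset ((Fin N → Fin N) × Fin N))
    (hsucc : ∀ a, a < M → ∀ p ∈ Gset N k M a, p ∈ SUCC) :
    M * (∑ σ : Par N k M, N ^ (N - pm σ)) ≤ 2 * SUCC.card := by
  classical
  set S := ∑ σ : Par N k M, N ^ (N - pm σ) with hS
  set W := ∑ σ : Par N k M, N ^ (N - pm σ - 1) with hW
  have hpm1 : ∀ σ : Par N k M, pm σ + 1 ≤ N := by
    intro σ
    have := pm_le σ
    omega
  have hSW : S = N * W := by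
    rw [hS, hW, Finset.mul_sum]
    apply Finset.sum_congr rfl
    intro σ _
    have h1 : N - pm σ = (N - pm σ - 1) + 1 := by have := hpm1 σ; omega
    conv_lhs => rw [h1]
    rw [pow_succ, mul_comm]
  set G' : ℕ → Finset ((Fin N → Fin N) × Fin N) :=
    fun a => Gset N k M a \ (Finset.range a).biUnion (Dbad N k) with hG'
  have hG'sub : ∀ a, G' a ⊆ Gset N k M a := fun a => Finset.sdiff_subset
  have hkey : ∀ a, a < M → S ≤ 2 * (G' a).card := by
    intro a haM
    have hGa : (Gset N k M a).card = S := card_Gset hk hMN haM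
    set B := (Finset.range a).biUnion (Dbad N k) with hB
    have hIB : ((Gset N k M a) ∩ B).card ≤ (M-1) * (3*k^2*W) := by
      have hsub1 : (Gset N k M a) ∩ B ⊆
          (Finset.range a).biUnion (fun b => (Gset N k M a) ∩ Dbad N k b) := by
        intro p hp
        rw [Finset.mem_inter, hB, Finset.mem_biUnion] at hp
        obtain ⟨hp1, b, hb, hp2⟩ := hp
        rw [Finset.mem_biUnion]
        exact ⟨b, hb, Finset.mem_inter.mpr ⟨hp1, hp2⟩⟩
      calc ((Gset N k M a) ∩ B).card
          ≤ ((Finset.range a).biUnion (fun b => (Gset N k M a) ∩ Dbad N k b)).card :=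
            Finset.card_le_card hsub1
        _ ≤ ∑ b ∈ Finset.range a, ((Gset N k M a) ∩ Dbad N k b).card := Finset.card_biUnion_le
        _ ≤ ∑ _b ∈ Finset.range a, (3*k^2*W) := by
            apply Finset.sum_le_sum
            intro b hb
            rw [Finset.mem_range] at hb
            have hbM : b < M := by omega
            have hbne : b ≠ a := by omega
            have hsub2 : (Gset N k M a) ∩ Dbad N k b ⊆
                (Finset.univ : Finset (Par N k M)).biUnion (fun σ => cellF σ a ∩ Dbad N k b) := by
              intro p hp
              rw [Finset.mem_inter, Gset, Finset.mem_biUnion] at hp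
              obtain ⟨⟨σ, _, hp1⟩, hp2⟩ := hp
              rw [Finset.mem_biUnion]
              exact ⟨σ, Finset.mem_univ _, Finset.mem_inter.mpr ⟨hp1, hp2⟩⟩
            calc ((Gset N k M a) ∩ Dbad N k b).card
                ≤ ((Finset.univ : Finset (Par N k M)).biUnion
                    (fun σ => cellF σ a ∩ Dbad N k b)).card := Finset.card_le_card hsub2
              _ ≤ ∑ σ : Par N k M, (cellF σ a ∩ Dbad N k b).card := Finset.card_biUnion_le
              _ ≤ ∑ σ : Par N k M, 3*k^2 * N ^ (N - pm σ - 1) := by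
                  apply Finset.sum_le_sum
                  intro σ _
                  calc (cellF σ a ∩ Dbad N k b).card
                      ≤ k * pm σ * N ^ (N - pm σ - 1) :=
                        inter_card_le hk hMN h4k haM hbM hbne σ
                    _ ≤ 3*k^2 * N ^ (N - pm σ - 1) := by
                        apply Nat.mul_le_mul_right
                        have := pm_le σ
                        nlinarith
              _ = 3*k^2*W := by rw [hW, Finset.mul_sum]
        _ ≤ (M-1) * (3*k^2*W) := by
            rw [Finset.sum_const, Finset.card_range, smul_eq_mul]
            exact Nat.mul_le_mul_right _ (by omega)
    have hcs : (G' a).card = (Gset N k M a).card - ((Gset N k M a) ∩ B).card := by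
      rw [hG']
      simp only []
      rw [← Finset.sdiff_inter_self_left]
      exact Finset.card_sdiff_of_subset Finset.inter_subset_left
    have hWbound : 2*((M-1) * (3*k^2*W)) ≤ N*W := by
      calc 2*((M-1) * (3*k^2*W)) = (6*k^2*(M-1))*W := by ring
        _ ≤ N*W := Nat.mul_le_mul_right _ hc3
    have hle : ((Gset N k M a) ∩ B).card ≤ (Gset N k M a).card := by
      apply Finset.card_le_card
      exact Finset.inter_subset_left
    rw [hSW]
    omega
  -- disjointness of the G' a
  have hdisj : ∀ a₁, a₁ < M → ∀ a₂, a₂ < M → a₁ ≠ a₂ → Disjoint (G' a₁) (G' a₂) := by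
    have haux : ∀ a₁ a₂, a₁ < a₂ → Disjoint (G' a₁) (G' a₂) := by
      intro a₁ a₂ hlt
      rw [Finset.disjoint_left]
      intro p hp1 hp2
      have hpD : p ∈ Dbad N k a₁ := by
        have := hG'sub a₁ hp1
        rw [Gset, Finset.mem_biUnion] at this
        obtain ⟨σ, _, hcell⟩ := this
        exact cell_in_Dbad hk hcell
      rw [hG'] at hp2
      simp only [Finset.mem_sdiff, Finset.mem_biUnion] at hp2
      exact hp2.2 ⟨a₁, Finset.mem_range.mpr hlt, hpD⟩
    intro a₁ _ a₂ _ hne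
    rcases Nat.lt_or_ge a₁ a₂ with h | h
    · exact haux _ _ h
    · exact (haux _ _ (by omega)).symm
  have hcardU : ((Finset.range M).biUnion G').card = ∑ a ∈ Finset.range M, (G' a).card := by
    apply Finset.card_biUnion
    intro a₁ h1 a₂ h2 hne
    rw [Finset.mem_coe, Finset.mem_range] at h1 h2
    exact hdisj a₁ h1 a₂ h2 hne
  have hUsub : (Finset.range M).biUnion G' ⊆ SUCC := by
    intro p hp
    rw [Finset.mem_biUnion] at hp
    obtain ⟨a, ha, hpa⟩ := hp
    rw [Finset.mem_range] at ha
    exact hsucc a ha p (hG'sub a hpa)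
  calc M * S = ∑ _a ∈ Finset.range M, S := by
        rw [Finset.sum_const, Finset.card_range, smul_eq_mul]
    _ ≤ ∑ a ∈ Finset.range M, 2 * (G' a).card := by
        apply Finset.sum_le_sum
        intro a ha
        exact hkey a (Finset.mem_range.mp ha)
    _ = 2 * ∑ a ∈ Finset.range M, (G' a).card := by rw [Finset.mul_sum]
    _ = 2 * ((Finset.range M).biUnion G').card := by rw [hcardU]
    _ ≤ 2 * SUCC.card := by
        apply Nat.mul_le_mul_left
        exact Finset.card_le_card hUsub

lemma exp_le_one_sub {u : ℝ} (h0 : 0 ≤ u) (h2 : u ≤ 1/2) : Real.exp (-(2*u)) ≤ 1 - u := by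
  have h1 : 1 + 2*u ≤ Real.exp (2*u) := by
    have := Real.add_one_le_exp (2*u)
    linarith
  have hpos : (0:ℝ) < 1 + 2*u := by linarith
  have h3 : Real.exp (-(2*u)) = 1/Real.exp (2*u) := by
    rw [Real.exp_neg]
    ring
  rw [h3]
  have h4 : 1/Real.exp (2*u) ≤ 1/(1+2*u) :=
    one_div_le_one_div_of_le hpos h1
  have h5 : 1/(1+2*u) ≤ 1 - u := by
    rw [div_le_iff₀ hpos]
    nlinarith
  linarith

end
end Stmt0


set_option maxHeartbeats 2000000 in
/-- There is an absolute constant `c > 0` such that for all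
positive integers `N, k, T` with `k ≤ √N` and `2k ≤ T ≤ N/k`, there exists an
algorithm `A` making at most `T` oracle queries to a random function
`h : [N] → [N]` such that the probability (over uniform `h` and uniform
`x ∈ [N]`) that `A`, on input `h^(k)(x)`, outputs a point `z` with
`h(z) = h^(k)(x)` is at least `c·Tk/N`. -/
theorem stmt0 :
    ∃ c : ℝ, 0 < c ∧
      ∀ (N k T : ℕ), 0 < N → 0 < k →
        (k : ℝ) ≤ Real.sqrt N → 2 * k ≤ T → (T : ℝ) ≤ (N : ℝ) / (k : ℝ) →
        ∃ A : Fin N → OracleAlg N,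
          (∀ y : Fin N, (A y).numQueries ≤ T) ∧
          c * ((T : ℝ) * k) / N ≤
            ((Finset.univ.filter (fun p : (Fin N → Fin N) × Fin N =>
                p.1 ((A (p.1^[k] p.2)).run p.1) = p.1^[k] p.2)).card : ℝ) /
              (Fintype.card ((Fin N → Fin N) × Fin N)) := by
  classical
  refine ⟨Real.exp (-20) / 4096^4096, by positivity, ?_⟩
  intro N k T hN hkpos hsqrt h2kT hTN
  haveI : NeZero N := ⟨by omega⟩
  set c : ℝ := Real.exp (-20) / 4096^4096 with hc
  have hk : 1 ≤ k := hkpos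
  have hNR : (0:ℝ) < N := by exact_mod_cast hN
  have hkR : (0:ℝ) < k := by exact_mod_cast hkpos
  have hk2N : k^2 ≤ N := by
    have h1 : ((k:ℝ))^2 ≤ (Real.sqrt N)^2 := by
      apply pow_le_pow_left₀ (by positivity) hsqrt
    rw [Real.sq_sqrt (le_of_lt hNR)] at h1
    exact_mod_cast h1
  have hTkN : T * k ≤ N := by
    have h1 : (T:ℝ) * k ≤ N := by
      rw [← le_div_iff₀ hkR]
      exact hTN
    exact_mod_cast h1
  have hDcard : (Fintype.card ((Fin N → Fin N) × Fin N)) = N^N * N := by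
    rw [Fintype.card_prod, Fintype.card_fun, Fintype.card_fin]
  by_cases hbig : 4096 ≤ N
  · -- main branch
    obtain ⟨q, hqdef⟩ : ∃ q, q = T / (64*k) := ⟨_, rfl⟩
    obtain ⟨M, hMdef⟩ : ∃ M, M = max 1 q := ⟨_, rfl⟩
    have hq64 : q * (64*k) ≤ T := by
      rw [hqdef]; exact Nat.div_mul_le_self T (64*k)
    have h64k : 64*k ≤ N := by
      have h1 : (64*k)^2 ≤ N^2 := by nlinarith
      exact (Nat.pow_le_pow_iff_left (by norm_num : 2 ≠ 0)).mp h1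
    have hM1 : 1 ≤ M := by rw [hMdef]; exact le_max_left _ _
    have hMq1 : M ≤ q + 1 := by
      rw [hMdef]; exact max_le (by omega) (Nat.le_succ q)
    have hMlb : q ≤ M := by rw [hMdef]; exact le_max_right _ _
    have hMcase : M = 1 ∨ M = q := by
      rw [hMdef]
      rcases le_or_gt q 1 with h | h
      · left; omega
      · right; omega
    have hqN : 64*q ≤ N := by
      calc 64*q ≤ q*(64*k) := by nlinarith
        _ ≤ T := hq64
        _ ≤ T*k := Nat.le_mul_of_pos_right _ hkpos
        _ ≤ N := hTkN
    have hMub : 64*k*(M-1) ≤ T := by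
      have h1 : M - 1 ≤ q := by omega
      calc 64*k*(M-1) ≤ 64*k*q := Nat.mul_le_mul_left _ h1
        _ = q*(64*k) := by ring
        _ ≤ T := hq64
    have hMN : M ≤ N := by omega
    have hqueries : M*(2*k) ≤ T := by
      rcases hMcase with h0 | h1
      · rw [h0]; omega
      · rw [h1]
        calc q*(2*k) ≤ q*(64*k) := Nat.mul_le_mul_left _ (by omega)
          _ ≤ T := hq64
    have hTM : T ≤ 128*k*M := by
      have hdm := Nat.div_add_mod T (64*k)
      rw [← hqdef] at hdm
      have hmod := Nat.mod_lt T (show 0 < 64*k by omega)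
      have hT64 : T < 64*k*q + 64*k := by omega
      have h1 : 64*k*q ≤ 64*k*M := Nat.mul_le_mul_left _ hMlb
      have h2 : 64*k*1 ≤ 64*k*M := Nat.mul_le_mul_left _ hM1
      have h3 : 128*k*M = 64*k*M + 64*k*M := by ring
      omega
    have h4kN : 3*k + k ≤ N := by omega
    have hc3 : 6*k^2*(M-1) ≤ N := by
      have h2 : 64*(6*k^2*(M-1)) ≤ 64*N := by
        calc 64*(6*k^2*(M-1)) = 6*k*(64*k*(M-1)) := by ring
          _ ≤ 6*k*T := Nat.mul_le_mul_left _ hMub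
          _ = 6*(T*k) := by ring
          _ ≤ 6*N := Nat.mul_le_mul_left _ hTkN
          _ ≤ 64*N := by omega
      omega
    have h6kq : 6*(k*q) ≤ N := by
      have h2 : 64*(6*(k*q)) ≤ 64*N := by
        calc 64*(6*(k*q)) = 6*(q*(64*k)) := by ring
          _ ≤ 6*T := Nat.mul_le_mul_left _ hq64
          _ ≤ 6*(T*k) := Nat.mul_le_mul_left _ (Nat.le_mul_of_pos_right _ hkpos)
          _ ≤ 6*(N) := Nat.mul_le_mul_left _ hTkN
          _ ≤ 64*N := by omega
      omega
    have hcond2 : 6*k*(M + 3*k) ≤ 20*N := by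
      have h1 : 6*k*(M + 3*k) ≤ 6*(k*q) + 6*k + 18*k^2 := by nlinarith
      have h2 : 6*k ≤ N := by omega
      have h3 : 18*k^2 ≤ 18*N := by omega
      omega
    have hcond1 : 2*(M + 3*k) ≤ N := by omega
    refine ⟨fun y => chainAlg M (2*k) (Stmt0.st N) y, ?_, ?_⟩
    · intro y
      calc (chainAlg M (2*k) (Stmt0.st N) y).numQueries ≤ M*(2*k) :=
            numQueries_chainAlg M (2*k) (Stmt0.st N) y
        _ ≤ T := hqueries
    · have hsucc : ∀ a, a < M → ∀ p ∈ Stmt0.Gset N k M a,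
          p ∈ Finset.univ.filter (fun p : (Fin N → Fin N) × Fin N =>
            p.1 (((fun y => chainAlg M (2*k) (Stmt0.st N) y) (p.1^[k] p.2)).run p.1)
              = p.1^[k] p.2) := by
        intro a haM p hp
        rw [Stmt0.Gset, Finset.mem_biUnion] at hp
        obtain ⟨σ, -, hcell⟩ := hp
        obtain ⟨hC, hx⟩ := Stmt0.mem_cellF.mp hcell
        rw [Finset.mem_filter]
        refine ⟨Finset.mem_univ _, ?_⟩
        apply run_chainAlg
        refine ⟨a, haM, k - Stmt0.pj σ + Stmt0.pj' σ, ?_, ?_, ?_⟩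
        · have := Stmt0.pj_le σ; have := Stmt0.pj'_ge σ; omega
        · have := Stmt0.pj'_le σ; have := Stmt0.pj_ge σ; omega
        · rw [hx]
          exact (Stmt0.iterK hC hk).symm
      have hmaster := Stmt0.master hk hMN hM1 h4kN hc3 _ hsucc
      have hSlb := Stmt0.SG_ge (N:=N) (k:=k) (M:=M) hk hMN (by omega : 3*k ≤ N)
      have hBnat : (N - M - 3*k)^(3*k) ≤ (N-M).descFactorial (3*k) := by
        have := Stmt0.descF_ge (N-M) (3*k)
        have he : N - M - 3*k = (N - M) - 3*k := by omega
        rw [he]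
        exact this
      have hnat : M * (k^2 * ((N - M - 3*k)^(3*k) * N^(N - 3*k))) ≤
          2 * (Finset.univ.filter (fun p : (Fin N → Fin N) × Fin N =>
            p.1 (((fun y => chainAlg M (2*k) (Stmt0.st N) y) (p.1^[k] p.2)).run p.1)
              = p.1^[k] p.2)).card := by
        calc M * (k^2 * ((N - M - 3*k)^(3*k) * N^(N - 3*k)))
            ≤ M * (k^2 * ((N-M).descFactorial (3*k) * N^(N - 3*k))) := by
              apply Nat.mul_le_mul_left
              apply Nat.mul_le_mul_left
              exact Nat.mul_le_mul_right _ hBnat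
          _ ≤ M * (∑ σ : Stmt0.Par N k M, N ^ (N - Stmt0.pm σ)) := by
              apply Nat.mul_le_mul_left
              exact le_trans (le_of_eq (by ring_nf)) hSlb
          _ ≤ _ := hmaster
      -- real part
      have hMle : M + 3*k ≤ N := by omega
      have hcast : ((N - M - 3*k : ℕ) : ℝ) = (N:ℝ) - M - 3*k := by
        have h1 : ((N - M - 3*k : ℕ) : ℝ) = ((N : ℕ) : ℝ) - ((M + 3*k : ℕ) : ℝ) := by
          rw [← Nat.cast_sub hMle]
          congr 1
          omega
        rw [h1]
        push_cast
        ring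
      set E : ℝ := Real.exp (-20) with hE
      have hEpos : 0 < E := Real.exp_pos _
      set u : ℝ := ((M:ℝ) + 3*k)/N with hu
      have hu0 : 0 ≤ u := by positivity
      have hu2 : u ≤ 1/2 := by
        rw [hu, div_le_iff₀ hNR]
        have : ((2*(M + 3*k) : ℕ) : ℝ) ≤ ((N:ℕ):ℝ) := by exact_mod_cast hcond1
        push_cast at this
        linarith
      have h1u : ((N:ℝ) - M - 3*k)/N = 1 - u := by
        rw [hu]
        field_simp
        ring
      have h1unn : (0:ℝ) ≤ (N:ℝ) - M - 3*k := by
        have : ((M + 3*k : ℕ) : ℝ) ≤ ((N:ℕ):ℝ) := by exact_mod_cast hMle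
        push_cast at this
        linarith
      have hβpow : E ≤ (((N:ℝ) - M - 3*k)/N)^(3*k) := by
        have hstep1 : E ≤ Real.exp ((3*k:ℕ) * (-(2*u))) := by
          apply Real.exp_le_exp.mpr
          have hh : (6*k*(M+3*k) : ℝ) ≤ 20*N := by exact_mod_cast hcond2
          have huk : ((3*k:ℕ):ℝ) * (2*u) ≤ 20 := by
            have heq : ((3*k:ℕ):ℝ) * (2*u) = (6*(k:ℝ)*((M:ℝ)+3*k))/N := by
              rw [hu]
              push_cast
              ring
            rw [heq, div_le_iff₀ hNR]
            linarith
          nlinarith [huk]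
        have hstep2 : Real.exp ((3*k:ℕ) * (-(2*u))) = (Real.exp (-(2*u)))^(3*k) :=
          Real.exp_nat_mul _ _
        have hstep3 : (Real.exp (-(2*u)))^(3*k) ≤ (1-u)^(3*k) := by
          apply pow_le_pow_left₀ (Real.exp_pos _).le
          exact Stmt0.exp_le_one_sub hu0 hu2
        rw [h1u]
        calc E ≤ Real.exp ((3*k:ℕ) * (-(2*u))) := hstep1
          _ = (Real.exp (-(2*u)))^(3*k) := hstep2
          _ ≤ (1-u)^(3*k) := hstep3
      have hpowN : ((N:ℝ))^(3*k) * ((N:ℝ))^(N-3*k) = (N:ℝ)^N := by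
        rw [← pow_add]
        congr 1
        omega
      set B' : ℝ := ((N:ℝ) - M - 3*k)^(3*k) * (N:ℝ)^(N-3*k) with hB'
      have hβ' : E * (N:ℝ)^N ≤ B' := by
        have h1 : E * (N:ℝ)^N ≤ (((N:ℝ) - M - 3*k)/N)^(3*k) * (N:ℝ)^N := by
          apply mul_le_mul_of_nonneg_right hβpow (by positivity)
        rw [hB']
        refine le_trans h1 (le_of_eq ?_)
        rw [div_pow, ← hpowN]
        have hNn : ((N:ℝ))^(3*k) ≠ 0 := by positivity
        field_simp
      have hcount : (M:ℝ) * ((k:ℝ)^2 * B') ≤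
          2 * ((Finset.univ.filter (fun p : (Fin N → Fin N) × Fin N =>
            p.1 (((fun y => chainAlg M (2*k) (Stmt0.st N) y) (p.1^[k] p.2)).run p.1)
              = p.1^[k] p.2)).card : ℝ) := by
        have := hnat
        have hcast2 : ((M * (k^2 * ((N - M - 3*k)^(3*k) * N^(N - 3*k))) : ℕ) : ℝ)
            = (M:ℝ) * ((k:ℝ)^2 * B') := by
          push_cast [hB']
          rw [hcast]
        rw [← hcast2]
        exact_mod_cast this
      have hMR : (T:ℝ) ≤ 128*k*M := by exact_mod_cast hTM
      -- final chain
      rw [hDcard]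
      have hDR : ((N^N*N : ℕ) : ℝ) = (N:ℝ)^N * N := by push_cast; ring
      rw [hDR, div_le_div_iff₀ (by positivity) (by positivity)]
      have hcardnn : (0:ℝ) ≤ ((Finset.univ.filter (fun p : (Fin N → Fin N) × Fin N =>
            p.1 (((fun y => chainAlg M (2*k) (Stmt0.st N) y) (p.1^[k] p.2)).run p.1)
              = p.1^[k] p.2)).card : ℝ) := by positivity
      have hcle : c ≤ E/256 := by
        rw [hc, hE]
        apply div_le_div_of_nonneg_left (Real.exp_pos _).le (by norm_num)
        calc (256:ℝ) ≤ 4096 := by norm_num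
          _ ≤ 4096^4096 := le_self_pow₀ (by norm_num) (by norm_num)
      calc c * ((T:ℝ) * k) * ((N:ℝ)^N * N)
          ≤ (E/256) * ((T:ℝ) * k) * ((N:ℝ)^N * N) := by
            apply mul_le_mul_of_nonneg_right
            apply mul_le_mul_of_nonneg_right hcle (by positivity)
            positivity
        _ ≤ (E/256) * ((128*k*M) * k) * ((N:ℝ)^N * N) := by
            apply mul_le_mul_of_nonneg_right
            apply mul_le_mul_of_nonneg_left
            · apply mul_le_mul_of_nonneg_right hMR (by positivity)
            · positivity
            · positivity
        _ = ((M:ℝ) * ((k:ℝ)^2 * (E * (N:ℝ)^N))) * (N:ℝ) / 2 := by ring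
        _ ≤ ((M:ℝ) * ((k:ℝ)^2 * B')) * (N:ℝ) / 2 := by
            apply div_le_div_of_nonneg_right ?_ (by norm_num)
            apply mul_le_mul_of_nonneg_right ?_ (by positivity)
            apply mul_le_mul_of_nonneg_left ?_ (by positivity)
            apply mul_le_mul_of_nonneg_left hβ' (by positivity)
        _ ≤ (2 * ((Finset.univ.filter (fun p : (Fin N → Fin N) × Fin N =>
              p.1 (((fun y => chainAlg M (2*k) (Stmt0.st N) y) (p.1^[k] p.2)).run p.1)
                = p.1^[k] p.2)).card : ℝ)) * (N:ℝ) / 2 := by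
            apply div_le_div_of_nonneg_right ?_ (by norm_num)
            exact mul_le_mul_of_nonneg_right hcount (by positivity)
        _ = ((Finset.univ.filter (fun p : (Fin N → Fin N) × Fin N =>
              p.1 (((fun y => chainAlg M (2*k) (Stmt0.st N) y) (p.1^[k] p.2)).run p.1)
                = p.1^[k] p.2)).card : ℝ) * (N:ℝ) := by ring
  · -- trivial branch : N < 4096
    push_neg at hbig
    refine ⟨fun y => OracleAlg.output y, fun y => Nat.zero_le _, ?_⟩
    have hsub : Finset.univ.image (fun x : Fin N => ((id : Fin N → Fin N), x)) ⊆
        Finset.univ.filter (fun p : (Fin N → Fin N) × Fin N =>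
          p.1 (((fun y => OracleAlg.output y) (p.1^[k] p.2)).run p.1) = p.1^[k] p.2) := by
      intro p hp
      rw [Finset.mem_image] at hp
      obtain ⟨x, -, rfl⟩ := hp
      rw [Finset.mem_filter]
      refine ⟨Finset.mem_univ _, ?_⟩
      show id ((OracleAlg.output (id^[k] x)).run id) = id^[k] x
      rw [Function.iterate_id]
      rfl
    have hcard : N ≤ (Finset.univ.filter (fun p : (Fin N → Fin N) × Fin N =>
        p.1 (((fun y => OracleAlg.output y) (p.1^[k] p.2)).run p.1) = p.1^[k] p.2)).card := by
      have h1 : (Finset.univ.image (fun x : Fin N => ((id : Fin N → Fin N), x))).card = N := by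
        rw [Finset.card_image_of_injective _ (fun x y hxy => by
          simpa using (Prod.mk.injEq _ _ _ _ ▸ hxy).2), Finset.card_univ, Fintype.card_fin]
      have h2 := Finset.card_le_card hsub
      omega
    rw [hDcard]
    have hDR : ((N^N*N : ℕ) : ℝ) = (N:ℝ)^N * N := by push_cast; ring
    rw [hDR]
    have hNN : (0:ℝ) < (N:ℝ)^N := by positivity
    have hTkR : (T:ℝ)*k ≤ N := by exact_mod_cast hTkN
    have hcR : c ≤ 1/(N:ℝ)^N := by
      rw [hc]
      have h1 : Real.exp (-20) ≤ 1 := Real.exp_le_one_iff.mpr (by norm_num)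
      have h2 : ((N:ℝ))^N ≤ 4096^4096 := by
        have h3 : (N:ℕ)^N ≤ 4096^4096 := by
          calc N^N ≤ 4096^N := Nat.pow_le_pow_left (by omega) _
            _ ≤ 4096^4096 := Nat.pow_le_pow_right (by norm_num) (by omega)
        calc ((N:ℝ))^N = ((N^N : ℕ) : ℝ) := by push_cast; ring
          _ ≤ ((4096^4096 : ℕ) : ℝ) := by exact_mod_cast h3
          _ = (4096:ℝ)^4096 := by push_cast; ring
      calc Real.exp (-20) / 4096^4096 ≤ 1 / 4096^4096 := by
            apply div_le_div_of_nonneg_right h1 (by positivity)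
        _ ≤ 1/(N:ℝ)^N := by
            apply div_le_div_of_nonneg_left (by norm_num) hNN h2
    calc c * ((T:ℝ)*k) / N ≤ c * (N:ℝ) / N :=
          div_le_div_of_nonneg_right
            (mul_le_mul_of_nonneg_left hTkR (by positivity)) (le_of_lt hNR)
      _ = c := by field_simp
      _ ≤ 1/(N:ℝ)^N := hcR
      _ = (N:ℝ)/((N:ℝ)^N * N) := by field_simp
      _ ≤ _ :=
          div_le_div_of_nonneg_right (by exact_mod_cast hcard) (by positivity)
end

section
/- Let h₁,...,h_k : [N] → [N] be independent uniformly random functions. Any algorithm A that is given oracle access to each h_i and makes at most T oracle queries in total satisfies: the probability over the functions and over a uniform x₀ ∈ [N] that A, on input h_k(h_{k-1}(⋯h₁(x₀)⋯)), outputs a point z with h_k(z) = h_k(h_{k-1}(⋯h₁(x₀)⋯)) is at most (2T+3)/N. -/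
/-- An oracle algorithm (decision tree) with oracle access to `k` functions
`[N] → [N]`: each query specifies an oracle index `i ∈ [k]` and an input
`x ∈ [N]`, and the computation continues depending on the reply `h_i(x)`. -/
inductive KAlg (k N : ℕ) : Type
  | output : Fin N → KAlg k N
  | query : Fin k → Fin N → (Fin N → KAlg k N) → KAlg k N

namespace KAlg

/-- Run the algorithm with oracles `h i`. -/
def run {k N : ℕ} : KAlg k N → (Fin k → Fin N → Fin N) → Fin N
  | output z, _ => z
  | query i x cont, h => run (cont (h i x)) h

/-- The maximal total number of oracle queries made on any execution path. -/
def numQueries {k N : ℕ} : KAlg k N → ℕ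
  | output _ => 0
  | query _ _ cont => 1 + Finset.univ.sup fun y => numQueries (cont y)

end KAlg

/-- The hash chain `h_{[1,k]} = h_k ∘ ⋯ ∘ h_1` (with `h i` for `i : Fin k`
playing the role of `h_{i+1}`). -/
def chain {k N : ℕ} (h : Fin k → Fin N → Fin N) (x : Fin N) : Fin N :=
  (List.finRange k).foldl (fun y i => h i y) x

namespace Stmt1Aux

open Finset

variable {k N : ℕ}

/-- partial chain: value after applying the first `n` oracles. -/
def cpt (h : Fin k → Fin N → Fin N) (x₀ : Fin N) (n : ℕ) : Fin N :=
  ((List.finRange k).take n).foldl (fun y i => h i y) x₀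

lemma cpt_zero (h : Fin k → Fin N → Fin N) (x₀ : Fin N) : cpt h x₀ 0 = x₀ := rfl

lemma cpt_succ_lt (h : Fin k → Fin N → Fin N) (x₀ : Fin N) {n : ℕ} (hn : n < k) :
    cpt h x₀ (n + 1) = h ⟨n, hn⟩ (cpt h x₀ n) := by
  unfold cpt
  rw [List.take_succ]
  have h1 : (List.finRange k)[n]? = some ⟨n, hn⟩ := by
    rw [List.getElem?_eq_getElem (by simpa using hn)]
    simp
  rw [h1]
  simp

lemma cpt_succ_ge (h : Fin k → Fin N → Fin N) (x₀ : Fin N) {n : ℕ} (hn : k ≤ n) :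
    cpt h x₀ (n + 1) = cpt h x₀ n := by
  unfold cpt
  rw [List.take_of_length_le (by simpa using Nat.le_succ_of_le hn), List.take_of_length_le (by simpa using hn)]

lemma chain_eq_cpt (h : Fin k → Fin N → Fin N) (x₀ : Fin N) : chain h x₀ = cpt h x₀ k := by
  unfold chain cpt
  rw [List.take_of_length_le (by simp)]

/-- congruence for partial chains: if two oracle families agree on the points actually
used by the chain of `h`, the partial chains agree. -/
lemma cpt_congr (h h' : Fin k → Fin N → Fin N) (x₀ : Fin N) (n : ℕ)
    (H : ∀ j : ℕ, j < n → ∀ (hjk : j < k), h' ⟨j, hjk⟩ (cpt h x₀ j) = h ⟨j, hjk⟩ (cpt h x₀ j)) :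
    cpt h' x₀ n = cpt h x₀ n := by
  induction n with
  | zero => rfl
  | succ m ih =>
    have ih' := ih (fun j hj hjk => H j (Nat.lt_succ_of_lt hj) hjk)
    by_cases hm : m < k
    · rw [cpt_succ_lt h' x₀ hm, cpt_succ_lt h x₀ hm, ih', H m (Nat.lt_succ_self m) hm]
    · rw [cpt_succ_ge h' x₀ (Nat.le_of_not_lt hm), cpt_succ_ge h x₀ (Nat.le_of_not_lt hm), ih']


/-- a partial table of committed oracle values -/
abbrev Tbl (k N : ℕ) := Fin k → Fin N → Option (Fin N)

/-- insert a new entry into a table -/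
def ins (φ : Tbl k N) (a : Fin k) (x r : Fin N) : Tbl k N :=
  fun i p => if i = a ∧ p = x then some r else φ i p

/-- number of committed points of oracle `i` -/
def dsz (φ : Tbl k N) (i : Fin k) : ℕ := (univ.filter fun p => (φ i p).isSome).card

lemma dsz_ins_self (φ : Tbl k N) (a : Fin k) (x r : Fin N) (hx : φ a x = none) :
    dsz (ins φ a x r) a = dsz φ a + 1 := by
  unfold dsz
  have : (univ.filter fun p => ((ins φ a x r) a p).isSome)
      = insert x (univ.filter fun p => (φ a p).isSome) := by
    ext p
    by_cases hp : p = x <;> simp [ins, hp, hx]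
  rw [this, card_insert_of_notMem (by simp [hx])]

lemma dsz_ins_ne (φ : Tbl k N) (a : Fin k) (x r : Fin N) {i : Fin k} (hi : i ≠ a) :
    dsz (ins φ a x r) i = dsz φ i := by
  unfold dsz
  congr 1
  apply filter_congr
  intro p _
  simp [ins, hi]

/-- The set of oracle/input pairs consistent with table `φ`, whose chain avoids all
committed points and ends at `y`. -/
def SS (φ : Tbl k N) (y : Fin N) : Finset ((Fin k → Fin N → Fin N) × Fin N) :=
  univ.filter fun ω =>
    (∀ i p w, φ i p = some w → ω.1 i p = w) ∧
    (∀ i : Fin k, φ i (cpt ω.1 ω.2 i) = none) ∧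
    cpt ω.1 ω.2 k = y

lemma mem_SS {φ : Tbl k N} {y : Fin N} {ω : (Fin k → Fin N → Fin N) × Fin N} :
    ω ∈ SS φ y ↔ (∀ i p w, φ i p = some w → ω.1 i p = w) ∧
      (∀ i : Fin k, φ i (cpt ω.1 ω.2 i) = none) ∧ cpt ω.1 ω.2 k = y := by
  simp [SS]


lemma SS_ins (φ : Tbl k N) (y : Fin N) (a : Fin k) (x r : Fin N) (hx : φ a x = none) :
    SS (ins φ a x r) y
      = (SS φ y).filter (fun ω => cpt ω.1 ω.2 a ≠ x ∧ ω.1 a x = r) := by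
  ext ω
  simp only [mem_SS, mem_filter]
  constructor
  · rintro ⟨hext, hnt, hfin⟩
    have hxr : ω.1 a x = r := hext a x r (by simp [ins])
    have hne : cpt ω.1 ω.2 a ≠ x := by
      intro hEq
      have := hnt a
      rw [hEq] at this
      simp [ins] at this
    refine ⟨⟨fun i p w hw => hext i p w ?_, fun i => ?_, hfin⟩, hne, hxr⟩
    · simp only [ins]
      split
      · rename_i hc
        obtain ⟨hia, hpx⟩ := hc
        subst hia; subst hpx
        rw [hx] at hw; cases hw
      · exact hw
    · have := hnt i
      by_cases hia : i = a
      · subst hia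
        simp only [ins] at this
        split at this
        · cases this
        · exact this
      · simp only [ins] at this
        split at this
        · rename_i hc; exact absurd hc.1 hia
        · exact this
  · rintro ⟨⟨hext, hnt, hfin⟩, hne, hxr⟩
    refine ⟨fun i p w hw => ?_, fun i => ?_, hfin⟩
    · simp only [ins] at hw
      split at hw
      · rename_i hc
        obtain ⟨hia, hpx⟩ := hc
        subst hia; subst hpx
        cases hw
        exact hxr
      · exact hext i p w hw
    · by_cases hia : i = a
      · subst hia
        simp only [ins]
        split
        · rename_i hc
          exact absurd hc.2 hne
        · exact hnt i
      · simp only [ins]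
        split
        · rename_i hc; exact absurd hc.1 hia
        · exact hnt i


/-- modify the value of oracle `a` at point `x` -/
def vmod (a : Fin k) (x r' : Fin N) (ω : (Fin k → Fin N → Fin N) × Fin N) :
    (Fin k → Fin N → Fin N) × Fin N :=
  (fun i => if i = a then Function.update (ω.1 i) x r' else ω.1 i, ω.2)

lemma cpt_vmod (a : Fin k) (x r' : Fin N) (ω : (Fin k → Fin N → Fin N) × Fin N)
    (hne : cpt ω.1 ω.2 a ≠ x) (n : ℕ) :
    cpt (vmod a x r' ω).1 (vmod a x r' ω).2 n = cpt ω.1 ω.2 n := by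
  show cpt (vmod a x r' ω).1 ω.2 n = cpt ω.1 ω.2 n
  apply cpt_congr
  intro j hj hjk
  by_cases hja : (⟨j, hjk⟩ : Fin k) = a
  · have : cpt ω.1 ω.2 j ≠ x := by
      rw [show j = (a : ℕ) by rw [← hja]]
      exact hne
    simp [vmod, hja, Function.update_of_ne this]
  · simp [vmod, hja]

lemma vmod_mem {φ : Tbl k N} {y : Fin N} {a : Fin k} {x : Fin N} (r r' : Fin N)
    (hx : φ a x = none) {ω : (Fin k → Fin N → Fin N) × Fin N}
    (hω : ω ∈ SS (ins φ a x r) y) : vmod a x r' ω ∈ SS (ins φ a x r') y := by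
  rw [SS_ins φ y a x r hx] at hω
  rw [SS_ins φ y a x r' hx]
  obtain ⟨hS, hne, hval⟩ := mem_filter.mp hω
  rw [mem_SS] at hS
  obtain ⟨hext, hnt, hfin⟩ := hS
  have hcpt := cpt_vmod a x r' ω hne
  refine mem_filter.mpr ⟨mem_SS.mpr ⟨?_, ?_, ?_⟩, ?_, ?_⟩
  · intro i p w hw
    by_cases hia : i = a
    · subst hia
      have hpx : p ≠ x := by rintro rfl; rw [hx] at hw; cases hw
      simp [vmod, Function.update_of_ne hpx]
      exact hext i p w hw
    · simp [vmod, hia]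
      exact hext i p w hw
  · intro i
    rw [hcpt]
    exact hnt i
  · rw [hcpt]; exact hfin
  · rw [hcpt]; exact hne
  · simp [vmod]

lemma vmod_vmod {a : Fin k} {x r r' : Fin N} {ω : (Fin k → Fin N → Fin N) × Fin N}
    (hval : ω.1 a x = r) : vmod a x r (vmod a x r' ω) = ω := by
  unfold vmod
  refine Prod.ext ?_ rfl
  funext i
  by_cases hia : i = a
  · subst hia
    simp only [if_pos rfl, Function.update_idem]
    funext p
    by_cases hp : p = x
    · subst hp; simp [hval]
    · simp [Function.update_of_ne hp]
  · simp [hia]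

lemma card_SS_ins (φ : Tbl k N) (y : Fin N) (a : Fin k) (x : Fin N) (hx : φ a x = none)
    (r r' : Fin N) : (SS (ins φ a x r) y).card = (SS (ins φ a x r') y).card := by
  apply Finset.card_bij' (fun ω _ => vmod a x r' ω) (fun ω _ => vmod a x r ω)
  · intro ω hω; exact vmod_mem r r' hx hω
  · intro ω hω; exact vmod_mem r' r hx hω
  · intro ω hω
    rw [SS_ins φ y a x r hx] at hω
    exact vmod_vmod (mem_filter.mp hω).2.2
  · intro ω hω
    rw [SS_ins φ y a x r' hx] at hω
    exact vmod_vmod (mem_filter.mp hω).2.2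


/-- reroute the hidden chain so that its `a`-th point becomes `v`. -/
def reroute (a : Fin k) (v : Fin N) (ω : (Fin k → Fin N → Fin N) × Fin N) :
    (Fin k → Fin N → Fin N) × Fin N :=
  (fun i => if (i : ℕ) + 1 = (a : ℕ) then Function.update (ω.1 i) (cpt ω.1 ω.2 i) v
    else if i = a then (fun p => ω.1 a (Equiv.swap (cpt ω.1 ω.2 (a : ℕ)) v p))
    else ω.1 i,
   if (a : ℕ) = 0 then v else ω.2)

lemma reroute_cpt_lt (a : Fin k) (v : Fin N) (ω : (Fin k → Fin N → Fin N) × Fin N)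
    {j : ℕ} (hj : j < (a : ℕ)) :
    cpt (reroute a v ω).1 (reroute a v ω).2 j = cpt ω.1 ω.2 j := by
  induction j with
  | zero =>
    show (reroute a v ω).2 = ω.2
    simp only [reroute]
    rw [if_neg (by omega)]
  | succ m ih =>
    have hm : m < (a : ℕ) := by omega
    have hmk : m < k := lt_of_lt_of_le hm (le_of_lt a.isLt)
    rw [cpt_succ_lt _ _ hmk, cpt_succ_lt _ _ hmk, ih hm]
    show (reroute a v ω).1 ⟨m, hmk⟩ (cpt ω.1 ω.2 m) = _
    simp only [reroute]
    rw [if_neg (by omega), if_neg (by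
      intro hEq
      have : m = (a : ℕ) := by rw [← hEq]
      omega)]

lemma reroute_cpt_self (a : Fin k) (v : Fin N) (ω : (Fin k → Fin N → Fin N) × Fin N) :
    cpt (reroute a v ω).1 (reroute a v ω).2 (a : ℕ) = v := by
  rcases Nat.eq_zero_or_pos (a : ℕ) with h0 | hpos
  · rw [h0]
    show (reroute a v ω).2 = v
    simp only [reroute]
    rw [if_pos h0]
  · obtain ⟨m, hm⟩ : ∃ m, (a : ℕ) = m + 1 := ⟨(a : ℕ) - 1, by omega⟩
    have hmk : m < k := by have := a.isLt; omega
    rw [hm, cpt_succ_lt _ _ hmk, reroute_cpt_lt a v ω (by omega)]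
    show (reroute a v ω).1 ⟨m, hmk⟩ (cpt ω.1 ω.2 m) = v
    simp only [reroute]
    rw [if_pos (by simp [hm])]
    simp

lemma reroute_cpt_gt (a : Fin k) (v : Fin N) (ω : (Fin k → Fin N → Fin N) × Fin N)
    {m : ℕ} (hm : (a : ℕ) < m) :
    cpt (reroute a v ω).1 (reroute a v ω).2 m = cpt ω.1 ω.2 m := by
  induction m with
  | zero => omega
  | succ n ih =>
    rcases Nat.lt_or_ge n k with hnk | hnk
    · rw [cpt_succ_lt _ _ hnk, cpt_succ_lt _ _ hnk]
      rcases Nat.lt_or_ge (a : ℕ) n with han | han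
      · rw [ih han]
        show (reroute a v ω).1 ⟨n, hnk⟩ (cpt ω.1 ω.2 n) = _
        simp only [reroute]
        rw [if_neg (by omega), if_neg (by
          intro hEq
          have : n = (a : ℕ) := by rw [← hEq]
          omega)]
      · -- n = a
        have hna : n = (a : ℕ) := by omega
        have h1 : cpt (reroute a v ω).1 (reroute a v ω).2 n = v := by
          rw [hna]; exact reroute_cpt_self a v ω
        rw [h1]
        show (reroute a v ω).1 ⟨n, hnk⟩ v = _
        simp only [reroute]
        rw [if_neg (by omega), if_pos (by ext; simp [hna])]
        have hfin : (⟨n, hnk⟩ : Fin k) = a := by ext; simp [hna]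
        rw [Equiv.swap_apply_right, hfin, hna]
    · rw [cpt_succ_ge _ _ hnk, cpt_succ_ge _ _ hnk]
      have : (a : ℕ) < n := lt_of_lt_of_le a.isLt hnk
      exact ih this

lemma reroute_cpt_ne (a : Fin k) (v : Fin N) (ω : (Fin k → Fin N → Fin N) × Fin N)
    {m : ℕ} (hm : m ≠ (a : ℕ)) :
    cpt (reroute a v ω).1 (reroute a v ω).2 m = cpt ω.1 ω.2 m := by
  rcases Nat.lt_or_ge m (a : ℕ) with h | h
  · exact reroute_cpt_lt a v ω h
  · exact reroute_cpt_gt a v ω (by omega)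


lemma reroute_fst (a : Fin k) (v : Fin N) (ω : (Fin k → Fin N → Fin N) × Fin N) (i : Fin k) :
    (reroute a v ω).1 i = if (i : ℕ) + 1 = (a : ℕ) then Function.update (ω.1 i) (cpt ω.1 ω.2 (i : ℕ)) v
      else if i = a then (fun p => ω.1 a (Equiv.swap (cpt ω.1 ω.2 (a : ℕ)) v p))
      else ω.1 i := rfl

lemma reroute_snd (a : Fin k) (v : Fin N) (ω : (Fin k → Fin N → Fin N) × Fin N) :
    (reroute a v ω).2 = if (a : ℕ) = 0 then v else ω.2 := rfl

lemma reroute_mem {φ : Tbl k N} {y : Fin N} {a : Fin k} {x v : Fin N}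
    (hx : φ a x = none) (hv : φ a v = none)
    {ω : (Fin k → Fin N → Fin N) × Fin N} (hω : ω ∈ SS φ y)
    (hcx : cpt ω.1 ω.2 (a : ℕ) = x) : reroute a v ω ∈ SS φ y := by
  rw [mem_SS] at hω
  obtain ⟨hext, hnt, hfin⟩ := hω
  rw [mem_SS]
  refine ⟨?_, ?_, ?_⟩
  · intro i p w hw
    show (reroute a v ω).1 i p = w
    rw [reroute_fst]
    split
    · rename_i hia
      have hpc : p ≠ cpt ω.1 ω.2 (i : ℕ) := by
        intro hEq
        rw [hEq, hnt i] at hw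
        cases hw
      rw [Function.update_of_ne hpc]
      exact hext i p w hw
    · split
      · rename_i hia2
        subst hia2
        have hpx : p ≠ x := by rintro rfl; rw [hx] at hw; cases hw
        have hpv : p ≠ v := by rintro rfl; rw [hv] at hw; cases hw
        show ω.1 i (Equiv.swap (cpt ω.1 ω.2 (i : ℕ)) v p) = w
        rw [hcx, Equiv.swap_apply_of_ne_of_ne hpx hpv]
        exact hext i p w hw
      · exact hext i p w hw
  · intro i
    by_cases hia : i = a
    · subst hia
      rw [reroute_cpt_self]
      exact hv
    · rw [reroute_cpt_ne a v ω (fun hEq => hia (Fin.ext hEq))]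
      exact hnt i
  · rw [reroute_cpt_ne a v ω (Nat.ne_of_gt a.isLt)]
    exact hfin

lemma reroute_reroute {a : Fin k} {x v : Fin N}
    {ω : (Fin k → Fin N → Fin N) × Fin N} (hcx : cpt ω.1 ω.2 (a : ℕ) = x) :
    reroute a x (reroute a v ω) = ω := by
  have hvv : cpt (reroute a v ω).1 (reroute a v ω).2 (a : ℕ) = v := reroute_cpt_self a v ω
  refine Prod.ext ?_ ?_
  · funext i
    show (reroute a x (reroute a v ω)).1 i = ω.1 i
    rw [reroute_fst]
    split
    · rename_i hia
      have hik : (i : ℕ) < k := i.isLt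
      have hcpt : cpt (reroute a v ω).1 (reroute a v ω).2 (i : ℕ) = cpt ω.1 ω.2 (i : ℕ) :=
        reroute_cpt_ne a v ω (by omega)
      rw [hcpt]
      rw [show (reroute a v ω).1 i = Function.update (ω.1 i) (cpt ω.1 ω.2 (i : ℕ)) v from by
        rw [reroute_fst, if_pos hia]]
      rw [Function.update_idem]
      have hval : ω.1 i (cpt ω.1 ω.2 (i : ℕ)) = x := by
        have h1 : cpt ω.1 ω.2 ((i : ℕ) + 1) = ω.1 i (cpt ω.1 ω.2 (i : ℕ)) := by
          rw [cpt_succ_lt _ _ hik]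
        rw [← h1, hia, hcx]
      rw [← hval, Function.update_eq_self]
    · split
      · rename_i hne hia2
        subst hia2
        funext p
        show (reroute i v ω).1 i (Equiv.swap (cpt (reroute i v ω).1 (reroute i v ω).2 (i : ℕ)) x p)
            = ω.1 i p
        rw [hvv]
        rw [show (reroute i v ω).1 i = (fun q => ω.1 i (Equiv.swap (cpt ω.1 ω.2 (i : ℕ)) v q)) from by
          rw [reroute_fst, if_neg hne, if_pos rfl]]
        show ω.1 i (Equiv.swap (cpt ω.1 ω.2 (i : ℕ)) v (Equiv.swap v x p)) = ω.1 i p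
        rw [hcx]
        rw [show Equiv.swap v x p = Equiv.swap x v p from by rw [Equiv.swap_comm]]
        rw [Equiv.swap_apply_self]
      · rename_i hne1 hne2
        rw [show (reroute a v ω).1 i = ω.1 i from by rw [reroute_fst, if_neg hne1, if_neg hne2]]
  · show (reroute a x (reroute a v ω)).2 = ω.2
    rw [reroute_snd, reroute_snd]
    rcases Nat.eq_zero_or_pos (a : ℕ) with h0 | hpos
    · rw [if_pos h0, ← hcx, h0, cpt_zero]
    · rw [if_neg (by omega), if_neg (by omega)]

lemma card_touch_eq (φ : Tbl k N) (y : Fin N) (a : Fin k) (x v : Fin N)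
    (hx : φ a x = none) (hv : φ a v = none) :
    ((SS φ y).filter (fun ω => cpt ω.1 ω.2 (a : ℕ) = x)).card
      = ((SS φ y).filter (fun ω => cpt ω.1 ω.2 (a : ℕ) = v)).card := by
  apply Finset.card_bij' (fun ω _ => reroute a v ω) (fun ω _ => reroute a x ω)
  · intro ω hω
    obtain ⟨hS, hc⟩ := mem_filter.mp hω
    exact mem_filter.mpr ⟨reroute_mem hx hv hS hc, reroute_cpt_self a v ω⟩
  · intro ω hω
    obtain ⟨hS, hc⟩ := mem_filter.mp hω
    exact mem_filter.mpr ⟨reroute_mem hv hx hS hc, reroute_cpt_self a x ω⟩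
  · intro ω hω
    exact reroute_reroute (mem_filter.mp hω).2
  · intro ω hω
    exact reroute_reroute (mem_filter.mp hω).2


lemma card_none_add_dsz (φ : Tbl k N) (a : Fin k) :
    (univ.filter fun p => φ a p = none).card + dsz φ a = N := by
  unfold dsz
  have h1 : (univ.filter fun p => (φ a p).isSome)
      = univ.filter fun p => ¬ (φ a p = none) := by
    apply filter_congr
    intro p _
    simp [Option.isSome_iff_ne_none]
  have h2 := Finset.card_filter_add_card_filter_not
    (s := (univ : Finset (Fin N))) (p := fun p => φ a p = none)
  have h3 : (univ : Finset (Fin N)).card = N := by simp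
  rw [h1]
  omega

lemma card_SS_touch (φ : Tbl k N) (y : Fin N) (a : Fin k) (x : Fin N) (hx : φ a x = none) :
    (SS φ y).card
      = (N - dsz φ a) * ((SS φ y).filter (fun ω => cpt ω.1 ω.2 (a : ℕ) = x)).card := by
  rw [Finset.card_eq_sum_card_fiberwise (f := fun ω => cpt ω.1 ω.2 (a : ℕ))
    (t := univ.filter fun p => φ a p = none)
    (fun ω hω => by
      simp only [mem_filter, mem_univ, true_and]
      simpa using (mem_SS.mp hω).2.1 a)]
  have : ∀ v ∈ (univ.filter fun p => φ a p = none),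
      ((SS φ y).filter fun ω => cpt ω.1 ω.2 (a : ℕ) = v).card
        = ((SS φ y).filter fun ω => cpt ω.1 ω.2 (a : ℕ) = x).card := by
    intro v hv
    exact card_touch_eq φ y a v x (by simpa using hv) hx
  rw [Finset.sum_congr rfl this, Finset.sum_const, smul_eq_mul]
  congr 1
  have := card_none_add_dsz φ a
  omega

lemma card_SS_eq_sum (φ : Tbl k N) (y : Fin N) (a : Fin k) (x : Fin N) (hx : φ a x = none) :
    (SS φ y).card = ((SS φ y).filter (fun ω => cpt ω.1 ω.2 (a : ℕ) = x)).card
      + ∑ r : Fin N, (SS (ins φ a x r) y).card := by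
  have hsplit := Finset.card_filter_add_card_filter_not
    (s := SS φ y) (p := fun ω => cpt ω.1 ω.2 (a : ℕ) = x)
  rw [← hsplit]
  congr 1
  rw [Finset.card_eq_sum_card_fiberwise (f := fun ω => ω.1 a x) (t := univ)
    (fun ω _ => mem_univ _)]
  apply Finset.sum_congr rfl
  intro r _
  congr 1
  rw [SS_ins φ y a x r hx]
  ext ω
  simp only [mem_filter]
  tauto

lemma card_filter_split (φ : Tbl k N) (y : Fin N) (a : Fin k) (x : Fin N) (hx : φ a x = none)
    (E : ((Fin k → Fin N → Fin N) × Fin N) → Prop) [DecidablePred E] :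
    ((SS φ y).filter E).card ≤ ((SS φ y).filter (fun ω => cpt ω.1 ω.2 (a : ℕ) = x)).card
      + ∑ r : Fin N, ((SS (ins φ a x r) y).filter E).card := by
  have hsplit := Finset.card_filter_add_card_filter_not
    (s := (SS φ y).filter E) (p := fun ω => cpt ω.1 ω.2 (a : ℕ) = x)
  have h1 : (((SS φ y).filter E).filter (fun ω => cpt ω.1 ω.2 (a : ℕ) = x)).card
      ≤ ((SS φ y).filter (fun ω => cpt ω.1 ω.2 (a : ℕ) = x)).card := by
    apply Finset.card_le_card
    intro ω hω
    simp only [mem_filter] at hω ⊢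
    exact ⟨hω.1.1, hω.2⟩
  have h2 : (((SS φ y).filter E).filter (fun ω => ¬ cpt ω.1 ω.2 (a : ℕ) = x)).card
      = ∑ r : Fin N, ((SS (ins φ a x r) y).filter E).card := by
    rw [Finset.card_eq_sum_card_fiberwise (f := fun ω => ω.1 a x) (t := univ)
      (fun ω _ => mem_univ _)]
    apply Finset.sum_congr rfl
    intro r _
    congr 1
    rw [SS_ins φ y a x r hx]
    ext ω
    simp only [mem_filter, Finset.filter_filter]
    tauto
  omega


/-- the "survival" factor: a lower bound for the probability that the hidden chain
is never touched. -/
noncomputable def G (ℓ : Fin k) : KAlg k N → (Fin k → ℕ) → ℝ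
  | .output _, d => ((N : ℝ) - d ℓ - 1) / ((N : ℝ) - d ℓ)
  | .query a _ cont, d => (((N : ℝ) - d a - 1) / ((N : ℝ) - d a)) *
      ⨅ r : Fin N, G ℓ (cont r) (Function.update d a (d a + 1))

lemma G_output (ℓ : Fin k) (z : Fin N) (d : Fin k → ℕ) :
    G ℓ (KAlg.output z) d = ((N : ℝ) - d ℓ - 1) / ((N : ℝ) - d ℓ) := rfl

lemma G_query (ℓ a : Fin k) (x : Fin N) (cont : Fin N → KAlg k N) (d : Fin k → ℕ) :
    G ℓ (KAlg.query a x cont) d = (((N : ℝ) - d a - 1) / ((N : ℝ) - d a)) *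
      ⨅ r : Fin N, G ℓ (cont r) (Function.update d a (d a + 1)) := rfl

lemma numQueries_cont_le (a : Fin k) (x : Fin N) (cont : Fin N → KAlg k N) (r : Fin N) :
    (cont r).numQueries + 1 ≤ (KAlg.query a x cont).numQueries := by
  show _ ≤ 1 + Finset.univ.sup fun y => (cont y).numQueries
  have h : (cont r).numQueries ≤ Finset.univ.sup fun y => (cont y).numQueries := by
    have h0 := Finset.le_sup (f := fun y => (cont y).numQueries) (mem_univ r)
    exact h0
  omega

lemma G_nonneg (ℓ : Fin k) (t : KAlg k N) (d : Fin k → ℕ)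
    (H : ∀ i, d i + t.numQueries + 1 ≤ N) : 0 ≤ G ℓ t d := by
  induction t generalizing d with
  | output z =>
    rw [G_output]
    have := H ℓ
    have h1 : (0:ℝ) ≤ (N : ℝ) - d ℓ - 1 := by
      have : (d ℓ : ℝ) + 1 ≤ N := by
        have : d ℓ + 1 ≤ N := by simpa [KAlg.numQueries] using H ℓ
        exact_mod_cast this
      linarith
    apply div_nonneg h1
    linarith
  | query a x cont ih =>
    rw [G_query]
    have hq : 1 ≤ (KAlg.query a x cont).numQueries := by
      show 1 ≤ 1 + _
      omega
    have h1 : (0:ℝ) ≤ (N : ℝ) - d a - 1 := by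
      have : d a + 2 ≤ N := by have := H a; omega
      have : (d a : ℝ) + 2 ≤ N := by exact_mod_cast this
      linarith
    have h2 : (0:ℝ) ≤ (N : ℝ) - d a := by linarith
    apply mul_nonneg (div_nonneg h1 h2)
    apply Real.iInf_nonneg
    intro r
    apply ih r
    intro i
    have hr := numQueries_cont_le a x cont r
    by_cases hia : i = a
    · subst hia
      rw [Function.update_self]
      have := H i
      omega
    · rw [Function.update_of_ne hia]
      have := H i
      omega

lemma G_le_one (hN : 0 < N) (ℓ : Fin k) (t : KAlg k N) (d : Fin k → ℕ)
    (H : ∀ i, d i + t.numQueries + 1 ≤ N) : G ℓ t d ≤ 1 := by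
  induction t generalizing d with
  | output z =>
    rw [G_output]
    have h1 : (d ℓ : ℝ) + 1 ≤ N := by
      have : d ℓ + 1 ≤ N := by simpa [KAlg.numQueries] using H ℓ
      exact_mod_cast this
    rw [div_le_one (by linarith)]
    linarith
  | query a x cont ih =>
    rw [G_query]
    have h1 : (d a : ℝ) + 2 ≤ N := by
      have : d a + 2 ≤ N := by have := H a; have := numQueries_cont_le a x cont ⟨0, hN⟩; omega
      exact_mod_cast this
    have hfac0 : (0:ℝ) ≤ ((N : ℝ) - d a - 1) / ((N : ℝ) - d a) :=
      div_nonneg (by linarith) (by linarith)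
    have hfac1 : ((N : ℝ) - d a - 1) / ((N : ℝ) - d a) ≤ 1 := by
      rw [div_le_one (by linarith)]
      linarith
    have hupd : ∀ (r : Fin N) i, Function.update d a (d a + 1) i + (cont r).numQueries + 1 ≤ N := by
      intro r i
      have hr := numQueries_cont_le a x cont r
      by_cases hia : i = a
      · subst hia; rw [Function.update_self]; have := H i; omega
      · rw [Function.update_of_ne hia]; have := H i; omega
    have hInf0 : 0 ≤ ⨅ r : Fin N, G ℓ (cont r) (Function.update d a (d a + 1)) :=
      Real.iInf_nonneg (fun r => G_nonneg ℓ (cont r) _ (hupd r))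
    have hInf1 : (⨅ r : Fin N, G ℓ (cont r) (Function.update d a (d a + 1))) ≤ 1 := by
      refine ciInf_le_of_le (Set.Finite.bddBelow (Set.finite_range _)) ⟨0, hN⟩ ?_
      exact ih ⟨0, hN⟩ _ (hupd ⟨0, hN⟩)
    nlinarith

lemma G_lower (ℓ : Fin k) (t : KAlg k N) (d : Fin k → ℕ) (D : ℕ)
    (hd : ∀ i, d i ≤ D) (hD : D + t.numQueries + 2 ≤ N) :
    1 - ((t.numQueries : ℝ) + 1) / ((N : ℝ) - D) ≤ G ℓ t d := by
  induction t generalizing d D with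
  | output z =>
    rw [G_output]
    have hq : (KAlg.output z : KAlg k N).numQueries = 0 := rfl
    rw [hq] at hD ⊢
    have hdl : (d ℓ : ℝ) ≤ D := by exact_mod_cast hd ℓ
    have hDN : (D : ℝ) + 2 ≤ N := by exact_mod_cast hD
    have h1 : (0:ℝ) < (N : ℝ) - D := by linarith
    have h2 : (0:ℝ) < (N : ℝ) - d ℓ := by linarith
    have key : 1/((N:ℝ) - d ℓ) ≤ 1/((N:ℝ) - D) := by
      apply one_div_le_one_div_of_le h1
      linarith
    have expand : ((N:ℝ) - d ℓ - 1)/((N:ℝ) - d ℓ) = 1 - 1/((N:ℝ) - d ℓ) := by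
      field_simp
    rw [expand]
    push_cast
    linarith
  | query a x cont ih =>
    rw [G_query]
    set m := Finset.univ.sup (fun y => (cont y).numQueries) with hm
    have hqn : (KAlg.query a x cont).numQueries = 1 + m := rfl
    rw [hqn] at hD ⊢
    have hda : d a ≤ D := hd a
    have hcast : (D:ℝ) + (1 + (m:ℝ)) + 2 ≤ (N:ℝ) := by exact_mod_cast hD
    have hda' : (d a : ℝ) ≤ D := by exact_mod_cast hda
    have hND : (0:ℝ) < (N:ℝ) - D := by linarith
    have hND1 : (0:ℝ) < (N:ℝ) - D - 1 := by linarith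
    have hNda : (0:ℝ) < (N:ℝ) - d a := by linarith
    have hf : ((N:ℝ) - D - 1)/((N:ℝ) - D) ≤ ((N:ℝ) - d a - 1)/((N:ℝ) - d a) := by
      rw [div_le_div_iff₀ hND hNda]
      nlinarith
    have hf0 : (0:ℝ) ≤ ((N:ℝ) - D - 1)/((N:ℝ) - D) := by positivity
    have hf0' : (0:ℝ) ≤ ((N:ℝ) - d a - 1)/((N:ℝ) - d a) := by
      apply div_nonneg _ (le_of_lt hNda)
      linarith
    have hlow0 : (0:ℝ) ≤ 1 - ((m:ℝ)+1)/((N:ℝ) - D - 1) := by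
      rw [sub_nonneg, div_le_one hND1]
      linarith
    have hN0 : 0 < N := by omega
    haveI : Nonempty (Fin N) := ⟨⟨0, hN0⟩⟩
    have hinf : 1 - ((m:ℝ)+1)/((N:ℝ)-D-1)
        ≤ ⨅ r : Fin N, G ℓ (cont r) (Function.update d a (d a + 1)) := by
      apply le_ciInf
      intro r
      have hqr : (cont r).numQueries ≤ m := by
        have h0 := Finset.le_sup (f := fun y => (cont y).numQueries) (mem_univ r)
        exact h0
      have h1 := ih r (Function.update d a (d a + 1)) (D+1)
        (fun i => by
          by_cases hia : i = a
          · subst hia; rw [Function.update_self]; omega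
          · rw [Function.update_of_ne hia]; have := hd i; omega)
        (by omega)
      refine le_trans ?_ h1
      have hqr' : ((cont r).numQueries : ℝ) ≤ m := by exact_mod_cast hqr
      have hc : ((D+1 : ℕ) : ℝ) = (D:ℝ) + 1 := by push_cast; ring
      rw [hc]
      have he : (N:ℝ) - ((D:ℝ)+1) = (N:ℝ) - D - 1 := by ring
      rw [he]
      have h2 : (((cont r).numQueries:ℝ) + 1)/((N:ℝ) - (D:ℝ) - 1)
          ≤ ((m:ℝ)+1)/((N:ℝ) - (D:ℝ) - 1) := by
        gcongr
      linarith
    have hcast2 : ((1 + m : ℕ) : ℝ) = 1 + (m:ℝ) := by push_cast; ring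
    rw [hcast2]
    calc 1 - ((1:ℝ) + (m:ℝ) + 1)/((N:ℝ) - D)
        = (((N:ℝ) - D - 1)/((N:ℝ) - D)) * (1 - ((m:ℝ)+1)/((N:ℝ) - D - 1)) := by
          field_simp
          ring
      _ ≤ (((N:ℝ) - d a - 1)/((N:ℝ) - d a)) *
            (⨅ r : Fin N, G ℓ (cont r) (Function.update d a (d a + 1))) := by
          apply mul_le_mul hf hinf hlow0 hf0'


lemma arith_step (qr m NR G1 G2 : ℝ) (hq : qr ≤ m) (hN : 0 < NR) (hG : G2 ≤ G1) :
    (qr + 1)/NR + 1 - G1 ≤ (m + 1)/NR + 1 - G2 := by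
  have h1 : (qr + 1)/NR ≤ (m + 1)/NR :=
    div_le_div_of_nonneg_right (by linarith) (le_of_lt hN)
  linarith

lemma arith_fresh (P tch M sa sg NR m G' : ℝ)
    (h1 : P = sa * tch) (h2 : P = tch + NR * M)
    (hP0 : 0 ≤ P) (hM0 : 0 ≤ M)
    (hsg : 3 ≤ sg) (hsa : sg ≤ sa) (hN : 0 < NR) (hm : 0 ≤ m)
    (hG0 : 0 ≤ G') (hG1 : G' ≤ 1) :
    tch + (NR * M * ((m+1)/NR + 1 - G') + M)
      ≤ P * ((1 + m + 1)/NR + 1 - (sg-1)/sg * G') := by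
  have hsa0 : (0:ℝ) < sa := by linarith
  have hsg0 : (0:ℝ) < sg := by linarith
  have htch : tch = P / sa := by
    rw [eq_div_iff (ne_of_gt hsa0)]
    linarith
  have hM : M = (P - P/sa)/NR := by
    rw [eq_div_iff (ne_of_gt hN), ← htch]
    linarith
  have key : P * ((1 + m + 1)/NR + 1 - (sg-1)/sg * G')
      - (tch + (NR * M * ((m+1)/NR + 1 - G') + M))
      = P*(m+2)/(NR*sa) + G'*P*(sa-sg)/(sg*sa) := by
    rw [htch, hM]
    field_simp
    ring
  have hpos : (0:ℝ) ≤ P*(m+2)/(NR*sa) + G'*P*(sa-sg)/(sg*sa) := by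
    apply add_nonneg
    · apply div_nonneg _ (by positivity)
      nlinarith
    · apply div_nonneg _ (by positivity)
      apply mul_nonneg (mul_nonneg hG0 hP0)
      linarith
  linarith

set_option maxHeartbeats 2000000 in
theorem main_lemma (ℓ : Fin k) (t : KAlg k N) :
    ∀ (φ : Tbl k N) (y : Fin N) (d : Fin k → ℕ),
    (∀ p w, φ ℓ p = some w → w ≠ y) →
    (∀ i, dsz φ i ≤ d i) →
    (∀ i, d i + t.numQueries + 2 ≤ N) →
    (((SS φ y).filter (fun ω => ω.1 ℓ (t.run ω.1) = y)).card : ℝ)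
      ≤ ((SS φ y).card : ℝ) * (((t.numQueries : ℝ) + 1) / N + 1 - G ℓ t d) := by
  induction t with
  | output z =>
    intro φ y d hclean hd hn
    have hq0 : (KAlg.output z : KAlg k N).numQueries = 0 := rfl
    have hN2 : 2 ≤ N := by have := hn ℓ; omega
    have hrun : ∀ h : Fin k → Fin N → Fin N, (KAlg.output z : KAlg k N).run h = z :=
      fun _ => rfl
    -- bound G-related quantities
    have hdl : dsz φ ℓ ≤ d ℓ := hd ℓ
    have hdlN : d ℓ + 2 ≤ N := by have := hn ℓ; rw [hq0] at this; omega
    set sg : ℝ := (N : ℝ) - d ℓ with hsg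
    have hsg2 : (2:ℝ) ≤ sg := by
      have : (d ℓ : ℝ) + 2 ≤ N := by exact_mod_cast hdlN
      rw [hsg]; linarith
    have hGout : G ℓ (KAlg.output z) d = (sg - 1)/sg := by rw [G_output]
    by_cases hz : φ ℓ z = none
    · -- output point is fresh
      set P := (SS φ y).card with hP
      set touch := ((SS φ y).filter (fun ω => cpt ω.1 ω.2 (ℓ : ℕ) = z)).card with htouch
      set M := (SS (ins φ ℓ z y) y).card with hM
      have hEq1 : P = (N - dsz φ ℓ) * touch := card_SS_touch φ y ℓ z hz
      have hdszN : dsz φ ℓ ≤ N := by omega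
      have hEq2 : P = touch + N * M := by
        show (SS φ y).card = ((SS φ y).filter (fun ω => cpt ω.1 ω.2 (ℓ : ℕ) = z)).card
          + N * (SS (ins φ ℓ z y) y).card
        rw [card_SS_eq_sum φ y ℓ z hz]
        congr 1
        rw [Finset.sum_congr rfl (fun r _ => card_SS_ins φ y ℓ z hz r y)]
        simp [Finset.sum_const, mul_comm]
      set sa : ℝ := (N : ℝ) - dsz φ ℓ with hsa
      have hsasg : sg ≤ sa := by
        rw [hsa, hsg]
        have : (dsz φ ℓ : ℝ) ≤ d ℓ := by exact_mod_cast hdl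
        linarith
      have hsa0 : (0:ℝ) < sa := by linarith
      have hsg0 : (0:ℝ) < sg := by linarith
      have hN0 : (0:ℝ) < (N:ℝ) := by
        have : (2:ℝ) ≤ (N:ℝ) := by exact_mod_cast hN2
        linarith
      have hR1 : (P : ℝ) = sa * touch := by
        rw [hEq1]
        push_cast [Nat.cast_sub hdszN]
        ring
      have hR2 : (P : ℝ) = touch + N * M := by exact_mod_cast hEq2
      -- count successes
      have hcount : (((SS φ y).filter (fun ω => ω.1 ℓ ((KAlg.output z : KAlg k N).run ω.1) = y)).card : ℝ)
          ≤ (touch : ℝ) + M := by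
        have hsplit := card_filter_split φ y ℓ z hz
          (fun ω => ω.1 ℓ ((KAlg.output z : KAlg k N).run ω.1) = y)
        have hterm : ∀ r : Fin N,
            ((SS (ins φ ℓ z r) y).filter (fun ω => ω.1 ℓ ((KAlg.output z : KAlg k N).run ω.1) = y)).card
              ≤ if r = y then M else 0 := by
          intro r
          by_cases hry : r = y
          · subst hry
            simp only [if_pos rfl]
            exact Finset.card_le_card (Finset.filter_subset _ _)
          · rw [if_neg hry]
            have : (SS (ins φ ℓ z r) y).filter (fun ω => ω.1 ℓ ((KAlg.output z : KAlg k N).run ω.1) = y) = ∅ := by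
              apply Finset.filter_false_of_mem
              intro ω hω
              have hval : ω.1 ℓ z = r := (mem_SS.mp hω).1 ℓ z r (by simp [ins])
              rw [hrun, hval]
              exact hry
            rw [this]
            simp
        have hsum : ∑ r : Fin N, ((SS (ins φ ℓ z r) y).filter (fun ω => ω.1 ℓ ((KAlg.output z : KAlg k N).run ω.1) = y)).card
            ≤ M := by
          calc _ ≤ ∑ r : Fin N, if r = y then M else 0 := Finset.sum_le_sum (fun r _ => hterm r)
            _ = M := by simp
        have := le_trans hsplit (Nat.add_le_add_left hsum touch)
        exact_mod_cast this
      refine le_trans hcount ?_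
      rw [hGout, hq0]
      -- touch + M ≤ P * ((0+1)/N + 1 - (sg-1)/sg)
      have hkey : (P:ℝ) * (((0:ℕ) + 1 : ℝ)/N + 1 - (sg-1)/sg) - ((touch:ℝ) + M)
          = (P:ℝ)*(sa - sg)/(sg*sa) + (P:ℝ)/(sa*N) := by
        have hMr : (M:ℝ) = ((P:ℝ) - touch)/N := by
          rw [hR2]; field_simp; ring
        have htr : (touch:ℝ) = (P:ℝ)/sa := by
          rw [hR1]; field_simp
        rw [hMr, htr]
        field_simp
        ring
      have hpos : (0:ℝ) ≤ (P:ℝ)*(sa - sg)/(sg*sa) + (P:ℝ)/(sa*N) := by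
        apply add_nonneg
        · apply div_nonneg
          · apply mul_nonneg (Nat.cast_nonneg _)
            linarith
          · positivity
        · positivity
      push_cast at hkey ⊢
      linarith
    · -- output point is stale: no successes
      obtain ⟨w, hw⟩ : ∃ w, φ ℓ z = some w := by
        cases hzz : φ ℓ z with
        | none => exact absurd hzz hz
        | some w => exact ⟨w, rfl⟩
      have hempty : (SS φ y).filter (fun ω => ω.1 ℓ ((KAlg.output z : KAlg k N).run ω.1) = y) = ∅ := by
        apply Finset.filter_false_of_mem
        intro ω hω
        have hval : ω.1 ℓ z = w := (mem_SS.mp hω).1 ℓ z w hw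
        rw [hrun, hval]
        exact hclean z w hw
      rw [hempty]
      simp only [Finset.card_empty, Nat.cast_zero]
      apply mul_nonneg (Nat.cast_nonneg _)
      have hG1 : G ℓ (KAlg.output z) d ≤ 1 := by
        apply G_le_one (by omega) ℓ _ d
        intro i
        have := hn i
        omega
      have : (0:ℝ) ≤ (((KAlg.output z : KAlg k N).numQueries : ℝ) + 1)/N := by positivity
      linarith
  | query a x cont ih =>
    intro φ y d hclean hd hn
    set m := Finset.univ.sup (fun r => (cont r).numQueries) with hm
    have hqn : (KAlg.query a x cont).numQueries = 1 + m := rfl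
    have hNa : d a + (1 + m) + 2 ≤ N := by have := hn a; rw [hqn] at this; exact this
    have hN0 : 0 < N := by omega
    haveI : Nonempty (Fin N) := ⟨⟨0, hN0⟩⟩
    have hqr : ∀ r : Fin N, (cont r).numQueries ≤ m := by
      intro r
      have h0 := Finset.le_sup (f := fun r => (cont r).numQueries) (mem_univ r)
      exact h0
    set d' := Function.update d a (d a + 1) with hd'
    set G' := ⨅ r : Fin N, G ℓ (cont r) d' with hG'
    have hGq : G ℓ (KAlg.query a x cont) d = (((N:ℝ) - d a - 1)/((N:ℝ) - d a)) * G' := by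
      rw [G_query]
    have hupdH : ∀ (r : Fin N) (i : Fin k), d' i + (cont r).numQueries + 2 ≤ N := by
      intro r i
      rw [hd']
      by_cases hia : i = a
      · subst hia
        rw [Function.update_self]
        have := hqr r
        omega
      · rw [Function.update_of_ne hia]
        have := hn i
        rw [hqn] at this
        have := hqr r
        omega
    have hG'0 : (0:ℝ) ≤ G' := by
      rw [hG']
      apply Real.iInf_nonneg
      intro r
      exact G_nonneg ℓ (cont r) d' (fun i => by have := hupdH r i; omega)
    have hG'1 : G' ≤ 1 := by
      rw [hG']
      refine ciInf_le_of_le (Set.Finite.bddBelow (Set.finite_range _)) ⟨0, hN0⟩ ?_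
      exact G_le_one hN0 ℓ _ d' (fun i => by have := hupdH ⟨0, hN0⟩ i; omega)
    have hG'le : ∀ r : Fin N, G' ≤ G ℓ (cont r) d' := by
      intro r
      rw [hG']
      exact ciInf_le (Set.Finite.bddBelow (Set.finite_range _)) r
    have hdaN : (d a : ℝ) + (m:ℝ) + 3 ≤ (N:ℝ) := by
      have : d a + m + 3 ≤ N := by omega
      exact_mod_cast this
    have hNR0 : (0:ℝ) < (N:ℝ) := by exact_mod_cast hN0
    set sg : ℝ := (N:ℝ) - d a with hsg
    have hsg3 : (3:ℝ) ≤ sg := by rw [hsg]; linarith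
    have hsg0 : (0:ℝ) < sg := by linarith
    have hfg0 : (0:ℝ) ≤ (sg - 1)/sg := div_nonneg (by linarith) (by linarith)
    have hfg1 : (sg - 1)/sg ≤ 1 := by
      rw [div_le_one hsg0]; linarith
    have hGfold : (((N:ℝ) - d a - 1)/((N:ℝ) - d a)) = (sg - 1)/sg := by rw [hsg]
    by_cases hx : φ a x = none
    · -- fresh query
      set P := (SS φ y).card with hP
      set touch := ((SS φ y).filter (fun ω => cpt ω.1 ω.2 (a : ℕ) = x)).card with htouch
      set M := (SS (ins φ a x y) y).card with hM
      have hdsza : dsz φ a ≤ d a := hd a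
      have hdszN : dsz φ a ≤ N := by omega
      have hEq1 : P = (N - dsz φ a) * touch := card_SS_touch φ y a x hx
      have hEq2 : P = touch + N * M := by
        show (SS φ y).card = ((SS φ y).filter (fun ω => cpt ω.1 ω.2 (a : ℕ) = x)).card
          + N * (SS (ins φ a x y) y).card
        rw [card_SS_eq_sum φ y a x hx]
        congr 1
        rw [Finset.sum_congr rfl (fun r _ => card_SS_ins φ y a x hx r y)]
        simp [Finset.sum_const, mul_comm]
      set sa : ℝ := (N:ℝ) - dsz φ a with hsa
      have hsasg : sg ≤ sa := by
        rw [hsa, hsg]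
        have : (dsz φ a : ℝ) ≤ d a := by exact_mod_cast hdsza
        linarith
      have hsa0 : (0:ℝ) < sa := by linarith
      have hR1 : (P : ℝ) = sa * touch := by
        rw [hEq1]
        push_cast [Nat.cast_sub hdszN]
        ring
      have hR2 : (P : ℝ) = touch + N * M := by exact_mod_cast hEq2
      set B : ℝ := ((m:ℝ)+1)/N + 1 - G' with hB
      have hB0 : (0:ℝ) ≤ B := by
        rw [hB]
        have : (0:ℝ) ≤ ((m:ℝ)+1)/N := by positivity
        linarith
      have hterm : ∀ r : Fin N,
          (((SS (ins φ a x r) y).filter (fun ω => ω.1 ℓ ((KAlg.query a x cont).run ω.1) = y)).card : ℝ)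
            ≤ (M:ℝ) * B + (if r = y then (M:ℝ) else 0) := by
        intro r
        have hMr : (SS (ins φ a x r) y).card = M := card_SS_ins φ y a x hx r y
        have hconv : (SS (ins φ a x r) y).filter (fun ω => ω.1 ℓ ((KAlg.query a x cont).run ω.1) = y)
            = (SS (ins φ a x r) y).filter (fun ω => ω.1 ℓ ((cont r).run ω.1) = y) := by
          apply Finset.filter_congr
          intro ω hω
          have hval : ω.1 a x = r := (mem_SS.mp hω).1 a x r (by simp [ins])
          show (ω.1 ℓ ((KAlg.query a x cont).run ω.1) = y) ↔ _
          rw [show (KAlg.query a x cont).run ω.1 = (cont (ω.1 a x)).run ω.1 from rfl, hval]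
        rw [hconv]
        by_cases hbad : a = ℓ ∧ r = y
        · -- cannot recurse; use the trivial bound
          rw [if_pos hbad.2]
          have h1 : (((SS (ins φ a x r) y).filter (fun ω => ω.1 ℓ ((cont r).run ω.1) = y)).card : ℝ)
              ≤ (M : ℝ) := by
            have := Finset.card_le_card (Finset.filter_subset
              (fun ω => ω.1 ℓ ((cont r).run ω.1) = y) (SS (ins φ a x r) y))
            rw [hMr] at this
            exact_mod_cast this
          nlinarith
        · -- recurse
          have hclean' : ∀ p w, (ins φ a x r) ℓ p = some w → w ≠ y := by
            intro p w hw
            by_cases hia : ℓ = a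
            · subst hia
              simp only [ins] at hw
              split at hw
              · rename_i hc
                cases hw
                intro hwy
                exact hbad ⟨rfl, hwy⟩
              · exact hclean p w hw
            · simp only [ins] at hw
              rw [if_neg (by tauto)] at hw
              exact hclean p w hw
          have hd'' : ∀ i, dsz (ins φ a x r) i ≤ d' i := by
            intro i
            rw [hd']
            by_cases hia : i = a
            · subst hia
              rw [dsz_ins_self φ i x r hx, Function.update_self]
              have := hd i
              omega
            · rw [dsz_ins_ne φ a x r hia, Function.update_of_ne hia]
              exact hd i
          have hrec := ih r (ins φ a x r) y d' hclean' hd'' (hupdH r)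
          rw [hMr] at hrec
          refine le_trans hrec ?_
          have hstep : ((((cont r).numQueries : ℝ) + 1)/N + 1 - G ℓ (cont r) d') ≤ B := by
            rw [hB]
            exact arith_step _ _ _ _ _ (by exact_mod_cast hqr r) hNR0 (hG'le r)
          have := mul_le_mul_of_nonneg_left hstep (Nat.cast_nonneg M)
          have hif : (0:ℝ) ≤ (if r = y then (M:ℝ) else 0) := by positivity
          linarith
      have hcount : (((SS φ y).filter (fun ω => ω.1 ℓ ((KAlg.query a x cont).run ω.1) = y)).card : ℝ)
          ≤ (touch : ℝ) + ((N:ℝ) * M * B + M) := by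
        have hsplit := card_filter_split φ y a x hx
          (fun ω => ω.1 ℓ ((KAlg.query a x cont).run ω.1) = y)
        have hsplit' : (((SS φ y).filter (fun ω => ω.1 ℓ ((KAlg.query a x cont).run ω.1) = y)).card : ℝ)
            ≤ (touch : ℝ) + ∑ r : Fin N,
              (((SS (ins φ a x r) y).filter (fun ω => ω.1 ℓ ((KAlg.query a x cont).run ω.1) = y)).card : ℝ) := by
          exact_mod_cast hsplit
        refine le_trans hsplit' ?_
        have hsum : ∑ r : Fin N,
            (((SS (ins φ a x r) y).filter (fun ω => ω.1 ℓ ((KAlg.query a x cont).run ω.1) = y)).card : ℝ)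
              ≤ (N:ℝ) * M * B + M := by
          calc ∑ r : Fin N, (((SS (ins φ a x r) y).filter (fun ω => ω.1 ℓ ((KAlg.query a x cont).run ω.1) = y)).card : ℝ)
              ≤ ∑ r : Fin N, ((M:ℝ) * B + (if r = y then (M:ℝ) else 0)) :=
                Finset.sum_le_sum (fun r _ => hterm r)
            _ = (N:ℝ) * M * B + M := by
                rw [Finset.sum_add_distrib]
                simp [Finset.sum_const, Finset.card_univ]
                ring
        linarith
      refine le_trans hcount ?_
      rw [hGq, hGfold, hqn]
      have hcastq : ((1 + m : ℕ) : ℝ) = 1 + (m:ℝ) := by push_cast; ring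
      rw [hcastq]
      have harith := arith_fresh (P:ℝ) (touch:ℝ) (M:ℝ) sa sg (N:ℝ) (m:ℝ) G'
        hR1 hR2 (Nat.cast_nonneg _) (Nat.cast_nonneg _)
        (by linarith) hsasg hNR0 (Nat.cast_nonneg _) hG'0 hG'1
      rw [hB]
      linarith [harith]
    · -- stale query
      obtain ⟨r₀, hw⟩ : ∃ r₀, φ a x = some r₀ := by
        cases hzz : φ a x with
        | none => exact absurd hzz hx
        | some w => exact ⟨w, rfl⟩
      have hconv : (SS φ y).filter (fun ω => ω.1 ℓ ((KAlg.query a x cont).run ω.1) = y)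
          = (SS φ y).filter (fun ω => ω.1 ℓ ((cont r₀).run ω.1) = y) := by
        apply Finset.filter_congr
        intro ω hω
        have hval : ω.1 a x = r₀ := (mem_SS.mp hω).1 a x r₀ hw
        show (ω.1 ℓ ((KAlg.query a x cont).run ω.1) = y) ↔ _
        rw [show (KAlg.query a x cont).run ω.1 = (cont (ω.1 a x)).run ω.1 from rfl, hval]
      rw [hconv]
      have hd'' : ∀ i, dsz φ i ≤ d' i := by
        intro i
        rw [hd']
        by_cases hia : i = a
        · subst hia
          rw [Function.update_self]
          have := hd i
          omega
        · rw [Function.update_of_ne hia]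
          exact hd i
      have hrec := ih r₀ φ y d' hclean hd'' (hupdH r₀)
      refine le_trans hrec ?_
      apply mul_le_mul_of_nonneg_left ?_ (Nat.cast_nonneg _)
      rw [hGq, hGfold, hqn]
      have hcastq : ((1 + m : ℕ) : ℝ) = 1 + (m:ℝ) := by push_cast; ring
      rw [hcastq]
      have hq1 : (((cont r₀).numQueries : ℝ) + 1)/N ≤ (1 + (m:ℝ) + 1)/N := by
        have hcr : ((cont r₀).numQueries : ℝ) ≤ m := by exact_mod_cast hqr r₀
        exact div_le_div_of_nonneg_right (by linarith) (le_of_lt hNR0)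
      have hGc : (sg - 1)/sg * G' ≤ G ℓ (cont r₀) d' := by
        have h1 : (sg - 1)/sg * G' ≤ G' := by
          nlinarith
        exact le_trans h1 (hG'le r₀)
      linarith


lemma SS_bot (y : Fin N) :
    (univ : Finset ((Fin k → Fin N → Fin N) × Fin N)).filter (fun ω => cpt ω.1 ω.2 k = y)
      = SS (fun _ _ => none : Tbl k N) y := by
  ext ω
  simp [mem_SS, mem_filter]

lemma dsz_bot (i : Fin k) : dsz (fun _ _ => none : Tbl k N) i = 0 := by
  simp [dsz]

end Stmt1Aux

section
open Stmt1Aux Finset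

/-- Let `h₁,...,h_k : [N] → [N]` be independent uniformly
random functions. Any algorithm `A` with oracle access to the `h_i` making at
most `T` oracle queries in total finds, given `h_{[1,k]}(x₀)` for uniform
`x₀`, a preimage under the last function `h_k` with probability at most
`(2T+3)/N`. -/
theorem stmt1 (N k T : ℕ) (hN : 0 < N) (hk : 0 < k)
    (A : Fin N → KAlg k N) (hT : ∀ y : Fin N, (A y).numQueries ≤ T) :
    ((Finset.univ.filter (fun p : (Fin k → Fin N → Fin N) × Fin N =>
        p.1 ⟨k - 1, by omega⟩ ((A (chain p.1 p.2)).run p.1) = chain p.1 p.2)).card : ℝ) /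
      (Fintype.card ((Fin k → Fin N → Fin N) × Fin N)) ≤ (2 * T + 3) / N := by
  classical
  have hNR : (0:ℝ) < N := by exact_mod_cast hN
  have hΩpos : 0 < Fintype.card ((Fin k → Fin N → Fin N) × Fin N) :=
    Fintype.card_pos_iff.mpr ⟨(fun _ _ => ⟨0, hN⟩, ⟨0, hN⟩)⟩
  have hΩR : (0:ℝ) < (Fintype.card ((Fin k → Fin N → Fin N) × Fin N) : ℝ) := by
    exact_mod_cast hΩpos
  by_cases hbig : T + 2 ≤ N
  · -- main case
    set ℓ : Fin k := ⟨k - 1, by omega⟩ with hℓ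
    set φ₀ : Tbl k N := (fun _ _ => none) with hφ₀
    set EV : ((Fin k → Fin N → Fin N) × Fin N) → Prop :=
      (fun p => p.1 ℓ ((A (chain p.1 p.2)).run p.1) = chain p.1 p.2) with hEV
    have hfib := Finset.card_eq_sum_card_fiberwise
      (s := (univ : Finset ((Fin k → Fin N → Fin N) × Fin N)).filter EV)
      (f := fun ω => cpt ω.1 ω.2 k) (t := univ) (fun _ _ => mem_univ _)
    have hfib2 := Finset.card_eq_sum_card_fiberwise
      (s := (univ : Finset ((Fin k → Fin N → Fin N) × Fin N)))
      (f := fun ω => cpt ω.1 ω.2 k) (t := univ) (fun _ _ => mem_univ _)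
    have hEVfib : ∀ y : Fin N,
        ((univ.filter EV).filter (fun ω => cpt ω.1 ω.2 k = y))
          = (SS φ₀ y).filter (fun ω => ω.1 ℓ ((A y).run ω.1) = y) := by
      intro y
      ext ω
      simp only [mem_filter, mem_univ, true_and, mem_SS, hEV]
      constructor
      · rintro ⟨hEVω, hcpt⟩
        refine ⟨⟨by simp [hφ₀], by simp [hφ₀], hcpt⟩, ?_⟩
        rw [chain_eq_cpt, hcpt] at hEVω
        exact hEVω
      · rintro ⟨⟨-, -, hcpt⟩, hev⟩
        refine ⟨?_, hcpt⟩
        rw [chain_eq_cpt, hcpt]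
        exact hev
    have hperY : ∀ y : Fin N,
        (((SS φ₀ y).filter (fun ω => ω.1 ℓ ((A y).run ω.1) = y)).card : ℝ)
          ≤ ((SS φ₀ y).card : ℝ) * ((2*(T:ℝ)+2)/N) := by
      intro y
      have hq := hT y
      have hmain := main_lemma ℓ (A y) φ₀ y (fun _ => 0)
        (by intro p w hw; simp [hφ₀] at hw)
        (by intro i; simp [dsz_bot, hφ₀])
        (by intro i; simp; omega)
      refine le_trans hmain ?_
      apply mul_le_mul_of_nonneg_left ?_ (Nat.cast_nonneg _)
      have hGlow := G_lower ℓ (A y) (fun _ => 0) 0 (fun _ => le_refl 0) (by omega)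
      have hcast0 : ((N:ℝ) - (0:ℕ)) = (N:ℝ) := by simp
      rw [hcast0] at hGlow
      have hq' : ((A y).numQueries : ℝ) ≤ T := by exact_mod_cast hq
      have h1 : (((A y).numQueries : ℝ) + 1)/N ≤ ((T:ℝ)+1)/N :=
        div_le_div_of_nonneg_right (by linarith) (le_of_lt hNR)
      have h2 : 1 - G ℓ (A y) (fun _ => 0) ≤ ((T:ℝ)+1)/N := by
        have := div_le_div_of_nonneg_right
          (by linarith : ((A y).numQueries : ℝ) + 1 ≤ (T:ℝ)+1) (le_of_lt hNR)
        linarith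
      have heq : (2*(T:ℝ)+2)/N = ((T:ℝ)+1)/N + ((T:ℝ)+1)/N := by
        field_simp
        ring
      rw [heq]
      linarith
    have hsum : ((univ.filter EV).card : ℝ)
        ≤ ((univ : Finset ((Fin k → Fin N → Fin N) × Fin N)).card : ℝ) * ((2*(T:ℝ)+2)/N) := by
      rw [hfib, hfib2]
      push_cast
      rw [Finset.sum_mul]
      apply Finset.sum_le_sum
      intro y _
      have e1 : (univ.filter EV).filter (fun ω => cpt ω.1 ω.2 k = y)
          = (SS φ₀ y).filter (fun ω => ω.1 ℓ ((A y).run ω.1) = y) := hEVfib y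
      have e2 : (univ : Finset ((Fin k → Fin N → Fin N) × Fin N)).filter
          (fun ω => cpt ω.1 ω.2 k = y) = SS φ₀ y := SS_bot y
      rw [e1, e2]
      exact hperY y
    have hΩeq : ((univ : Finset ((Fin k → Fin N → Fin N) × Fin N)).card : ℝ)
        = (Fintype.card ((Fin k → Fin N → Fin N) × Fin N) : ℝ) := by
      rw [Finset.card_univ]
    rw [div_le_div_iff₀ hΩR hNR]
    have h3 : (2*(T:ℝ)+2)/N * (Fintype.card ((Fin k → Fin N → Fin N) × Fin N) : ℝ) * N
        = (2*(T:ℝ)+2) * (Fintype.card ((Fin k → Fin N → Fin N) × Fin N) : ℝ) := by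
      field_simp
    calc ((univ.filter EV).card : ℝ) * N
        ≤ ((univ : Finset ((Fin k → Fin N → Fin N) × Fin N)).card : ℝ) * ((2*(T:ℝ)+2)/N) * N := by
          apply mul_le_mul_of_nonneg_right hsum (le_of_lt hNR)
      _ = (2*(T:ℝ)+2) * (Fintype.card ((Fin k → Fin N → Fin N) × Fin N) : ℝ) := by
          rw [hΩeq]
          field_simp
      _ ≤ (2*(T:ℝ)+3) * (Fintype.card ((Fin k → Fin N → Fin N) × Fin N) : ℝ) := by
          apply mul_le_mul_of_nonneg_right _ (le_of_lt hΩR)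
          linarith
      _ = (2*↑T+3) * (Fintype.card ((Fin k → Fin N → Fin N) × Fin N) : ℝ) := by norm_num
  · -- trivial case : N ≤ T + 1 so (2T+3)/N ≥ 1
    have hcard : ((Finset.univ.filter (fun p : (Fin k → Fin N → Fin N) × Fin N =>
        p.1 ⟨k - 1, by omega⟩ ((A (chain p.1 p.2)).run p.1) = chain p.1 p.2)).card : ℝ)
        ≤ (Fintype.card ((Fin k → Fin N → Fin N) × Fin N) : ℝ) := by
      have := Finset.card_filter_le (univ : Finset ((Fin k → Fin N → Fin N) × Fin N))
        (fun p => p.1 ⟨k - 1, by omega⟩ ((A (chain p.1 p.2)).run p.1) = chain p.1 p.2)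
      rw [Finset.card_univ] at this
      exact_mod_cast this
    have h1 : ((Finset.univ.filter (fun p : (Fin k → Fin N → Fin N) × Fin N =>
        p.1 ⟨k - 1, by omega⟩ ((A (chain p.1 p.2)).run p.1) = chain p.1 p.2)).card : ℝ) /
        (Fintype.card ((Fin k → Fin N → Fin N) × Fin N)) ≤ 1 := by
      rw [div_le_one hΩR]
      exact hcard
    have h2 : (1:ℝ) ≤ (2*↑T+3)/N := by
      rw [le_div_iff₀ hNR]
      have : N ≤ 2*T+3 := by omega
      have : (N:ℝ) ≤ 2*(T:ℝ)+3 := by exact_mod_cast this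
      linarith
    linarith


end
end

section
/- Let h₁,...,h_k : [N] → [N] be independent uniformly random functions. Any algorithm A with oracle access to the h_i making at most T total oracle queries satisfies: the probability over the functions and over uniform x₀ ∈ [N] that A, on input y = h_{[1,k]}(x₀), outputs z with h_{[1,k]}(z) = y is at most (2T+2k+1)/N. -/
namespace Stmt2Aux

open Finset

variable {k N : ℕ}

/-- Sequential composition of oracle algorithms. -/
def abind : KAlg k N → (Fin N → KAlg k N) → KAlg k N
  | .output z, f => f z
  | .query i x cont, f => .query i x (fun a => abind (cont a) f)

lemma run_abind (B : KAlg k N) (f : Fin N → KAlg k N) (g : Fin k → Fin N → Fin N) :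
    (abind B f).run g = (f (B.run g)).run g := by
  induction B with
  | output z => rfl
  | query i x cont ih => exact ih (g i x)

lemma numQueries_abind_le (B : KAlg k N) (f : Fin N → KAlg k N) (Q : ℕ)
    (hf : ∀ z, (f z).numQueries ≤ Q) :
    (abind B f).numQueries ≤ B.numQueries + Q := by
  induction B with
  | output z => simpa [abind, KAlg.numQueries] using hf z
  | query i x cont ih =>
    show 1 + Finset.univ.sup (fun y => (abind (cont y) f).numQueries) ≤
      (1 + Finset.univ.sup fun y => (cont y).numQueries) + Q
    have : Finset.univ.sup (fun y => (abind (cont y) f).numQueries) ≤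
        (Finset.univ.sup fun y => (cont y).numQueries) + Q := by
      apply Finset.sup_le
      intro y _
      exact le_trans (ih y) (Nat.add_le_add_right
        (Finset.le_sup (f := fun y => (cont y).numQueries) (Finset.mem_univ y)) Q)
    omega

/-- The list of (oracle index, input) queries made during a run. -/
def qList : KAlg k N → (Fin k → Fin N → Fin N) → List (Fin k × Fin N)
  | .output _, _ => []
  | .query i x cont, g => (i, x) :: qList (cont (g i x)) g

lemma qList_length_le (B : KAlg k N) (g : Fin k → Fin N → Fin N) :
    (qList B g).length ≤ B.numQueries := by
  induction B with
  | output z => simp [qList, KAlg.numQueries]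
  | query i x cont ih =>
    show (qList (cont (g i x)) g).length + 1 ≤ 1 + Finset.univ.sup fun y => (cont y).numQueries
    have := le_trans (ih (g i x)) (Finset.le_sup (f := fun y => (cont y).numQueries)
      (Finset.mem_univ (g i x)))
    omega

lemma run_congr (B : KAlg k N) (g h : Fin k → Fin N → Fin N)
    (H : ∀ p ∈ qList B g, h p.1 p.2 = g p.1 p.2) : B.run h = B.run g := by
  induction B with
  | output z => rfl
  | query i x cont ih =>
    have hx : h i x = g i x := H (i, x) (List.mem_cons_self)
    show (cont (h i x)).run h = (cont (g i x)).run g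
    rw [hx]
    exact ih (g i x) (fun p hp => H p (List.mem_cons_of_mem _ hp))

/-- Algorithm which applies the given oracle indices in order. -/
def algFold : List (Fin k) → Fin N → KAlg k N
  | [], z => .output z
  | i :: l, z => .query i z (fun a => algFold l a)

lemma run_algFold (l : List (Fin k)) (z : Fin N) (g : Fin k → Fin N → Fin N) :
    (algFold l z).run g = l.foldl (fun y i => g i y) z := by
  induction l generalizing z with
  | nil => rfl
  | cons i l ih => exact ih (g i z)

lemma numQueries_algFold (l : List (Fin k)) (z : Fin N) :
    (algFold l z).numQueries ≤ l.length := by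
  induction l generalizing z with
  | nil => exact Nat.le_refl 0
  | cons i l ih =>
    show 1 + Finset.univ.sup (fun a => (algFold l a).numQueries) ≤ l.length + 1
    have : Finset.univ.sup (fun a : Fin N => (algFold l a).numQueries) ≤ l.length :=
      Finset.sup_le fun a _ => ih a
    omega

/-- Partial chain: apply the first `j` oracles. -/
def pch (g : Fin k → Fin N → Fin N) : ℕ → Fin N → Fin N
  | 0, x => x
  | j+1, x => if hj : j < k then g ⟨j, hj⟩ (pch g j x) else pch g j x

lemma pch_succ (g : Fin k → Fin N → Fin N) (j : ℕ) (hj : j < k) (x : Fin N) :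
    pch g (j+1) x = g ⟨j, hj⟩ (pch g j x) := by
  simp [pch, hj]

lemma pch_eq_foldl (g : Fin k → Fin N → Fin N) (x : Fin N) :
    ∀ j, j ≤ k → pch g j x = ((List.finRange k).take j).foldl (fun y i => g i y) x := by
  intro j
  induction j with
  | zero => intro _; simp [pch]
  | succ j ih =>
    intro hj
    have hjk : j < k := hj
    have htake : (List.finRange k).take (j+1) =
        (List.finRange k).take j ++ [⟨j, hjk⟩] := by
      rw [List.take_succ]
      congr 1
      rw [List.getElem?_eq_getElem (by simpa using hjk)]
      simp [List.getElem_finRange, Fin.cast]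
    rw [pch_succ g j hjk, htake, List.foldl_append, ih (le_of_lt hjk)]
    rfl

lemma chain_eq_pch (g : Fin k → Fin N → Fin N) (x : Fin N) : chain g x = pch g k x := by
  rw [pch_eq_foldl g x k le_rfl, chain, List.take_of_length_le (by simp)]

lemma pch_top (hk : 0 < k) (g : Fin k → Fin N → Fin N) (x : Fin N) :
    pch g k x = g ⟨k-1, by omega⟩ (pch g (k-1) x) := by
  obtain ⟨m, rfl⟩ := Nat.exists_eq_succ_of_ne_zero (Nat.pos_iff_ne_zero.mp hk)
  exact pch_succ g m (by omega) x

/-- Override the oracle along the chain vector `c`. -/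
def ovr (g : Fin k → Fin N → Fin N) (c : Fin (k+1) → Fin N) : Fin k → Fin N → Fin N :=
  fun i x => if x = c i.castSucc then c i.succ else g i x

lemma pch_ovr (g : Fin k → Fin N → Fin N) (c : Fin (k+1) → Fin N) :
    ∀ j, (hj : j ≤ k) → pch (ovr g c) j (c 0) = c ⟨j, Nat.lt_succ_of_le hj⟩ := by
  intro j
  induction j with
  | zero =>
    intro _
    congr 1
  | succ j ih =>
    intro hj
    have hjk : j < k := hj
    rw [pch_succ _ j hjk, ih (le_of_lt hjk)]
    simp [ovr, Fin.castSucc_mk, Fin.succ_mk]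

/-- The chain vector of `h` started at `x₀`. -/
def chainVec (h : Fin k → Fin N → Fin N) (x₀ : Fin N) : Fin (k+1) → Fin N :=
  fun j => pch h j.val x₀

lemma chainVec_succ (h : Fin k → Fin N → Fin N) (x₀ : Fin N) (i : Fin k) :
    chainVec h x₀ i.succ = h i (chainVec h x₀ i.castSucc) := by
  show pch h (i.val + 1) x₀ = _
  rw [pch_succ h i.val i.isLt]
  rfl

/-- The reparametrization equivalence. -/
def Ψ : ((Fin k → Fin N → Fin N) × (Fin (k+1) → Fin N)) ≃
    (((Fin k → Fin N → Fin N) × Fin N) × (Fin k → Fin N)) where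
  toFun q := ((ovr q.1 q.2, q.2 0), fun i => q.1 i (q.2 i.castSucc))
  invFun r :=
    ((fun i x => if x = chainVec r.1.1 r.1.2 i.castSucc then r.2 i else r.1.1 i x),
      chainVec r.1.1 r.1.2)
  left_inv := by
    rintro ⟨g, c⟩
    have hcv : chainVec (ovr g c) (c 0) = c := by
      funext j
      have := pch_ovr g c j.val (Nat.lt_succ_iff.mp j.isLt)
      rw [chainVec, this]
    simp only [hcv]
    refine Prod.ext ?_ rfl
    funext i x
    by_cases hx : x = c i.castSucc
    · simp [hx, ovr]
    · simp [hx, ovr]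
  right_inv := by
    rintro ⟨⟨h, x₀⟩, u⟩
    have hovr : ovr (fun i x => if x = chainVec h x₀ i.castSucc then u i else h i x)
        (chainVec h x₀) = h := by
      funext i x
      by_cases hx : x = chainVec h x₀ i.castSucc
      · rw [ovr]
        simp only [if_pos hx]
        rw [hx]
        exact chainVec_succ h x₀ i
      · rw [ovr]
        simp only [if_neg hx]
    refine Prod.ext (Prod.ext ?_ ?_) ?_
    · exact hovr
    · rfl
    · funext i
      simp

/-- Transport filter-cardinality along an equivalence. -/
lemma card_filter_equiv {α β : Type*} [Fintype α] [Fintype β]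
    (e : α ≃ β) (P : β → Prop) [DecidablePred P] :
    (univ.filter fun a => P (e a)).card = (univ.filter P).card := by
  apply Finset.card_bij (fun a _ => e a)
  · intro a ha
    simp only [mem_filter, mem_univ, true_and] at ha ⊢
    exact ha
  · intro a _ b _ hab
    exact e.injective hab
  · intro b hb
    refine ⟨e.symm b, ?_, by simp⟩
    simp only [mem_filter, mem_univ, true_and] at hb ⊢
    simpa using hb

/-- Count a filter over a product by summing over the first coordinate. -/
lemma card_filter_prod {α β : Type*} [Fintype α] [Fintype β] [DecidableEq α]
    (P : α × β → Prop) [DecidablePred P] :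
    (univ.filter P).card = ∑ a : α, (univ.filter fun b => P (a, b)).card := by
  rw [Finset.card_eq_sum_card_fiberwise (f := Prod.fst) (t := univ) (fun x _ => mem_univ _)]
  refine Finset.sum_congr rfl fun a _ => ?_
  apply Finset.card_bij (fun p _ => p.2)
  · intro p hp
    simp only [mem_filter, mem_univ, true_and] at hp ⊢
    obtain ⟨h1, h2⟩ := hp
    rwa [show p = (a, p.2) from Prod.ext h2 rfl] at h1
  · intro p hp q hq hpq
    simp only [mem_filter, mem_univ, true_and] at hp hq
    exact Prod.ext (hp.2.trans hq.2.symm) hpq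
  · intro b hb
    simp only [mem_filter, mem_univ, true_and] at hb ⊢
    exact ⟨(a, b), ⟨hb, rfl⟩, rfl⟩

/-- Count a filter over a product by summing over the second coordinate. -/
lemma card_filter_prod' {α β : Type*} [Fintype α] [Fintype β] [DecidableEq β]
    (P : α × β → Prop) [DecidablePred P] :
    (univ.filter P).card = ∑ b : β, (univ.filter fun a => P (a, b)).card := by
  rw [Finset.card_eq_sum_card_fiberwise (f := Prod.snd) (t := univ) (fun x _ => mem_univ _)]
  refine Finset.sum_congr rfl fun b _ => ?_
  apply Finset.card_bij (fun p _ => p.1)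
  · intro p hp
    simp only [mem_filter, mem_univ, true_and] at hp ⊢
    obtain ⟨h1, h2⟩ := hp
    rwa [show p = (p.1, b) from Prod.ext rfl h2] at h1
  · intro p hp q hq hpq
    simp only [mem_filter, mem_univ, true_and] at hp hq
    exact Prod.ext hpq (hp.2.trans hq.2.symm)
  · intro a ha
    simp only [mem_filter, mem_univ, true_and] at ha ⊢
    exact ⟨(a, b), ⟨ha, rfl⟩, rfl⟩

/-- Counting with one prescribed coordinate. -/
lemma card_coord_fiber {ι β : Type*} [Fintype ι] [DecidableEq ι] [Fintype β] [DecidableEq β]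
    (j : ι) (a : β) :
    (univ.filter fun c : ι → β => c j = a).card * Fintype.card β = Fintype.card (ι → β) := by
  rw [← Finset.card_univ (α := β), ← Finset.card_product, ← Finset.card_univ (α := ι → β)]
  apply Finset.card_bij (fun (p : (ι → β) × β) _ => Function.update p.1 j p.2)
  · intro p _; exact mem_univ _
  · rintro ⟨c₁, b₁⟩ hp ⟨c₂, b₂⟩ hq h
    simp only [mem_product, mem_filter, mem_univ, true_and, and_true] at hp hq
    have hb : b₁ = b₂ := by
      have := congrFun h j
      simpa using this
    subst hb
    have hc : c₁ = c₂ := by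
      funext w
      by_cases hw : w = j
      · subst hw; rw [hp, hq]
      · have := congrFun h w
        simpa [Function.update_of_ne hw] using this
    rw [hc]
  · intro c _
    refine ⟨(Function.update c j a, c j), ?_, ?_⟩
    · simp [mem_product]
    · funext w
      by_cases hw : w = j
      · subst hw; simp
      · simp [Function.update_of_ne hw]

/-- Counting with two prescribed coordinates. -/
lemma card_coord_fiber2 {ι β : Type*} [Fintype ι] [DecidableEq ι] [Fintype β] [DecidableEq β]
    (j₁ j₂ : ι) (hne : j₁ ≠ j₂) (a y : β) :
    (univ.filter fun c : ι → β => c j₁ = a ∧ c j₂ = y).card *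
      (Fintype.card β * Fintype.card β) = Fintype.card (ι → β) := by
  rw [show Fintype.card β * Fintype.card β = Fintype.card (β × β) from
    (Fintype.card_prod β β).symm]
  rw [← Finset.card_univ (α := β × β), ← Finset.card_product, ← Finset.card_univ (α := ι → β)]
  apply Finset.card_bij
    (fun (p : (ι → β) × (β × β)) _ => Function.update (Function.update p.1 j₁ p.2.1) j₂ p.2.2)
  · intro p _; exact mem_univ _
  · rintro ⟨c₁, ⟨b₁, d₁⟩⟩ hp ⟨c₂, ⟨b₂, d₂⟩⟩ hq h
    simp only [mem_product, mem_filter, mem_univ, true_and, and_true] at hp hq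
    have hd : d₁ = d₂ := by
      have := congrFun h j₂
      simpa using this
    have hb : b₁ = b₂ := by
      have := congrFun h j₁
      simpa [Function.update_of_ne hne] using this
    subst hd; subst hb
    have hc : c₁ = c₂ := by
      funext w
      by_cases hw2 : w = j₂
      · subst hw2; rw [hp.2, hq.2]
      · by_cases hw1 : w = j₁
        · subst hw1; rw [hp.1, hq.1]
        · have := congrFun h w
          simpa [Function.update_of_ne hw1, Function.update_of_ne hw2] using this
    rw [hc]
  · intro c _
    refine ⟨(Function.update (Function.update c j₁ a) j₂ y, (c j₁, c j₂)), ?_, ?_⟩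
    · simp only [mem_product, mem_filter, mem_univ, true_and, and_true]
      constructor
      · rw [Function.update_of_ne hne, Function.update_self]
      · rw [Function.update_self]
    · funext w
      by_cases hw2 : w = j₂
      · subst hw2; simp [Function.update_of_ne hne]
      · by_cases hw1 : w = j₁
        · subst hw1
          simp [Function.update_of_ne hne, Function.update_of_ne hw2]
        · simp [Function.update_of_ne hw1, Function.update_of_ne hw2]

/-- Oracles consistent with a partial assignment. -/
def Consis (σ : Fin k × Fin N → Option (Fin N)) : Finset (Fin k → Fin N → Fin N) :=
  univ.filter fun g => ∀ p : Fin k × Fin N, ∀ a : Fin N, σ p = some a → g p.1 p.2 = a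

lemma mem_Consis {σ : Fin k × Fin N → Option (Fin N)} {g : Fin k → Fin N → Fin N} :
    g ∈ Consis σ ↔ ∀ p : Fin k × Fin N, ∀ a : Fin N, σ p = some a → g p.1 p.2 = a := by
  simp [Consis]

/-- Update the oracle `g` at a single point. -/
def updG (g : Fin k → Fin N → Fin N) (p : Fin k × Fin N) (v : Fin N) :
    Fin k → Fin N → Fin N :=
  Function.update g p.1 (Function.update (g p.1) p.2 v)

lemma updG_apply_same (g : Fin k → Fin N → Fin N) (p : Fin k × Fin N) (v : Fin N) :
    updG g p v p.1 p.2 = v := by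
  simp [updG]

lemma updG_apply_ne (g : Fin k → Fin N → Fin N) (p q : Fin k × Fin N) (v : Fin N)
    (hq : q ≠ p) : updG g p v q.1 q.2 = g q.1 q.2 := by
  by_cases h1 : q.1 = p.1
  · have h2 : q.2 ≠ p.2 := fun h2 => hq (Prod.ext h1 h2)
    rw [updG, h1, Function.update_self, Function.update_of_ne h2]
  · rw [updG, Function.update_of_ne h1]

lemma updG_updG (g : Fin k → Fin N → Fin N) (p : Fin k × Fin N) (v w : Fin N) :
    updG (updG g p v) p w = updG g p w := by
  funext i x
  by_cases h : (i, x) = p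
  · rw [show i = p.1 from congrArg Prod.fst h, show x = p.2 from congrArg Prod.snd h]
    rw [updG_apply_same, updG_apply_same]
  · rw [show updG (updG g p v) p w i x = updG (updG g p v) p w (i,x).1 (i,x).2 from rfl,
      updG_apply_ne _ p (i,x) w h, updG_apply_ne _ p (i,x) v h,
      show updG g p w i x = updG g p w (i,x).1 (i,x).2 from rfl,
      updG_apply_ne _ p (i,x) w h]

lemma updG_self (g : Fin k → Fin N → Fin N) (p : Fin k × Fin N) :
    updG g p (g p.1 p.2) = g := by
  funext i x
  by_cases h : (i, x) = p
  · rw [show i = p.1 from congrArg Prod.fst h, show x = p.2 from congrArg Prod.snd h,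
      updG_apply_same]
  · rw [show updG g p (g p.1 p.2) i x = updG g p (g p.1 p.2) (i,x).1 (i,x).2 from rfl,
      updG_apply_ne _ p (i,x) _ h]

/-- Filtering consistent oracles on a fresh point gives consistency with the update. -/
lemma filter_Consis_eq (σ : Fin k × Fin N → Option (Fin N)) (p : Fin k × Fin N)
    (hp : σ p = none) (a : Fin N) :
    (Consis σ).filter (fun g => g p.1 p.2 = a) = Consis (Function.update σ p (some a)) := by
  ext g
  simp only [mem_filter, mem_Consis]
  constructor
  · rintro ⟨hg, hga⟩ q b hq
    by_cases hqp : q = p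
    · subst hqp
      rw [Function.update_self] at hq
      rw [← Option.some_injective _ hq]
      exact hga
    · rw [Function.update_of_ne hqp] at hq
      exact hg q b hq
  · intro hg
    constructor
    · intro q b hq
      by_cases hqp : q = p
      · subst hqp; rw [hp] at hq; exact absurd hq (by simp)
      · exact hg q b (by rw [Function.update_of_ne hqp]; exact hq)
    · exact hg p a (by rw [Function.update_self])

/-- Partition of consistent oracles over the value at a fresh point. -/
lemma card_Consis_partition (σ : Fin k × Fin N → Option (Fin N)) (p : Fin k × Fin N)
    (hp : σ p = none) :
    (Consis σ).card = ∑ a : Fin N, (Consis (Function.update σ p (some a))).card := by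
  rw [Finset.card_eq_sum_card_fiberwise (f := fun g => g p.1 p.2) (t := univ)
    (fun x _ => mem_univ _)]
  exact Finset.sum_congr rfl fun a _ => by rw [filter_Consis_eq σ p hp a]

/-- All cells of the partition have the same size. -/
lemma card_Consis_upd_eq (σ : Fin k × Fin N → Option (Fin N)) (p : Fin k × Fin N)
    (a b : Fin N) :
    (Consis (Function.update σ p (some a))).card
      = (Consis (Function.update σ p (some b))).card := by
  have key : ∀ (a b : Fin N) (g : Fin k → Fin N → Fin N),
      g ∈ Consis (Function.update σ p (some a)) →
      updG g p b ∈ Consis (Function.update σ p (some b)) := by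
    intro a b g hg
    rw [mem_Consis] at hg ⊢
    intro q c hq
    by_cases hqp : q = p
    · subst hqp
      rw [Function.update_self] at hq
      rw [updG_apply_same]
      exact Option.some_injective _ hq
    · rw [Function.update_of_ne hqp] at hq
      rw [updG_apply_ne g p q b hqp]
      exact hg q c (by rw [Function.update_of_ne hqp]; exact hq)
  have hval : ∀ (a : Fin N) (g : Fin k → Fin N → Fin N),
      g ∈ Consis (Function.update σ p (some a)) → g p.1 p.2 = a := by
    intro a g hg
    exact mem_Consis.mp hg p a (by rw [Function.update_self])
  apply Finset.card_bij (fun g _ => updG g p b)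
  · intro g hg; exact key a b g hg
  · intro g hg g' hg' h
    have h1 : updG g p a = g := by rw [← hval a g hg]; exact updG_self g p
    have h2 : updG g' p a = g' := by rw [← hval a g' hg']; exact updG_self g' p
    have : updG (updG g p b) p a = updG (updG g' p b) p a := by rw [h]
    rwa [updG_updG, updG_updG, h1, h2] at this
  · intro g hg
    refine ⟨updG g p a, key b a g hg, ?_⟩
    rw [updG_updG, ← hval b g hg, updG_self]

lemma card_Consis_upd (σ : Fin k × Fin N → Option (Fin N)) (p : Fin k × Fin N)
    (hp : σ p = none) (a : Fin N) :
    (Consis σ).card = N * (Consis (Function.update σ p (some a))).card := by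
  rw [card_Consis_partition σ p hp,
    Finset.sum_congr rfl fun b _ => card_Consis_upd_eq σ p b a]
  simp [Finset.sum_const, mul_comm]

/-- **Core lemma**: preimage-finding probability for a fresh target. -/
lemma core (i : Fin k) (t : Fin N) (B : KAlg k N) :
    ∀ (σ : Fin k × Fin N → Option (Fin N)), (∀ x : Fin N, σ (i, x) ≠ some t) →
      N * ((Consis σ).filter fun g => g i (B.run g) = t).card
        ≤ (B.numQueries + 1) * (Consis σ).card := by
  induction B with
  | output z =>
    intro σ hσ
    show N * ((Consis σ).filter fun g => g i z = t).card ≤ (0 + 1) * (Consis σ).card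
    cases hz : σ (i, z) with
    | some a =>
      have : (Consis σ).filter (fun g => g i z = t) = ∅ := by
        rw [Finset.filter_eq_empty_iff]
        intro g hg hit
        have := mem_Consis.mp hg (i, z) a hz
        rw [hit] at this
        exact hσ z (by rw [hz, this])
      simp [this]
    | none =>
      have := filter_Consis_eq σ (i, z) hz t
      rw [show ((Consis σ).filter fun g => g i z = t)
          = (Consis σ).filter (fun g => g (i,z).1 (i,z).2 = t) from rfl, this,
        ← card_Consis_upd σ (i, z) hz t]
      omega
  | query j x cont ih =>
    intro σ hσ
    show N * ((Consis σ).filter fun g => g i ((cont (g j x)).run g) = t).card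
      ≤ ((1 + Finset.univ.sup fun y => (cont y).numQueries) + 1) * (Consis σ).card
    obtain ⟨s, hs⟩ : ∃ s, (Finset.univ.sup fun y => (cont y).numQueries) = s := ⟨_, rfl⟩
    rw [hs]
    cases hp : σ (j, x) with
    | some a =>
      have heq : (Consis σ).filter (fun g => g i ((cont (g j x)).run g) = t)
          = (Consis σ).filter (fun g => g i ((cont a).run g) = t) := by
        apply Finset.filter_congr
        intro g hg
        rw [mem_Consis.mp hg (j, x) a hp]
      rw [heq]
      calc N * ((Consis σ).filter fun g => g i ((cont a).run g) = t).card
          ≤ ((cont a).numQueries + 1) * (Consis σ).card := ih a σ hσ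
        _ ≤ ((1 + s) + 1) * (Consis σ).card := by
            have : (cont a).numQueries ≤ s := le_of_le_of_eq
              (Finset.le_sup (f := fun y => (cont y).numQueries) (mem_univ a)) hs
            exact Nat.mul_le_mul_right _ (by omega)
    | none =>
      rw [Finset.card_eq_sum_card_fiberwise
        (s := (Consis σ).filter fun g => g i ((cont (g j x)).run g) = t)
        (f := fun g => g j x) (t := univ) (fun x _ => mem_univ _)]
      simp only [Finset.filter_filter]
      have hterm : ∀ a : Fin N,
          ((Consis σ).filter fun g => g i ((cont (g j x)).run g) = t ∧ g j x = a)
          = (Consis (Function.update σ (j, x) (some a))).filter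
              fun g => g i ((cont a).run g) = t := by
        intro a
        rw [← filter_Consis_eq σ (j, x) hp a, Finset.filter_filter]
        apply Finset.filter_congr
        intro g _
        show (g i ((cont (g j x)).run g) = t ∧ g j x = a)
          ↔ (g j x = a ∧ g i ((cont a).run g) = t)
        constructor
        · rintro ⟨h1, h2⟩; exact ⟨h2, by rwa [h2] at h1⟩
        · rintro ⟨h1, h2⟩; exact ⟨by rwa [h1], h1⟩
      rw [Finset.sum_congr rfl fun a _ => congrArg Finset.card (hterm a)]
      rw [Finset.mul_sum]
      have hbound : ∀ a : Fin N,
          N * ((Consis (Function.update σ (j, x) (some a))).filter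
              fun g => g i ((cont a).run g) = t).card
          ≤ (s + 1) * (Consis (Function.update σ (j, x) (some a))).card
            + (if j = i ∧ a = t then N * (Consis (Function.update σ (j, x) (some a))).card
                else 0) := by
        intro a
        by_cases hbad : j = i ∧ a = t
        · rw [if_pos hbad]
          have : ((Consis (Function.update σ (j, x) (some a))).filter
              fun g => g i ((cont a).run g) = t).card
              ≤ (Consis (Function.update σ (j, x) (some a))).card :=
            Finset.card_le_card (Finset.filter_subset _ _)
          exact le_trans (Nat.mul_le_mul_left N this) (Nat.le_add_left _ _)
        · have hσ' : ∀ x' : Fin N, Function.update σ (j, x) (some a) (i, x') ≠ some t := by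
            intro x' hcon
            by_cases hq : (i, x') = (j, x)
            · rw [hq, Function.update_self] at hcon
              have ha : a = t := Option.some_injective _ hcon
              have hji : j = i := (congrArg Prod.fst hq).symm
              exact hbad ⟨hji, ha⟩
            · rw [Function.update_of_ne hq] at hcon
              exact hσ x' hcon
          have := ih a (Function.update σ (j, x) (some a)) hσ'
          have hle : ((cont a).numQueries + 1) ≤ s + 1 := by
            have : (cont a).numQueries ≤ s := le_of_le_of_eq
              (Finset.le_sup (f := fun y => (cont y).numQueries) (mem_univ a)) hs
            exact Nat.add_le_add_right this 1
          calc N * ((Consis (Function.update σ (j, x) (some a))).filter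
                fun g => g i ((cont a).run g) = t).card
              ≤ ((cont a).numQueries + 1) *
                (Consis (Function.update σ (j, x) (some a))).card := this
            _ ≤ (s + 1) * (Consis (Function.update σ (j, x) (some a))).card :=
              Nat.mul_le_mul_right _ hle
            _ ≤ _ := Nat.le_add_right _ _
      calc ∑ a : Fin N, N * ((Consis (Function.update σ (j, x) (some a))).filter
              fun g => g i ((cont a).run g) = t).card
          ≤ ∑ a : Fin N, ((s + 1) * (Consis (Function.update σ (j, x) (some a))).card
            + (if j = i ∧ a = t then N * (Consis (Function.update σ (j, x) (some a))).card
                else 0)) := Finset.sum_le_sum fun a _ => hbound a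
        _ = (s + 1) * (Consis σ).card
            + ∑ a : Fin N, (if j = i ∧ a = t then
                N * (Consis (Function.update σ (j, x) (some a))).card else 0) := by
            rw [Finset.sum_add_distrib, ← Finset.mul_sum, ← card_Consis_partition σ (j, x) hp]
        _ ≤ (s + 1) * (Consis σ).card + (Consis σ).card := by
            have hsum : ∑ a : Fin N, (if j = i ∧ a = t then
                N * (Consis (Function.update σ (j, x) (some a))).card else 0)
                ≤ (Consis σ).card := by
              by_cases hji : j = i
              · subst hji
                have heach : ∀ a : Fin N, (if j = j ∧ a = t then
                    N * (Consis (Function.update σ (j, x) (some a))).card else 0)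
                    = (if a = t then
                    N * (Consis (Function.update σ (j, x) (some a))).card else 0) := by
                  intro a
                  by_cases hat : a = t
                  · rw [if_pos ⟨rfl, hat⟩, if_pos hat]
                  · rw [if_neg (fun hc => hat hc.2), if_neg hat]
                rw [Finset.sum_congr rfl fun a _ => heach a, Finset.sum_ite_eq' univ t
                  (fun a => N * (Consis (Function.update σ (j, x) (some a))).card),
                  if_pos (mem_univ t), ← card_Consis_upd σ (j, x) hp t]
              · rw [Finset.sum_congr rfl (fun a _ => if_neg (fun hc => hji hc.1))]
                simp
            omega
        _ = ((1 + s) + 1) * (Consis σ).card := by ring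
/-- Count of `{c : q (c j)}`. -/
lemma card_coord_pred {ι β : Type*} [Fintype ι] [DecidableEq ι] [Fintype β] [DecidableEq β]
    (j : ι) (q : β → Prop) [DecidablePred q] :
    (univ.filter fun c : ι → β => q (c j)).card * Fintype.card β
      = Fintype.card (ι → β) * (univ.filter q).card := by
  rw [Finset.card_eq_sum_card_fiberwise (s := univ.filter fun c : ι → β => q (c j))
    (f := fun c => c j) (t := univ) (fun x _ => mem_univ _)]
  simp only [Finset.filter_filter]
  rw [Finset.sum_mul]
  have hterm : ∀ y : β, (univ.filter fun c : ι → β => q (c j) ∧ c j = y).card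
      * Fintype.card β = if q y then Fintype.card (ι → β) else 0 := by
    intro y
    by_cases hy : q y
    · rw [if_pos hy, ← card_coord_fiber j y]
      congr 1
      apply congrArg
      apply Finset.filter_congr
      intro c _
      constructor
      · rintro ⟨_, h2⟩; exact h2
      · intro h2; exact ⟨by rwa [h2], h2⟩
    · rw [if_neg hy]
      convert zero_mul (Fintype.card β)
      rw [Finset.card_eq_zero, Finset.filter_eq_empty_iff]
      rintro c _ ⟨h1, h2⟩
      rw [h2] at h1
      exact hy h1
  rw [Finset.sum_congr rfl fun y _ => hterm y, ← Finset.sum_filter, Finset.sum_const,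
    smul_eq_mul, mul_comm]

/-- Count of `{c : c j₁ ∈ s (c j₂)}`. -/
lemma card_coord_mem {ι β : Type*} [Fintype ι] [DecidableEq ι] [Fintype β] [DecidableEq β]
    (j₁ j₂ : ι) (hne : j₁ ≠ j₂) (s : β → Finset β) :
    (univ.filter fun c : ι → β => c j₁ ∈ s (c j₂)).card *
      (Fintype.card β * Fintype.card β)
      = Fintype.card (ι → β) * ∑ y : β, (s y).card := by
  rw [Finset.card_eq_sum_card_fiberwise (s := univ.filter fun c : ι → β => c j₁ ∈ s (c j₂))
    (f := fun c => (c j₁, c j₂)) (t := univ) (fun x _ => mem_univ _)]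
  simp only [Finset.filter_filter]
  rw [Finset.sum_mul]
  have hterm : ∀ p : β × β,
      (univ.filter fun c : ι → β => c j₁ ∈ s (c j₂) ∧ (c j₁, c j₂) = p).card *
        (Fintype.card β * Fintype.card β)
      = if p.1 ∈ s p.2 then Fintype.card (ι → β) else 0 := by
    rintro ⟨a, y⟩
    by_cases hy : a ∈ s y
    · rw [if_pos hy, ← card_coord_fiber2 j₁ j₂ hne a y]
      congr 1
      apply congrArg
      apply Finset.filter_congr
      intro c _
      simp only [Prod.mk.injEq]
      constructor
      · rintro ⟨_, h2⟩; exact h2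
      · rintro ⟨h1, h2⟩; exact ⟨by rw [h1, h2]; exact hy, h1, h2⟩
    · rw [if_neg hy]
      convert zero_mul (Fintype.card β * Fintype.card β)
      rw [Finset.card_eq_zero, Finset.filter_eq_empty_iff]
      rintro c _ ⟨h1, h2⟩
      rw [Prod.mk.injEq] at h2
      rw [h2.1, h2.2] at h1
      exact hy h1
  rw [Finset.sum_congr rfl fun p _ => hterm p, ← Finset.sum_filter, Finset.sum_const,
    smul_eq_mul, mul_comm]
  congr 1
  rw [card_filter_prod' (fun p : β × β => p.1 ∈ s p.2)]
  refine Finset.sum_congr rfl fun y _ => ?_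
  simp


lemma Consis_none : Consis (k := k) (N := N) (fun _ => none) = univ := by
  ext g; simp [Consis]

lemma core_top (i : Fin k) (t : Fin N) (B : KAlg k N) :
    N * (univ.filter fun g : Fin k → Fin N → Fin N => g i (B.run g) = t).card
      ≤ (B.numQueries + 1) * Fintype.card (Fin k → Fin N → Fin N) := by
  have := core i t B (fun _ => none) (by simp)
  rwa [Consis_none, Finset.card_univ] at this

lemma sum_length_filter_fst (L : List (Fin k × Fin N)) :
    ∑ i : Fin k, (L.filter fun q => q.1 = i).length = L.length := by
  induction L with
  | nil => simp
  | cons q L ih =>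
    have hstep : ∀ i : Fin k, ((q :: L).filter fun r => r.1 = i).length
        = (L.filter fun r => r.1 = i).length + (if q.1 = i then 1 else 0) := by
      intro i
      rw [List.filter_cons]
      by_cases h : q.1 = i
      · simp [h]
      · simp [h]
    rw [Finset.sum_congr rfl fun i _ => hstep i, Finset.sum_add_distrib, ih]
    simp

/-- The "dangerous" values at level `i`: inputs of level-`i` queries, and the
`i`-th point of the candidate chain. -/
def Sset (A : Fin N → KAlg k N) (i : Fin k) (g : Fin k → Fin N → Fin N) (y : Fin N) :
    Finset (Fin N) :=
  (((qList (A y) g).filter fun q => q.1 = i).map Prod.snd).toFinset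
    ∪ {pch g i.val ((A y).run g)}

lemma sum_card_Sset (A : Fin N → KAlg k N) (T : ℕ) (hT : ∀ y, (A y).numQueries ≤ T)
    (g : Fin k → Fin N → Fin N) (y : Fin N) :
    ∑ i : Fin k, (Sset A i g y).card ≤ T + k := by
  have h1 : ∀ i : Fin k, (Sset A i g y).card
      ≤ ((qList (A y) g).filter fun q => q.1 = i).length + 1 := by
    intro i
    refine le_trans (Finset.card_union_le _ _) ?_
    have := List.toFinset_card_le (((qList (A y) g).filter fun q => q.1 = i).map Prod.snd)
    rw [List.length_map] at this
    simpa using Nat.add_le_add_right this 1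
  calc ∑ i : Fin k, (Sset A i g y).card
      ≤ ∑ i : Fin k, (((qList (A y) g).filter fun q => q.1 = i).length + 1) :=
        Finset.sum_le_sum fun i _ => h1 i
    _ = (qList (A y) g).length + k := by
        rw [Finset.sum_add_distrib, sum_length_filter_fst]
        simp [Finset.card_univ]
    _ ≤ T + k := by
        have := le_trans (qList_length_le (A y) g) (hT y)
        omega

/-- The composite algorithm: run `A`, then evaluate the first `k-1` links of
the chain on the output. -/
def Bfull (A : Fin N → KAlg k N) (y : Fin N) : KAlg k N :=
  abind (A y) (fun z => algFold ((List.finRange k).take (k-1)) z)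

lemma numQueries_Bfull (A : Fin N → KAlg k N) (T : ℕ) (hT : ∀ y, (A y).numQueries ≤ T)
    (y : Fin N) : (Bfull A y).numQueries ≤ T + (k-1) := by
  refine le_trans (numQueries_abind_le (A y) _ (k-1) fun z => ?_) (by
    have := hT y; omega)
  refine le_trans (numQueries_algFold _ z) ?_
  simp [List.length_take]

lemma run_Bfull (A : Fin N → KAlg k N) (y : Fin N) (g : Fin k → Fin N → Fin N) :
    (Bfull A y).run g = pch g (k-1) ((A y).run g) := by
  rw [Bfull, run_abind, run_algFold, ← pch_eq_foldl g _ (k-1) (by omega)]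

/-- **Pointwise analysis**: a win means either some chain coordinate was "hit",
or the composite algorithm found a `g`-preimage of the fresh target. -/
lemma pointwise (hk : 0 < k) (A : Fin N → KAlg k N) (g : Fin k → Fin N → Fin N)
    (c : Fin (k+1) → Fin N)
    (hwin : chain (ovr g c) ((A (chain (ovr g c) (c 0))).run (ovr g c))
      = chain (ovr g c) (c 0)) :
    (∃ i : Fin k, c i.castSucc ∈ Sset A i g (c (Fin.last k))) ∨
      g ⟨k-1, Nat.sub_lt hk Nat.one_pos⟩ ((Bfull A (c (Fin.last k))).run g)
        = c (Fin.last k) := by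
  by_cases hbad : ∃ i : Fin k, c i.castSucc ∈ Sset A i g (c (Fin.last k))
  · exact Or.inl hbad
  right
  push_neg at hbad
  have hlast : chain (ovr g c) (c 0) = c (Fin.last k) := by
    rw [chain_eq_pch, pch_ovr g c k le_rfl]
    rfl
  rw [hlast] at hwin
  have hagree : ∀ p ∈ qList (A (c (Fin.last k))) g, ovr g c p.1 p.2 = g p.1 p.2 := by
    rintro ⟨i, x⟩ hp
    have hx : x ≠ c i.castSucc := by
      intro hx
      apply hbad i
      rw [Sset, Finset.mem_union]
      left
      rw [List.mem_toFinset, List.mem_map]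
      refine ⟨(i, x), ?_, by rw [hx]⟩
      rw [List.mem_filter]
      exact ⟨hp, by simp⟩
    show (if x = c i.castSucc then _ else g i x) = g i x
    exact if_neg hx
  have hz : (A (c (Fin.last k))).run (ovr g c) = (A (c (Fin.last k))).run g :=
    run_congr (A (c (Fin.last k))) g (ovr g c) hagree
  rw [hz] at hwin
  have hne : ∀ i : Fin k, pch g i.val ((A (c (Fin.last k))).run g) ≠ c i.castSucc := by
    intro i hieq
    apply hbad i
    rw [← hieq]
    exact Finset.mem_union_right _ (Finset.mem_singleton_self _)
  have hpch : ∀ j, j ≤ k →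
      pch (ovr g c) j ((A (c (Fin.last k))).run g)
        = pch g j ((A (c (Fin.last k))).run g) := by
    intro j
    induction j with
    | zero => intro _; rfl
    | succ j ih =>
      intro hj
      have hjk : j < k := hj
      rw [pch_succ _ j hjk, pch_succ _ j hjk, ih (le_of_lt hjk)]
      show (if pch g j _ = c (Fin.castSucc ⟨j, hjk⟩) then _ else _) = _
      rw [if_neg (hne ⟨j, hjk⟩)]
  have hfin : pch g k ((A (c (Fin.last k))).run g) = c (Fin.last k) := by
    rw [← hpch k le_rfl, ← chain_eq_pch]
    exact hwin
  rw [run_Bfull]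
  rw [pch_top hk g _] at hfin
  exact hfin

/-- **Reparametrization**: counting over `(g, chain-vector)` equals counting
over `(h, x₀)` up to the factor `#(Fin k → Fin N)`. -/
lemma reparam (P : (Fin k → Fin N → Fin N) × Fin N → Prop) [DecidablePred P] :
    (univ.filter fun q : (Fin k → Fin N → Fin N) × (Fin (k+1) → Fin N) =>
        P (ovr q.1 q.2, q.2 0)).card
      = Fintype.card (Fin k → Fin N) * (univ.filter P).card := by
  have h1 := card_filter_equiv (Ψ (k := k) (N := N))
    (fun r : ((Fin k → Fin N → Fin N) × Fin N) × (Fin k → Fin N) => P r.1)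
  have h2 := card_filter_prod'
    (fun r : ((Fin k → Fin N → Fin N) × Fin N) × (Fin k → Fin N) => P r.1)
  rw [h2] at h1
  rw [show (univ.filter fun q : (Fin k → Fin N → Fin N) × (Fin (k+1) → Fin N) =>
      P (ovr q.1 q.2, q.2 0)) = (univ.filter fun q => P ((Ψ q).1)) from rfl, h1]
  have heach : ∀ b : Fin k → Fin N,
      (univ.filter fun a : (Fin k → Fin N → Fin N) × Fin N => P (a, b).1) = univ.filter P :=
    fun b => rfl
  rw [Finset.sum_congr rfl fun b _ => congrArg Finset.card (heach b), Finset.sum_const,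
    Finset.card_univ, smul_eq_mul]

/-- Curried product-splitting (first coordinate). -/
lemma card_filter_prodc {α β : Type*} [Fintype α] [Fintype β] [DecidableEq α]
    (P : α → β → Prop) [∀ a, DecidablePred (P a)]
    [DecidablePred fun q : α × β => P q.1 q.2] :
    (univ.filter fun q : α × β => P q.1 q.2).card
      = ∑ a : α, (univ.filter fun b => P a b).card := by
  refine (card_filter_prod (fun q : α × β => P q.1 q.2)).trans
    (Finset.sum_congr rfl fun a _ => ?_)
  refine congrArg Finset.card ?_
  apply Finset.filter_congr
  intro b _
  exact Iff.rfl

/-- Curried product-splitting (second coordinate). -/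
lemma card_filter_prodc' {α β : Type*} [Fintype α] [Fintype β] [DecidableEq β]
    (P : α → β → Prop) [∀ b, DecidablePred (fun a => P a b)]
    [DecidablePred fun q : α × β => P q.1 q.2] :
    (univ.filter fun q : α × β => P q.1 q.2).card
      = ∑ b : β, (univ.filter fun a => P a b).card := by
  refine (card_filter_prod' (fun q : α × β => P q.1 q.2)).trans
    (Finset.sum_congr rfl fun b _ => ?_)
  refine congrArg Finset.card ?_
  apply Finset.filter_congr
  intro a _
  exact Iff.rfl

/-- Counting the "bad" event. -/
lemma card_BAD (hN : 0 < N) (A : Fin N → KAlg k N) (T : ℕ)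
    (hT : ∀ y, (A y).numQueries ≤ T) :
    (univ.filter fun q : (Fin k → Fin N → Fin N) × (Fin (k+1) → Fin N) =>
        ∃ i : Fin k, q.2 i.castSucc ∈ Sset A i q.1 (q.2 (Fin.last k))).card * N
      ≤ (T + k) * (Fintype.card (Fin k → Fin N → Fin N)
          * Fintype.card (Fin (k+1) → Fin N)) := by
  have hsub : (univ.filter fun q : (Fin k → Fin N → Fin N) × (Fin (k+1) → Fin N) =>
        ∃ i : Fin k, q.2 i.castSucc ∈ Sset A i q.1 (q.2 (Fin.last k)))
      ⊆ univ.biUnion (fun i : Fin k =>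
        univ.filter fun q : (Fin k → Fin N → Fin N) × (Fin (k+1) → Fin N) =>
          q.2 i.castSucc ∈ Sset A i q.1 (q.2 (Fin.last k))) := by
    intro q hq
    rw [mem_filter] at hq
    obtain ⟨-, i, hi⟩ := hq
    exact Finset.mem_biUnion.mpr ⟨i, mem_univ i, mem_filter.mpr ⟨mem_univ q, hi⟩⟩
  have h1 : (univ.filter fun q : (Fin k → Fin N → Fin N) × (Fin (k+1) → Fin N) =>
        ∃ i : Fin k, q.2 i.castSucc ∈ Sset A i q.1 (q.2 (Fin.last k))).card
      ≤ ∑ i : Fin k, (univ.filter fun q : (Fin k → Fin N → Fin N) × (Fin (k+1) → Fin N) =>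
          q.2 i.castSucc ∈ Sset A i q.1 (q.2 (Fin.last k))).card :=
    le_trans (Finset.card_le_card hsub) (Finset.card_biUnion_le)
  have h2 : ∀ i : Fin k,
      (univ.filter fun q : (Fin k → Fin N → Fin N) × (Fin (k+1) → Fin N) =>
          q.2 i.castSucc ∈ Sset A i q.1 (q.2 (Fin.last k))).card * (N * N)
      = Fintype.card (Fin (k+1) → Fin N)
          * ∑ g : Fin k → Fin N → Fin N, ∑ y : Fin N, (Sset A i g y).card := by
    intro i
    rw [card_filter_prodc
      (fun (g : Fin k → Fin N → Fin N) (c : Fin (k+1) → Fin N) =>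
        c i.castSucc ∈ Sset A i g (c (Fin.last k))), Finset.sum_mul]
    have heach : ∀ g : Fin k → Fin N → Fin N,
        (univ.filter fun c : Fin (k+1) → Fin N =>
          c i.castSucc ∈ Sset A i g (c (Fin.last k))).card * (N * N)
        = Fintype.card (Fin (k+1) → Fin N) * ∑ y : Fin N, (Sset A i g y).card := by
      intro g
      have := card_coord_mem (β := Fin N) i.castSucc (Fin.last k)
        (Fin.ne_of_lt (Fin.castSucc_lt_last i)) (fun y => Sset A i g y)
      rwa [Fintype.card_fin] at this
    rw [Finset.sum_congr rfl fun g _ => heach g, ← Finset.mul_sum]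
  have h3 : (∑ i : Fin k, (univ.filter
        fun q : (Fin k → Fin N → Fin N) × (Fin (k+1) → Fin N) =>
          q.2 i.castSucc ∈ Sset A i q.1 (q.2 (Fin.last k))).card) * (N * N)
      ≤ ((T + k) * (Fintype.card (Fin k → Fin N → Fin N)
          * Fintype.card (Fin (k+1) → Fin N))) * N := by
    rw [Finset.sum_mul, Finset.sum_congr rfl fun i _ => h2 i, ← Finset.mul_sum]
    rw [Finset.sum_comm (s := (univ : Finset (Fin k)))
      (t := (univ : Finset (Fin k → Fin N → Fin N)))
      (f := fun i g => ∑ y : Fin N, (Sset A i g y).card)]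
    have hin : ∀ g : Fin k → Fin N → Fin N,
        ∑ i : Fin k, ∑ y : Fin N, (Sset A i g y).card ≤ N * (T + k) := by
      intro g
      rw [Finset.sum_comm]
      calc ∑ y : Fin N, ∑ i : Fin k, (Sset A i g y).card
          ≤ ∑ _y : Fin N, (T + k) := Finset.sum_le_sum fun y _ => sum_card_Sset A T hT g y
        _ = N * (T + k) := by simp [Finset.sum_const, Finset.card_univ, mul_comm]
    calc Fintype.card (Fin (k+1) → Fin N)
          * ∑ g : Fin k → Fin N → Fin N, ∑ i : Fin k, ∑ y : Fin N, (Sset A i g y).card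
        ≤ Fintype.card (Fin (k+1) → Fin N)
          * ∑ _g : Fin k → Fin N → Fin N, N * (T + k) :=
          Nat.mul_le_mul_left _ (Finset.sum_le_sum fun g _ => hin g)
      _ = ((T + k) * (Fintype.card (Fin k → Fin N → Fin N)
          * Fintype.card (Fin (k+1) → Fin N))) * N := by
          rw [Finset.sum_const, Finset.card_univ, smul_eq_mul]; ring
  have h4 : ((univ.filter fun q : (Fin k → Fin N → Fin N) × (Fin (k+1) → Fin N) =>
        ∃ i : Fin k, q.2 i.castSucc ∈ Sset A i q.1 (q.2 (Fin.last k))).card * N) * N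
      ≤ (((T + k) * (Fintype.card (Fin k → Fin N → Fin N)
          * Fintype.card (Fin (k+1) → Fin N)))) * N := by
    calc ((univ.filter fun q : (Fin k → Fin N → Fin N) × (Fin (k+1) → Fin N) =>
          ∃ i : Fin k, q.2 i.castSucc ∈ Sset A i q.1 (q.2 (Fin.last k))).card * N) * N
        = (univ.filter fun q : (Fin k → Fin N → Fin N) × (Fin (k+1) → Fin N) =>
          ∃ i : Fin k, q.2 i.castSucc ∈ Sset A i q.1 (q.2 (Fin.last k))).card * (N * N) := by
          ring
      _ ≤ (∑ i : Fin k, (univ.filter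
            fun q : (Fin k → Fin N → Fin N) × (Fin (k+1) → Fin N) =>
            q.2 i.castSucc ∈ Sset A i q.1 (q.2 (Fin.last k))).card) * (N * N) :=
          Nat.mul_le_mul_right _ h1
      _ ≤ _ := h3
  exact Nat.le_of_mul_le_mul_right h4 hN

/-- Counting the "preimage of the fresh target" event. -/
lemma card_EK (hN : 0 < N) (hk : 0 < k) (A : Fin N → KAlg k N) (T : ℕ)
    (hT : ∀ y, (A y).numQueries ≤ T) :
    (univ.filter fun q : (Fin k → Fin N → Fin N) × (Fin (k+1) → Fin N) =>
        q.1 ⟨k-1, Nat.sub_lt hk Nat.one_pos⟩ ((Bfull A (q.2 (Fin.last k))).run q.1)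
          = q.2 (Fin.last k)).card * N
      ≤ (T + k) * (Fintype.card (Fin k → Fin N → Fin N)
          * Fintype.card (Fin (k+1) → Fin N)) := by
  have h1 : (univ.filter fun q : (Fin k → Fin N → Fin N) × (Fin (k+1) → Fin N) =>
        q.1 ⟨k-1, Nat.sub_lt hk Nat.one_pos⟩ ((Bfull A (q.2 (Fin.last k))).run q.1)
          = q.2 (Fin.last k)).card
      = ∑ g : Fin k → Fin N → Fin N, (univ.filter fun c : Fin (k+1) → Fin N =>
          g ⟨k-1, Nat.sub_lt hk Nat.one_pos⟩ ((Bfull A (c (Fin.last k))).run g)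
            = c (Fin.last k)).card :=
    card_filter_prodc (fun (g : Fin k → Fin N → Fin N) (c : Fin (k+1) → Fin N) =>
      g ⟨k-1, Nat.sub_lt hk Nat.one_pos⟩ ((Bfull A (c (Fin.last k))).run g) = c (Fin.last k))
  have h2 : ∀ g : Fin k → Fin N → Fin N,
      (univ.filter fun c : Fin (k+1) → Fin N =>
          g ⟨k-1, Nat.sub_lt hk Nat.one_pos⟩ ((Bfull A (c (Fin.last k))).run g)
            = c (Fin.last k)).card * N
      = Fintype.card (Fin (k+1) → Fin N) * (univ.filter fun y : Fin N =>
          g ⟨k-1, Nat.sub_lt hk Nat.one_pos⟩ ((Bfull A y).run g) = y).card := by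
    intro g
    have := card_coord_pred (β := Fin N) (Fin.last k)
      (fun y => g ⟨k-1, Nat.sub_lt hk Nat.one_pos⟩ ((Bfull A y).run g) = y)
    rwa [Fintype.card_fin] at this
  have h3 : ∀ y : Fin N,
      N * (univ.filter fun g : Fin k → Fin N → Fin N =>
          g ⟨k-1, Nat.sub_lt hk Nat.one_pos⟩ ((Bfull A y).run g) = y).card
      ≤ (T + k) * Fintype.card (Fin k → Fin N → Fin N) := by
    intro y
    refine le_trans (core_top ⟨k-1, Nat.sub_lt hk Nat.one_pos⟩ y (Bfull A y)) ?_
    refine Nat.mul_le_mul_right _ ?_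
    have hnb := numQueries_Bfull A T hT y
    calc (Bfull A y).numQueries + 1 ≤ (T + (k-1)) + 1 := Nat.add_le_add_right hnb 1
      _ = T + k := by rw [Nat.add_assoc, Nat.sub_add_cancel hk]
  have h4 : (univ.filter fun r : (Fin k → Fin N → Fin N) × Fin N =>
        r.1 ⟨k-1, Nat.sub_lt hk Nat.one_pos⟩ ((Bfull A r.2).run r.1) = r.2).card * N
      ≤ (T + k) * Fintype.card (Fin k → Fin N → Fin N) * N := by
    rw [card_filter_prodc' (fun (g : Fin k → Fin N → Fin N) (y : Fin N) =>
      g ⟨k-1, Nat.sub_lt hk Nat.one_pos⟩ ((Bfull A y).run g) = y), Finset.sum_mul]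
    calc ∑ y : Fin N, (univ.filter fun g : Fin k → Fin N → Fin N =>
          g ⟨k-1, Nat.sub_lt hk Nat.one_pos⟩ ((Bfull A y).run g) = y).card * N
        ≤ ∑ _y : Fin N, (T + k) * Fintype.card (Fin k → Fin N → Fin N) :=
          Finset.sum_le_sum fun y _ => by
            have := h3 y
            calc (univ.filter fun g : Fin k → Fin N → Fin N =>
                g ⟨k-1, Nat.sub_lt hk Nat.one_pos⟩ ((Bfull A y).run g) = y).card * N
                = N * (univ.filter fun g : Fin k → Fin N → Fin N =>
                  g ⟨k-1, Nat.sub_lt hk Nat.one_pos⟩ ((Bfull A y).run g) = y).card :=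
                  mul_comm _ _
              _ ≤ (T + k) * Fintype.card (Fin k → Fin N → Fin N) := this
      _ = (T + k) * Fintype.card (Fin k → Fin N → Fin N) * N := by
          rw [Finset.sum_const, Finset.card_univ, smul_eq_mul, Fintype.card_fin]; ring
  have h5 : ((univ.filter fun q : (Fin k → Fin N → Fin N) × (Fin (k+1) → Fin N) =>
        q.1 ⟨k-1, Nat.sub_lt hk Nat.one_pos⟩ ((Bfull A (q.2 (Fin.last k))).run q.1)
          = q.2 (Fin.last k)).card * N) * N
      ≤ ((T + k) * (Fintype.card (Fin k → Fin N → Fin N)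
          * Fintype.card (Fin (k+1) → Fin N))) * N := by
    calc ((univ.filter fun q : (Fin k → Fin N → Fin N) × (Fin (k+1) → Fin N) =>
          q.1 ⟨k-1, Nat.sub_lt hk Nat.one_pos⟩ ((Bfull A (q.2 (Fin.last k))).run q.1)
            = q.2 (Fin.last k)).card * N) * N
        = Fintype.card (Fin (k+1) → Fin N) * ((univ.filter
            fun r : (Fin k → Fin N → Fin N) × Fin N =>
            r.1 ⟨k-1, Nat.sub_lt hk Nat.one_pos⟩ ((Bfull A r.2).run r.1) = r.2).card * N) := by
          rw [h1, Finset.sum_mul, Finset.sum_congr rfl fun g _ => h2 g, ← Finset.mul_sum,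
            ← card_filter_prodc (fun (g : Fin k → Fin N → Fin N) (y : Fin N) =>
              g ⟨k-1, Nat.sub_lt hk Nat.one_pos⟩ ((Bfull A y).run g) = y)]
          ring
      _ ≤ Fintype.card (Fin (k+1) → Fin N)
            * ((T + k) * Fintype.card (Fin k → Fin N → Fin N) * N) :=
          Nat.mul_le_mul_left _ h4
      _ = ((T + k) * (Fintype.card (Fin k → Fin N → Fin N)
            * Fintype.card (Fin (k+1) → Fin N))) * N := by ring
  exact Nat.le_of_mul_le_mul_right h5 hN

end Stmt2Aux

open Finset Stmt2Aux in
/-- Let `h₁,...,h_k : [N] → [N]` be independent uniformly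
random functions. Any algorithm `A` with oracle access to the `h_i` making at
most `T` total oracle queries finds, given `y = h_{[1,k]}(x₀)` for uniform
`x₀`, a point `z` with `h_{[1,k]}(z) = y` with probability at most
`(2T+2k+1)/N`. -/
theorem stmt2 (N k T : ℕ) (hN : 0 < N) (hk : 0 < k)
    (A : Fin N → KAlg k N) (hT : ∀ y : Fin N, (A y).numQueries ≤ T) :
    ((Finset.univ.filter (fun p : (Fin k → Fin N → Fin N) × Fin N =>
        chain p.1 ((A (chain p.1 p.2)).run p.1) = chain p.1 p.2)).card : ℝ) /
      (Fintype.card ((Fin k → Fin N → Fin N) × Fin N)) ≤ (2 * T + 2 * k + 1) / N := by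
  have hGpos : 0 < Fintype.card (Fin k → Fin N → Fin N) :=
    Fintype.card_pos_iff.mpr ⟨fun _ _ => ⟨0, hN⟩⟩
  have hUpos : 0 < Fintype.card (Fin k → Fin N) :=
    Fintype.card_pos_iff.mpr ⟨fun _ => ⟨0, hN⟩⟩
  -- the main counting bound
  have key : (Finset.univ.filter (fun p : (Fin k → Fin N → Fin N) × Fin N =>
      chain p.1 ((A (chain p.1 p.2)).run p.1) = chain p.1 p.2)).card
      ≤ (2 * T + 2 * k) * Fintype.card (Fin k → Fin N → Fin N) := by
    have hrep := reparam (k := k) (N := N)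
      (fun p : (Fin k → Fin N → Fin N) × Fin N =>
        chain p.1 ((A (chain p.1 p.2)).run p.1) = chain p.1 p.2)
    have hsub : (univ.filter fun q : (Fin k → Fin N → Fin N) × (Fin (k+1) → Fin N) =>
          chain (ovr q.1 q.2) ((A (chain (ovr q.1 q.2) (q.2 0))).run (ovr q.1 q.2))
            = chain (ovr q.1 q.2) (q.2 0))
        ⊆ (univ.filter fun q : (Fin k → Fin N → Fin N) × (Fin (k+1) → Fin N) =>
            ∃ i : Fin k, q.2 i.castSucc ∈ Sset A i q.1 (q.2 (Fin.last k)))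
          ∪ (univ.filter fun q : (Fin k → Fin N → Fin N) × (Fin (k+1) → Fin N) =>
            q.1 ⟨k-1, Nat.sub_lt hk Nat.one_pos⟩ ((Bfull A (q.2 (Fin.last k))).run q.1)
              = q.2 (Fin.last k)) := by
      intro q hq
      rw [mem_filter] at hq
      rcases pointwise hk A q.1 q.2 hq.2 with h | h
      · exact Finset.mem_union_left _ (mem_filter.mpr ⟨mem_univ _, h⟩)
      · exact Finset.mem_union_right _ (mem_filter.mpr ⟨mem_univ _, h⟩)
    have h3 : Fintype.card (Fin k → Fin N)
        * (Finset.univ.filter (fun p : (Fin k → Fin N → Fin N) × Fin N =>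
            chain p.1 ((A (chain p.1 p.2)).run p.1) = chain p.1 p.2)).card
        ≤ (univ.filter fun q : (Fin k → Fin N → Fin N) × (Fin (k+1) → Fin N) =>
            ∃ i : Fin k, q.2 i.castSucc ∈ Sset A i q.1 (q.2 (Fin.last k))).card
          + (univ.filter fun q : (Fin k → Fin N → Fin N) × (Fin (k+1) → Fin N) =>
            q.1 ⟨k-1, Nat.sub_lt hk Nat.one_pos⟩ ((Bfull A (q.2 (Fin.last k))).run q.1)
              = q.2 (Fin.last k)).card := by
      rw [← hrep]
      exact le_trans (Finset.card_le_card hsub) (Finset.card_union_le _ _)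
    have h4 := card_BAD hN A T hT
    have h5 := card_EK hN hk A T hT
    have h6 : (Fintype.card (Fin k → Fin N)
        * (Finset.univ.filter (fun p : (Fin k → Fin N → Fin N) × Fin N =>
            chain p.1 ((A (chain p.1 p.2)).run p.1) = chain p.1 p.2)).card) * N
        ≤ (2 * T + 2 * k) * (Fintype.card (Fin k → Fin N → Fin N)
            * Fintype.card (Fin (k+1) → Fin N)) := by
      calc (Fintype.card (Fin k → Fin N)
          * (Finset.univ.filter (fun p : (Fin k → Fin N → Fin N) × Fin N =>
              chain p.1 ((A (chain p.1 p.2)).run p.1) = chain p.1 p.2)).card) * N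
          ≤ ((univ.filter fun q : (Fin k → Fin N → Fin N) × (Fin (k+1) → Fin N) =>
              ∃ i : Fin k, q.2 i.castSucc ∈ Sset A i q.1 (q.2 (Fin.last k))).card
            + (univ.filter fun q : (Fin k → Fin N → Fin N) × (Fin (k+1) → Fin N) =>
              q.1 ⟨k-1, Nat.sub_lt hk Nat.one_pos⟩ ((Bfull A (q.2 (Fin.last k))).run q.1)
                = q.2 (Fin.last k)).card) * N := Nat.mul_le_mul_right N h3
        _ = (univ.filter fun q : (Fin k → Fin N → Fin N) × (Fin (k+1) → Fin N) =>
              ∃ i : Fin k, q.2 i.castSucc ∈ Sset A i q.1 (q.2 (Fin.last k))).card * N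
            + (univ.filter fun q : (Fin k → Fin N → Fin N) × (Fin (k+1) → Fin N) =>
              q.1 ⟨k-1, Nat.sub_lt hk Nat.one_pos⟩ ((Bfull A (q.2 (Fin.last k))).run q.1)
                = q.2 (Fin.last k)).card * N := by ring
        _ ≤ (T + k) * (Fintype.card (Fin k → Fin N → Fin N)
              * Fintype.card (Fin (k+1) → Fin N))
            + (T + k) * (Fintype.card (Fin k → Fin N → Fin N)
              * Fintype.card (Fin (k+1) → Fin N)) := Nat.add_le_add h4 h5
        _ = (2 * T + 2 * k) * (Fintype.card (Fin k → Fin N → Fin N)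
              * Fintype.card (Fin (k+1) → Fin N)) := by ring
    have hCc : Fintype.card (Fin (k+1) → Fin N) = Fintype.card (Fin k → Fin N) * N := by
      rw [Fintype.card_fun, Fintype.card_fun, Fintype.card_fin, Fintype.card_fin,
        Fintype.card_fin, pow_succ]
    rw [hCc] at h6
    have h7 : (Finset.univ.filter (fun p : (Fin k → Fin N → Fin N) × Fin N =>
          chain p.1 ((A (chain p.1 p.2)).run p.1) = chain p.1 p.2)).card
          * (Fintype.card (Fin k → Fin N) * N)
        ≤ ((2 * T + 2 * k) * Fintype.card (Fin k → Fin N → Fin N))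
          * (Fintype.card (Fin k → Fin N) * N) := by
      calc (Finset.univ.filter (fun p : (Fin k → Fin N → Fin N) × Fin N =>
            chain p.1 ((A (chain p.1 p.2)).run p.1) = chain p.1 p.2)).card
            * (Fintype.card (Fin k → Fin N) * N)
          = (Fintype.card (Fin k → Fin N)
            * (Finset.univ.filter (fun p : (Fin k → Fin N → Fin N) × Fin N =>
                chain p.1 ((A (chain p.1 p.2)).run p.1) = chain p.1 p.2)).card) * N := by
            ring
        _ ≤ (2 * T + 2 * k) * (Fintype.card (Fin k → Fin N → Fin N)
            * (Fintype.card (Fin k → Fin N) * N)) := h6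
        _ = ((2 * T + 2 * k) * Fintype.card (Fin k → Fin N → Fin N))
            * (Fintype.card (Fin k → Fin N) * N) := by ring
    exact Nat.le_of_mul_le_mul_right h7 (Nat.mul_pos hUpos hN)
  -- pass to the reals
  rw [Fintype.card_prod, Fintype.card_fin]
  have hNR : (0:ℝ) < N := by exact_mod_cast hN
  have hGR : (0:ℝ) < (Fintype.card (Fin k → Fin N → Fin N) : ℝ) := by exact_mod_cast hGpos
  have keyR : ((Finset.univ.filter (fun p : (Fin k → Fin N → Fin N) × Fin N =>
      chain p.1 ((A (chain p.1 p.2)).run p.1) = chain p.1 p.2)).card : ℝ)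
      ≤ (2 * T + 2 * k) * (Fintype.card (Fin k → Fin N → Fin N) : ℝ) := by
    exact_mod_cast key
  rw [div_le_div_iff₀ (by positivity) hNR]
  push_cast
  nlinarith [keyR, hGR, hNR]
end

section
/- Let h₁,...,h_k : [N] → [N] be independent uniformly random functions and fix x ∈ [N]. Define L = |{x' ∈ [N] : h_{[1,k]}(x') = h_{[1,k]}(x)}|, the number of preimages of h_{[1,k]}(x). Then E[L] = 1 + (N−1)(1 − (1−1/N)^k); in particular, E[L] ≥ k + 1 − k²/N and E[L] ≤ k + 1. -/
/-- The number of preimages of `h_{[1,k]}(x)` under `h_{[1,k]}`. -/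
def numPreimages {k N : ℕ} (h : Fin k → Fin N → Fin N) (x : Fin N) : ℕ :=
  (Finset.univ.filter (fun x' : Fin N => chain h x' = chain h x)).card

lemma chain_zero {N : ℕ} (h : Fin 0 → Fin N → Fin N) (x : Fin N) : chain h x = x := by
  simp [chain]

lemma chain_succ {k N : ℕ} (h : Fin (k + 1) → Fin N → Fin N) (x : Fin N) :
    chain h x = chain (fun i => h i.succ) (h 0 x) := by
  simp [chain, List.finRange_succ, List.foldl_map]

/-- Splitting off the first hash function. -/
def splitEquiv (k N : ℕ) :
    (Fin (k + 1) → Fin N → Fin N) ≃ (Fin N → Fin N) × (Fin k → Fin N → Fin N) where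
  toFun h := (h 0, fun i => h i.succ)
  invFun p := Fin.cons p.1 p.2
  left_inv h := by
    ext i
    refine Fin.cases ?_ (fun j => ?_) i
    · simp
    · simp
  right_inv p := by
    ext i <;> simp

/-- Number of single functions separating two distinct points. -/
lemma sum_ne_single {N : ℕ} {y z : Fin N} (hyz : y ≠ z) :
    ∑ h : Fin N → Fin N, (if h y ≠ h z then 1 else 0 : ℕ) = (N - 1) * N ^ (N - 1) := by
  classical
  have hcard : Fintype.card { j : Fin N // j ≠ z } = N - 1 := by
    have : Fintype.card { j : Fin N // ¬ (j = z) } = N - 1 := by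
      rw [Fintype.card_subtype_compl, Fintype.card_subtype_eq, Fintype.card_fin]
    exact this
  rw [Fintype.sum_equiv (Equiv.funSplitAt z (Fin N))
      _ (fun p => if p.2 ⟨y, hyz⟩ ≠ p.1 then 1 else 0)
      (fun h => by simp)]
  rw [Fintype.sum_prod_type, Finset.sum_comm]
  have inner : ∀ g : { j : Fin N // j ≠ z } → Fin N,
      ∑ b : Fin N, (if g ⟨y, hyz⟩ ≠ b then 1 else 0 : ℕ) = N - 1 := by
    intro g
    rw [← Finset.card_filter, Finset.filter_ne, Finset.card_erase_of_mem (Finset.mem_univ _),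
      Finset.card_univ, Fintype.card_fin]
  calc ∑ g : { j : Fin N // j ≠ z } → Fin N, ∑ b : Fin N,
        (if g ⟨y, hyz⟩ ≠ b then 1 else 0 : ℕ)
      = ∑ _g : { j : Fin N // j ≠ z } → Fin N, (N - 1) := by
        exact Finset.sum_congr rfl fun g _ => inner g
    _ = (N - 1) * N ^ (N - 1) := by
        rw [Finset.sum_const, Finset.card_univ, Fintype.card_fun, Fintype.card_fin, hcard,
          smul_eq_mul, Nat.mul_comm]

/-- Number of hash chains separating two distinct points. -/
lemma sum_ne (N : ℕ) : ∀ (k : ℕ) (y z : Fin N), y ≠ z →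
    ∑ h : Fin k → Fin N → Fin N, (if chain h y ≠ chain h z then 1 else 0 : ℕ)
      = (N - 1) ^ k * N ^ (k * (N - 1)) := by
  intro k
  induction k with
  | zero =>
      intro y z hyz
      simp [chain_zero, hyz]
  | succ k ih =>
      intro y z hyz
      rw [Fintype.sum_equiv (splitEquiv k N) _
          (fun p => if chain p.2 (p.1 y) ≠ chain p.2 (p.1 z) then 1 else 0)
          (fun h => by simp [chain_succ, splitEquiv]; split_ifs <;> simp_all)]
      rw [Fintype.sum_prod_type]
      have inner : ∀ h0 : Fin N → Fin N,
          ∑ g : Fin k → Fin N → Fin N, (if chain g (h0 y) ≠ chain g (h0 z) then 1 else 0 : ℕ)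
            = if h0 y ≠ h0 z then (N - 1) ^ k * N ^ (k * (N - 1)) else 0 := by
        intro h0
        by_cases hsep : h0 y = h0 z
        · simp [hsep]
        · rw [if_pos hsep, ih (h0 y) (h0 z) hsep]
      calc ∑ h0 : Fin N → Fin N, ∑ g : Fin k → Fin N → Fin N,
            (if chain g (h0 y) ≠ chain g (h0 z) then 1 else 0 : ℕ)
          = ∑ h0 : Fin N → Fin N,
            (if h0 y ≠ h0 z then (N - 1) ^ k * N ^ (k * (N - 1)) else 0) := by
            exact Finset.sum_congr rfl fun h0 _ => inner h0
        _ = ∑ h0 : Fin N → Fin N,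
            ((if h0 y ≠ h0 z then 1 else 0) * ((N - 1) ^ k * N ^ (k * (N - 1)))) := by
            refine Finset.sum_congr rfl fun h0 _ => ?_
            by_cases hsep : h0 y ≠ h0 z <;> simp [hsep]
        _ = (N - 1) ^ (k + 1) * N ^ ((k + 1) * (N - 1)) := by
            rw [← Finset.sum_mul, sum_ne_single hyz, pow_succ, add_mul, pow_add, one_mul]
            ring

/-- Bernoulli-type lower bound, by induction. -/
lemma lower_aux (t : ℝ) (ht0 : 0 < t) (ht1 : t ≤ 1) (k : ℕ) :
    (k : ℝ) - (k : ℝ) ^ 2 * t ≤ (1 / t - 1) * (1 - (1 - t) ^ k) := by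
  induction k with
  | zero => simp
  | succ k ih =>
      have hstep : (1 / t - 1) * (1 - (1 - t) ^ (k + 1))
          = (1 / t - 1) * (1 - (1 - t) ^ k) + (1 - t) ^ (k + 1) := by
        field_simp
        ring
      have hbern : 1 - ((k : ℝ) + 1) * t ≤ (1 - t) ^ (k + 1) := by
        have h2 : (-2 : ℝ) ≤ -t := by linarith
        have := one_add_mul_le_pow h2 (k + 1)
        calc 1 - ((k : ℝ) + 1) * t = 1 + (↑(k + 1) : ℝ) * (-t) := by push_cast; ring
          _ ≤ (1 + -t) ^ (k + 1) := this
          _ = (1 - t) ^ (k + 1) := by ring_nf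
      have hk : (0 : ℝ) ≤ (k : ℝ) := Nat.cast_nonneg k
      rw [hstep]
      push_cast
      nlinarith [ih, hbern, mul_nonneg hk ht0.le]

lemma upper_aux (t : ℝ) (ht0 : 0 < t) (ht1 : t ≤ 1) (k : ℕ) :
    (1 / t - 1) * (1 - (1 - t) ^ k) ≤ (k : ℝ) := by
  induction k with
  | zero => simp
  | succ k ih =>
      have hstep : (1 / t - 1) * (1 - (1 - t) ^ (k + 1))
          = (1 / t - 1) * (1 - (1 - t) ^ k) + (1 - t) ^ (k + 1) := by
        field_simp
        ring
      have hpow : (1 - t) ^ (k + 1) ≤ 1 :=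
        pow_le_one₀ (by linarith) (by linarith)
      rw [hstep]
      push_cast
      linarith

/-- Let `h₁,...,h_k : [N] → [N]` be independent uniformly
random functions and fix `x ∈ [N]`.  Let `L` be the number of preimages of
`h_{[1,k]}(x)` under `h_{[1,k]}`.  Then
`E[L] = 1 + (N−1)(1 − (1−1/N)^k)`; in particular `E[L] ≥ k + 1 − k²/N` and
`E[L] ≤ k + 1`. -/
theorem stmt8 (N k : ℕ) (hN : 0 < N) (x : Fin N) :
    ((∑ h : Fin k → Fin N → Fin N, (numPreimages h x : ℝ)) /
        (Fintype.card (Fin k → Fin N → Fin N))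
      = 1 + ((N : ℝ) - 1) * (1 - (1 - 1 / (N : ℝ)) ^ k)) ∧
    (k : ℝ) + 1 - (k : ℝ) ^ 2 / N ≤
      (∑ h : Fin k → Fin N → Fin N, (numPreimages h x : ℝ)) /
        (Fintype.card (Fin k → Fin N → Fin N)) ∧
    (∑ h : Fin k → Fin N → Fin N, (numPreimages h x : ℝ)) /
        (Fintype.card (Fin k → Fin N → Fin N)) ≤ (k : ℝ) + 1 := by
  classical
  have hNR : (0 : ℝ) < (N : ℝ) := by exact_mod_cast hN
  have hN1 : (1 : ℝ) ≤ (N : ℝ) := by exact_mod_cast hN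
  -- the cardinality of the sample space
  have hcard : (Fintype.card (Fin k → Fin N → Fin N) : ℝ) = ((N : ℝ) ^ N) ^ k := by
    rw [Fintype.card_fun, Fintype.card_fun, Fintype.card_fin, Fintype.card_fin]
    push_cast
    ring
  set M : ℝ := ((N : ℝ) ^ N) ^ k with hM
  have hMpos : (0 : ℝ) < M := pow_pos (pow_pos hNR N) k
  -- the count of separating chains, as a real number
  have hsep : ∀ y z : Fin N, y ≠ z →
      ∑ h : Fin k → Fin N → Fin N, (if chain h y ≠ chain h z then (1 : ℝ) else 0)
        = ((N : ℝ) - 1) ^ k * (N : ℝ) ^ (k * (N - 1)) := by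
    intro y z hyz
    have := congrArg (fun n : ℕ => (n : ℝ)) (sum_ne N k y z hyz)
    simp only [Nat.cast_sum, Nat.cast_mul, Nat.cast_pow, Nat.cast_ite, Nat.cast_one,
      Nat.cast_zero] at this
    rw [this, Nat.cast_sub hN]
    norm_num
  -- key exponent identity
  have hexp : ((N : ℝ) ^ N) ^ k = (N : ℝ) ^ k * (N : ℝ) ^ (k * (N - 1)) := by
    rw [← pow_mul, ← pow_add]
    congr 1
    obtain ⟨n, rfl⟩ := Nat.exists_eq_succ_of_ne_zero hN.ne'
    simp [Nat.succ_sub_one]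
    ring
  -- count of non-separating chains
  have heq : ∀ y z : Fin N,
      ∑ h : Fin k → Fin N → Fin N, (if chain h y = chain h z then (1 : ℝ) else 0)
        = M - ∑ h : Fin k → Fin N → Fin N, (if chain h y ≠ chain h z then (1 : ℝ) else 0) := by
    intro y z
    have : ∀ h : Fin k → Fin N → Fin N,
        (if chain h y = chain h z then (1 : ℝ) else 0)
          = 1 - (if chain h y ≠ chain h z then (1 : ℝ) else 0) := by
      intro h
      by_cases hc : chain h y = chain h z <;> simp [hc]
    rw [Finset.sum_congr rfl fun h _ => this h, Finset.sum_sub_distrib, Finset.sum_const,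
      Finset.card_univ]
    congr 1
    rw [nsmul_eq_mul, mul_one]
    exact hcard
  -- split the total sum over preimage candidates
  have hswap : ∑ h : Fin k → Fin N → Fin N, (numPreimages h x : ℝ)
      = ∑ x' : Fin N, ∑ h : Fin k → Fin N → Fin N,
          (if chain h x' = chain h x then (1 : ℝ) else 0) := by
    rw [Finset.sum_comm]
    refine Finset.sum_congr rfl fun h _ => ?_
    rw [numPreimages, Finset.card_filter]
    push_cast
    rfl
  set S : ℝ := ((N : ℝ) - 1) ^ k * (N : ℝ) ^ (k * (N - 1)) with hS
  have hinner : ∀ x' : Fin N,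
      ∑ h : Fin k → Fin N → Fin N, (if chain h x' = chain h x then (1 : ℝ) else 0)
        = if x' = x then M else M - S := by
    intro x'
    by_cases hx' : x' = x
    · subst hx'
      rw [if_pos rfl]
      simp only [eq_self_iff_true, if_true, Finset.sum_const, Finset.card_univ,
        nsmul_eq_mul, mul_one]
      exact hcard
    · rw [if_neg hx', heq x' x, hsep x' x hx']
  have htotal : ∑ h : Fin k → Fin N → Fin N, (numPreimages h x : ℝ)
      = M + ((N : ℝ) - 1) * (M - S) := by
    rw [hswap, Finset.sum_congr rfl fun x' _ => hinner x']
    have hsplit : ∀ x' : Fin N,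
        (if x' = x then M else M - S) = (M - S) + (if x' = x then S else 0) := by
      intro x'
      by_cases hx' : x' = x <;> simp [hx']
    rw [Finset.sum_congr rfl fun x' _ => hsplit x', Finset.sum_add_distrib,
      Finset.sum_const, Finset.sum_ite_eq' Finset.univ x (fun _ => S), if_pos (Finset.mem_univ x),
      Finset.card_univ, Fintype.card_fin]
    have : (N : ℝ) • (M - S) = (N : ℝ) * (M - S) := by simp
    rw [nsmul_eq_mul]
    ring
  -- the ratio `S / M`
  have hratio : S / M = (1 - 1 / (N : ℝ)) ^ k := by
    have hq : 1 - 1 / (N : ℝ) = ((N : ℝ) - 1) / (N : ℝ) := by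
      field_simp
    rw [hS, hM, hexp, hq, div_pow]
    have hNk : (0 : ℝ) < (N : ℝ) ^ (k * (N - 1)) := pow_pos hNR _
    field_simp
  -- the exact expectation
  have hmain : (∑ h : Fin k → Fin N → Fin N, (numPreimages h x : ℝ)) /
      (Fintype.card (Fin k → Fin N → Fin N))
        = 1 + ((N : ℝ) - 1) * (1 - (1 - 1 / (N : ℝ)) ^ k) := by
    rw [htotal, hcard, ← hratio]
    field_simp
  refine ⟨hmain, ?_, ?_⟩
  · -- lower bound
    rw [hmain]
    have ht0 : (0 : ℝ) < 1 / (N : ℝ) := by positivity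
    have ht1 : 1 / (N : ℝ) ≤ 1 := by
      rw [div_le_one hNR]; exact hN1
    have := lower_aux (1 / (N : ℝ)) ht0 ht1 k
    have hside : 1 / (1 / (N : ℝ)) - 1 = (N : ℝ) - 1 := by
      rw [one_div_one_div]
    rw [hside] at this
    have hk2 : (k : ℝ) ^ 2 * (1 / (N : ℝ)) = (k : ℝ) ^ 2 / (N : ℝ) := by ring
    rw [hk2] at this
    linarith
  · -- upper bound
    rw [hmain]
    have ht0 : (0 : ℝ) < 1 / (N : ℝ) := by positivity
    have ht1 : 1 / (N : ℝ) ≤ 1 := by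
      rw [div_le_one hNR]; exact hN1
    have := upper_aux (1 / (N : ℝ)) ht0 ht1 k
    have hside : 1 / (1 / (N : ℝ)) - 1 = (N : ℝ) - 1 := by
      rw [one_div_one_div]
    rw [hside] at this
    linarith
end

section
/- Let α_k ∈ (0,1] be defined by α₁ = 1 and α_{k+1} = 1 − e^{−α_k}. Then for all k ≥ 1, α_k ≤ 2/k, and moreover k·α_k → 2 as k → ∞. -/
open Real Filter Finset

theorem expU (x : ℝ) (h0 : 0 ≤ x) (h1 : x ≤ 1) :
    (1 - Real.exp (-x)) * (2 + x) ≤ 2 * x := by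
  have hub : Real.exp x ≤ 1 + x + x^2/2 + x^3/4 := by
    have h := Real.exp_bound' h0 h1 (n := 3) (by norm_num)
    simp [Finset.sum_range_succ, Nat.factorial] at h
    nlinarith [pow_nonneg h0 3]
  have hinv : Real.exp (-x) * Real.exp x = 1 := by rw [← Real.exp_add]; simp
  have hprod : Real.exp x * (2 - x) ≤ 2 + x := by nlinarith [pow_nonneg h0 4]
  nlinarith [Real.exp_pos (-x), mul_le_mul_of_nonneg_left hprod (Real.exp_pos (-x)).le]

theorem expL (x : ℝ) (h0 : 0 ≤ x) :
    x * (2 - x) ≤ 2 * (1 - Real.exp (-x)) := by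
  have hlb : 1 + x + x^2/2 ≤ Real.exp x := by
    have h := Real.sum_le_exp_of_nonneg h0 3
    simp [Finset.sum_range_succ, Nat.factorial] at h
    linarith
  have hinv : Real.exp (-x) * Real.exp x = 1 := by rw [← Real.exp_add]; simp
  have key : Real.exp (-x) ≤ 1 - x + x^2/2 := by
    nlinarith [Real.exp_pos (-x), mul_le_mul_of_nonneg_left hlb (Real.exp_pos (-x)).le,
      sq_nonneg (x^2), sq_nonneg x]
  nlinarith

/-- Let `α_k ∈ (0,1]` be defined by `α₁ = 1` and
`α_{k+1} = 1 − e^{−α_k}`.  Then for all `k ≥ 1`, `α_k ≤ 2/k`, and moreover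
`k·α_k → 2` as `k → ∞`. -/
theorem stmt10 (α : ℕ → ℝ) (h1 : α 1 = 1)
    (hrec : ∀ k, 1 ≤ k → α (k + 1) = 1 - Real.exp (-α k)) :
    (∀ k, 1 ≤ k → α k ≤ 2 / k) ∧
      Filter.Tendsto (fun k : ℕ => (k : ℝ) * α k) Filter.atTop (nhds 2) := by
  -- positivity and ≤ 1
  have hpos : ∀ k, 1 ≤ k → 0 < α k ∧ α k ≤ 1 := by
    intro k hk
    induction k, hk using Nat.le_induction with
    | base => rw [h1]; norm_num
    | succ k hk ih =>
      rw [hrec k hk]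
      have h2 : Real.exp (-α k) < 1 := by
        rw [Real.exp_lt_one_iff]; linarith [ih.1]
      have h3 : 0 < Real.exp (-α k) := Real.exp_pos _
      constructor <;> linarith
  -- key bound α k ≤ 2/(k+1)
  have hbound : ∀ k, 1 ≤ k → α k ≤ 2 / ((k : ℝ) + 1) := by
    intro k hk
    induction k, hk using Nat.le_induction with
    | base => rw [h1]; norm_num
    | succ k hk ih =>
      obtain ⟨ha0, ha1⟩ := hpos k hk
      have hU := expU (α k) ha0.le ha1
      have hkR : (1 : ℝ) ≤ (k : ℝ) := by exact_mod_cast hk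
      have hak : α k * ((k : ℝ) + 1) ≤ 2 := by
        rw [le_div_iff₀ (by linarith : (0:ℝ) < (k:ℝ)+1)] at ih
        linarith
      have hd0 : 0 ≤ 1 - Real.exp (-α k) := by
        have := Real.exp_le_one_iff.2 (by linarith : -α k ≤ 0)
        linarith
      rw [hrec k hk]
      push_cast
      rw [le_div_iff₀ (by linarith : (0:ℝ) < (k:ℝ) + 1 + 1)]
      nlinarith [mul_le_mul_of_nonneg_right hU (by linarith : (0:ℝ) ≤ (k:ℝ) + 3)]
  -- α → 0
  have hα0 : Tendsto α atTop (nhds 0) := by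
    have hup : Tendsto (fun k : ℕ => 2 / ((k : ℝ) + 1)) atTop (nhds 0) := by
      have := tendsto_one_div_add_atTop_nhds_zero_nat (𝕜 := ℝ)
      have h2 := this.const_mul (2:ℝ)
      simpa [mul_one_div, div_eq_mul_inv] using h2
    apply tendsto_of_tendsto_of_tendsto_of_le_of_le' tendsto_const_nhds hup
    · filter_upwards [eventually_ge_atTop 1] with k hk using (hpos k hk).1.le
    · filter_upwards [eventually_ge_atTop 1] with k hk using hbound k hk
  -- the increment sequence
  set f : ℕ → ℝ := fun i => (1 - Real.exp (-α (i+1)))⁻¹ - (α (i+1))⁻¹ with hf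
  have hfb : ∀ i : ℕ, 1/2 ≤ f i ∧ f i ≤ 1/2 + α (i+1) := by
    intro i
    obtain ⟨hx0, hx1⟩ := hpos (i+1) (Nat.le_add_left 1 i)
    set x := α (i+1)
    have hU := expU x hx0.le hx1
    have hL := expL x hx0.le
    have hd0 : 0 < 1 - Real.exp (-x) := by nlinarith
    set d := 1 - Real.exp (-x)
    have hdinv : d * d⁻¹ = 1 := mul_inv_cancel₀ hd0.ne'
    have hxinv : x * x⁻¹ = 1 := mul_inv_cancel₀ hx0.ne'
    have hu : 0 < d⁻¹ := inv_pos.2 hd0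
    have hv : 0 < x⁻¹ := inv_pos.2 hx0
    constructor
    · -- from d(2+x) ≤ 2x : multiply by u*v
      nlinarith [mul_le_mul_of_nonneg_left hU (mul_pos hu hv).le]
    · -- from x(2-x) ≤ 2d
      have key : x * (2 - x) * d⁻¹ ≤ 2 := by
        nlinarith [mul_le_mul_of_nonneg_right hL hu.le]
      have h1 : (2 - x) * d⁻¹ ≤ 2 * x⁻¹ := by
        nlinarith [mul_le_mul_of_nonneg_left hL (mul_pos hu hv).le]
      have key2 : x * d⁻¹ ≤ 1 + 2 * x := by nlinarith [key]
      nlinarith [h1, key2]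
  have hftend : Tendsto f atTop (nhds (1/2)) := by
    have hshift : Tendsto (fun i : ℕ => α (i+1)) atTop (nhds 0) :=
      hα0.comp (tendsto_add_atTop_nat 1)
    have hup : Tendsto (fun i : ℕ => 1/2 + α (i+1)) atTop (nhds (1/2)) := by
      simpa using tendsto_const_nhds.add hshift
    exact tendsto_of_tendsto_of_tendsto_of_le_of_le tendsto_const_nhds hup
      (fun i => (hfb i).1) (fun i => (hfb i).2)
  have hsum : ∀ n : ℕ, ∑ i ∈ Finset.range n, f i = (α (n+1))⁻¹ - 1 := by
    intro n
    induction n with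
    | zero => simp [h1]
    | succ n ih =>
      rw [Finset.sum_range_succ, ih]
      have h := hrec (n+1) (Nat.le_add_left 1 n)
      show (α (n+1))⁻¹ - 1 + ((1 - Real.exp (-α (n+1)))⁻¹ - (α (n+1))⁻¹) = (α (n+1+1))⁻¹ - 1
      rw [h]
      ring
  have hces : Tendsto (fun n : ℕ => (n : ℝ)⁻¹ * ((α (n+1))⁻¹ - 1)) atTop (nhds (1/2)) := by
    have := hftend.cesaro
    simpa only [hsum] using this
  -- F n := n⁻¹ * (α n)⁻¹ → 1/2
  have hratio : Tendsto (fun n : ℕ => (n : ℝ) / ((n:ℝ)+1)) atTop (nhds 1) := by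
    have h := tendsto_one_div_add_atTop_nhds_zero_nat (𝕜 := ℝ)
    have h2 : Tendsto (fun n : ℕ => 1 - 1/((n:ℝ)+1)) atTop (nhds (1 - 0)) :=
      tendsto_const_nhds.sub h
    rw [sub_zero] at h2
    apply h2.congr
    intro n
    have : ((n:ℝ)+1) ≠ 0 := by positivity
    field_simp
    ring
  have hFshift : Tendsto (fun n : ℕ => ((n:ℝ)+1)⁻¹ * (α (n+1))⁻¹) atTop (nhds (1/2)) := by
    have hcomb : Tendsto (fun n : ℕ => ((n:ℝ)/((n:ℝ)+1)) * ((n : ℝ)⁻¹ * ((α (n+1))⁻¹ - 1))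
        + 1/((n:ℝ)+1)) atTop (nhds (1 * (1/2) + 0)) :=
      (hratio.mul hces).add tendsto_one_div_add_atTop_nhds_zero_nat
    rw [one_mul, add_zero] at hcomb
    apply hcomb.congr'
    filter_upwards [eventually_ge_atTop 1] with n hn
    have hn0 : (n:ℝ) ≠ 0 := by positivity
    have hn1 : ((n:ℝ)+1) ≠ 0 := by positivity
    have ha : α (n+1) ≠ 0 := (hpos (n+1) (Nat.le_add_left 1 n)).1.ne'
    field_simp
    ring
  have hF : Tendsto (fun n : ℕ => ((n:ℝ))⁻¹ * (α n)⁻¹) atTop (nhds (1/2)) := by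
    rw [← tendsto_add_atTop_iff_nat 1]
    apply hFshift.congr
    intro n; push_cast; ring
  have hFinv := hF.inv₀ (by norm_num : (1/2 : ℝ) ≠ 0)
  rw [(by norm_num : ((1:ℝ)/2)⁻¹ = 2)] at hFinv
  refine ⟨fun k hk => ?_, ?_⟩
  · have := hbound k hk
    have hkR : (1:ℝ) ≤ (k:ℝ) := by exact_mod_cast hk
    have : 2 / ((k:ℝ)+1) ≤ 2 / (k:ℝ) := by
      apply div_le_div_of_nonneg_left (by norm_num) (by linarith) (by linarith)
    linarith [hbound k hk]
  · apply hFinv.congr'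
    filter_upwards [eventually_ge_atTop 1] with n hn
    have hn0 : (n:ℝ) ≠ 0 := by positivity
    have ha : α n ≠ 0 := (hpos n hn).1.ne'
    rw [mul_inv, inv_inv, inv_inv]
end
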